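/- arXiv:1706.02074 — 10 statements merged into one kernel-verified Lean document; each statement's English description precedes it below -/
import Mathlib

section
/- Let κ_s(x) := det(γ̂'(x), γ̂''(x), ν(x)) / ‖γ̂'(x)‖³ (the singular curvature of the folded cuspidal edge φ along its singular curve y = 0). Then κ_s(0) = a''(0) and κ_s'(0) = 8·b₁(0)·b₀'(0)³ + a'''(0). -/
open Real Set

/-- Cross product of two vectors in ℝ³. -/
noncomputable def cross3 (a b : Fin 3 → ℝ) : Fin 3 → ℝ :=
  ![a 1 * b 2 - a 2 * b 1, a 2 * b 0 - a 0 * b 2, a 0 * b 1 - a 1 * b 0]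

/-- Determinant of three vectors in ℝ³. -/
noncomputable def det3 (a b c : Fin 3 → ℝ) : ℝ :=
  Matrix.det (Matrix.of ![a, b, c])

/-- Euclidean norm on ℝ³. -/
noncomputable def norm3 (a : Fin 3 → ℝ) : ℝ :=
  Real.sqrt (a 0 ^ 2 + a 1 ^ 2 + a 2 ^ 2)

/-- Euclidean inner product on ℝ³. -/
noncomputable def dot3 (a b : Fin 3 → ℝ) : ℝ :=
  a 0 * b 0 + a 1 * b 1 + a 2 * b 2

lemma hasDerivAt_vec3 {f0 f1 f2 : ℝ → ℝ} {d0 d1 d2 x : ℝ}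
    (h0 : HasDerivAt f0 d0 x) (h1 : HasDerivAt f1 d1 x) (h2 : HasDerivAt f2 d2 x) :
    HasDerivAt (fun t => (![f0 t, f1 t, f2 t] : Fin 3 → ℝ)) ![d0, d1, d2] x := by
  rw [hasDerivAt_pi]
  intro i
  fin_cases i <;> simpa

lemma det3_expand (p q r s t u v m n : ℝ) :
    det3 ![p, q, r] ![s, t, u] ![v, m, n] =
      p * t * n - p * u * m - q * s * n + q * u * v + r * s * m - r * t * v := by
  simp [det3, Matrix.det_fin_three]

lemma norm3_expand (p q r : ℝ) : norm3 ![p, q, r] = Real.sqrt (p ^ 2 + q ^ 2 + r ^ 2) := by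
  simp [norm3]

lemma cross3_expand (p q r s t u : ℝ) :
    cross3 ![p, q, r] ![s, t, u] = ![q * u - r * t, r * s - p * u, p * t - q * s] := by
  simp [cross3]

lemma smul_vec3 (c p q r : ℝ) : c • (![p, q, r] : Fin 3 → ℝ) = ![c * p, c * q, c * r] := by
  funext i; fin_cases i <;> simp
/-- For the folded cuspidal edge
`φ(x,y) = (x, a(x) + y²/2, (b₀(x) + b₁(x)y² + b₂(x)y³ + b₃(x,y)y⁴)²)`, the singular
curvature `κ_s(x) = det(γ̂'(x), γ̂''(x), ν(x)) / ‖γ̂'(x)‖³` along the singular curve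
`y = 0` satisfies `κ_s(0) = a''(0)` and `κ_s'(0) = 8 b₁(0) b₀'(0)³ + a'''(0)`. -/
theorem stmt0 (a b₀ b₁ b₂ : ℝ → ℝ) (b₃ : ℝ → ℝ → ℝ)
    (ha : ContDiff ℝ (⊤ : ℕ∞) a) (hb₀ : ContDiff ℝ (⊤ : ℕ∞) b₀)
    (hb₁ : ContDiff ℝ (⊤ : ℕ∞) b₁) (hb₂ : ContDiff ℝ (⊤ : ℕ∞) b₂)
    (hb₃ : ContDiff ℝ (⊤ : ℕ∞) (Function.uncurry b₃))
    (ha0 : a 0 = 0) (ha0' : deriv a 0 = 0) (hb₀0 : b₀ 0 = 0)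
    (φ : ℝ → ℝ → Fin 3 → ℝ)
    (hφ : ∀ x y, φ x y =
      ![x, a x + y ^ 2 / 2,
        (b₀ x + b₁ x * y ^ 2 + b₂ x * y ^ 3 + b₃ x y * y ^ 4) ^ 2])
    (γ : ℝ → Fin 3 → ℝ) (hγ : ∀ x, γ x = φ x 0)
    (w : ℝ → Fin 3 → ℝ)
    (hw : ∀ x, w x = cross3 (deriv (fun t => φ t 0) x) (iteratedDeriv 2 (φ x) 0))
    (ν : ℝ → Fin 3 → ℝ) (hν : ∀ x, ν x = (norm3 (w x))⁻¹ • w x)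
    (κs : ℝ → ℝ)
    (hκs : ∀ x, κs x =
      det3 (deriv γ x) (iteratedDeriv 2 γ x) (ν x) / norm3 (deriv γ x) ^ 3) :
    κs 0 = iteratedDeriv 2 a 0 ∧
      deriv κs 0 = 8 * b₁ 0 * deriv b₀ 0 ^ 3 + iteratedDeriv 3 a 0 := by
  -- differentiability facts
  have da : Differentiable ℝ a := ha.differentiable (by simp)
  have ha1 : ContDiff ℝ (⊤ : ℕ∞) (deriv a) := (contDiff_infty_iff_deriv.mp ha).2
  have da1 : Differentiable ℝ (deriv a) := ha1.differentiable (by simp)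
  have ha2 : ContDiff ℝ (⊤ : ℕ∞) (deriv (deriv a)) := (contDiff_infty_iff_deriv.mp ha1).2
  have da2 : Differentiable ℝ (deriv (deriv a)) := ha2.differentiable (by simp)
  have db₀ : Differentiable ℝ b₀ := hb₀.differentiable (by simp)
  have hc1 : ContDiff ℝ (⊤ : ℕ∞) (deriv b₀) := (contDiff_infty_iff_deriv.mp hb₀).2
  have db₀1 : Differentiable ℝ (deriv b₀) := hc1.differentiable (by simp)
  have hc2 : ContDiff ℝ (⊤ : ℕ∞) (deriv (deriv b₀)) := (contDiff_infty_iff_deriv.mp hc1).2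
  have db₀2 : Differentiable ℝ (deriv (deriv b₀)) := hc2.differentiable (by simp)
  have db₁ : Differentiable ℝ b₁ := hb₁.differentiable (by simp)
  have hb₃x : ∀ x, ContDiff ℝ (⊤ : ℕ∞) (b₃ x) := fun x =>
    hb₃.comp (contDiff_const.prodMk contDiff_id)
  have db₃ : ∀ x, Differentiable ℝ (b₃ x) := fun x => (hb₃x x).differentiable (by simp)
  have db₃' : ∀ x, Differentiable ℝ (deriv (b₃ x)) := fun x =>
    ((contDiff_infty_iff_deriv.mp (hb₃x x)).2).differentiable (by simp)
  -- γ explicitly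
  have hγfun : γ = fun x => ![x, a x, b₀ x ^ 2] := by
    funext x; rw [hγ, hφ]; norm_num
  -- first derivative of γ
  have hdγ : ∀ x, HasDerivAt γ ![1, deriv a x, 2 * b₀ x * deriv b₀ x] x := by
    intro x
    rw [hγfun]
    refine hasDerivAt_vec3 (hasDerivAt_id x) (da x).hasDerivAt ?_
    have h := ((db₀ x).hasDerivAt.fun_pow 2)
    simpa [mul_comm, mul_assoc, mul_left_comm] using h
  have hdγ' : deriv γ = fun x => ![1, deriv a x, 2 * b₀ x * deriv b₀ x] :=
    funext fun x => (hdγ x).deriv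
  -- second derivative of γ
  have hd2γ : ∀ x, iteratedDeriv 2 γ x
      = ![0, deriv (deriv a) x, 2 * deriv b₀ x ^ 2 + 2 * b₀ x * deriv (deriv b₀) x] := by
    intro x
    rw [show iteratedDeriv 2 γ = deriv (deriv γ) by
      rw [iteratedDeriv_succ, iteratedDeriv_one], hdγ']
    refine HasDerivAt.deriv ?_
    refine hasDerivAt_vec3 (hasDerivAt_const x 1) (da1 x).hasDerivAt ?_
    have h := ((db₀ x).hasDerivAt.const_mul 2).fun_mul (db₀1 x).hasDerivAt
    convert! h using 1
    ring
  -- second y-derivative of φ x at 0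
  have hφ2 : ∀ x, iteratedDeriv 2 (φ x) 0 = ![0, 1, 4 * b₀ x * b₁ x] := by
    intro x
    set B : ℝ → ℝ := fun y => b₀ x + b₁ x * y ^ 2 + b₂ x * y ^ 3 + b₃ x y * y ^ 4 with hBdef
    set B' : ℝ → ℝ := fun y =>
      0 + b₁ x * (2 * y) + b₂ x * (3 * y ^ 2)
        + (deriv (b₃ x) y * y ^ 4 + b₃ x y * (4 * y ^ 3)) with hB'def
    have hB : ∀ y, HasDerivAt B (B' y) y := by
      intro y
      have h1 : HasDerivAt (fun _ : ℝ => b₀ x) 0 y := hasDerivAt_const _ _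
      have h2 : HasDerivAt (fun y : ℝ => b₁ x * y ^ 2) (b₁ x * (2 * y)) y := by
        simpa using (hasDerivAt_pow 2 y).const_mul (b₁ x)
      have h3 : HasDerivAt (fun y : ℝ => b₂ x * y ^ 3) (b₂ x * (3 * y ^ 2)) y := by
        simpa using (hasDerivAt_pow 3 y).const_mul (b₂ x)
      have h4 : HasDerivAt (fun y : ℝ => b₃ x y * y ^ 4)
          (deriv (b₃ x) y * y ^ 4 + b₃ x y * (4 * y ^ 3)) y := by
        simpa using (db₃ x y).hasDerivAt.fun_mul (hasDerivAt_pow 4 y)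
      exact ((h1.add h2).add h3).add h4
    have hφxfun : φ x = fun y => ![x, a x + y ^ 2 / 2, B y ^ 2] := by
      funext y; rw [hφ]
    have hdφx : ∀ y, HasDerivAt (φ x) ![(0 : ℝ), y, 2 * B y * B' y] y := by
      intro y
      rw [hφxfun]
      refine hasDerivAt_vec3 (hasDerivAt_const _ _) ?_ ?_
      · have h := ((hasDerivAt_pow 2 y).div_const 2).const_add (a x)
        simpa using h
      · have h := (hB y).fun_pow 2
        convert! h using 1
        ring
    have hdφx' : deriv (φ x) = fun y => ![(0 : ℝ), y, 2 * B y * B' y] :=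
      funext fun y => (hdφx y).deriv
    have hB0 : B 0 = b₀ x := by simp [hBdef]
    have hB'0 : B' 0 = 0 := by simp [hB'def]
    have hB'd : HasDerivAt B' (2 * b₁ x) 0 := by
      have t0 : HasDerivAt (fun _ : ℝ => (0 : ℝ)) 0 0 := hasDerivAt_const _ _
      have t1 : HasDerivAt (fun y : ℝ => b₁ x * (2 * y)) (b₁ x * 2) 0 := by
        simpa using ((hasDerivAt_id (0 : ℝ)).const_mul 2).const_mul (b₁ x)
      have t2 : HasDerivAt (fun y : ℝ => b₂ x * (3 * y ^ 2)) 0 0 := by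
        simpa using ((hasDerivAt_pow 2 (0 : ℝ)).const_mul 3).const_mul (b₂ x)
      have t3 : HasDerivAt (fun y : ℝ => deriv (b₃ x) y * y ^ 4) 0 0 := by
        simpa using (db₃' x 0).hasDerivAt.fun_mul (hasDerivAt_pow 4 (0 : ℝ))
      have t4 : HasDerivAt (fun y : ℝ => b₃ x y * (4 * y ^ 3)) 0 0 := by
        simpa using (db₃ x 0).hasDerivAt.fun_mul ((hasDerivAt_pow 3 (0 : ℝ)).const_mul 4)
      have h := ((t0.add t1).add t2).add (t3.add t4)
      rw [hB'def]
      convert! h using 1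
      ring
    have h3 : HasDerivAt (fun y => 2 * B y * B' y) (4 * b₀ x * b₁ x) 0 := by
      have h := ((hB 0).const_mul 2).fun_mul hB'd
      rw [hB0, hB'0] at h
      convert! h using 1
      ring
    rw [show iteratedDeriv 2 (φ x) = deriv (deriv (φ x)) by
      rw [iteratedDeriv_succ, iteratedDeriv_one], hdφx']
    exact (hasDerivAt_vec3 (hasDerivAt_const _ _) (hasDerivAt_id' 0) h3).deriv
  -- w explicitly
  have hwx : ∀ x, w x = ![deriv a x * (4 * b₀ x * b₁ x) - 2 * b₀ x * deriv b₀ x,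
      -(4 * b₀ x * b₁ x), 1] := by
    intro x
    rw [hw]
    have hφγ : (fun t => φ t 0) = γ := funext fun t => (hγ t).symm
    rw [hφγ, hdγ', hφ2 x]
    rw [cross3_expand]
    funext i; fin_cases i <;> simp
  -- norm of w
  have hnw : ∀ x, norm3 (w x) = Real.sqrt
      ((deriv a x * (4 * b₀ x * b₁ x) - 2 * b₀ x * deriv b₀ x) ^ 2
        + (4 * b₀ x * b₁ x) ^ 2 + 1) := by
    intro x
    rw [hwx, norm3_expand]
    congr 1
    ring
  -- the explicit formula for κs
  have hκformula : κs = fun x =>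
      (Real.sqrt ((deriv a x * (4 * b₀ x * b₁ x) - 2 * b₀ x * deriv b₀ x) ^ 2
          + (4 * b₀ x * b₁ x) ^ 2 + 1))⁻¹ *
        (deriv (deriv a) x
          - (2 * deriv b₀ x ^ 2 + 2 * b₀ x * deriv (deriv b₀) x) * (-(4 * b₀ x * b₁ x))
          + deriv a x * (2 * deriv b₀ x ^ 2 + 2 * b₀ x * deriv (deriv b₀) x)
              * (deriv a x * (4 * b₀ x * b₁ x) - 2 * b₀ x * deriv b₀ x)
          - (2 * b₀ x * deriv b₀ x) * deriv (deriv a) x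
              * (deriv a x * (4 * b₀ x * b₁ x) - 2 * b₀ x * deriv b₀ x))
        / Real.sqrt (1 + deriv a x ^ 2 + (2 * b₀ x * deriv b₀ x) ^ 2) ^ 3 := by
    funext x
    rw [hκs, hν, hnw, hwx, hd2γ x]
    simp only [hdγ']
    rw [smul_vec3, det3_expand, norm3_expand]
    rw [show ((1 : ℝ) ^ 2 + deriv a x ^ 2 + (2 * b₀ x * deriv b₀ x) ^ 2)
        = 1 + deriv a x ^ 2 + (2 * b₀ x * deriv b₀ x) ^ 2 from by norm_num]
    ring
  have hit2 : iteratedDeriv 2 a = deriv (deriv a) := by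
    rw [iteratedDeriv_eq_iterate]; rfl
  have hit3 : iteratedDeriv 3 a = deriv (deriv (deriv a)) := by
    rw [iteratedDeriv_eq_iterate]; rfl
  -- value at 0
  have hκ0 : κs 0 = deriv (deriv a) 0 := by
    simp only [hκformula]
    rw [ha0', hb₀0]
    norm_num [Real.sqrt_one]
  -- derivative pieces at 0
  have hZ0d : HasDerivAt (fun x => deriv a x * (4 * b₀ x * b₁ x) - 2 * b₀ x * deriv b₀ x)
      (-(2 * deriv b₀ 0 ^ 2)) 0 := by
    have h := ((da1 0).hasDerivAt.fun_mul
        (((db₀ 0).hasDerivAt.const_mul 4).fun_mul (db₁ 0).hasDerivAt)).sub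
      (((db₀ 0).hasDerivAt.const_mul 2).fun_mul (db₀1 0).hasDerivAt)
    rw [ha0', hb₀0] at h
    convert! h using 1
    ring
  have hZ1p : HasDerivAt (fun x => 4 * b₀ x * b₁ x) (4 * deriv b₀ 0 * b₁ 0) 0 := by
    have h := ((db₀ 0).hasDerivAt.const_mul 4).fun_mul (db₁ 0).hasDerivAt
    rw [hb₀0] at h
    convert! h using 1
    ring
  have hZ1d : HasDerivAt (fun x => -(4 * b₀ x * b₁ x)) (-(4 * deriv b₀ 0 * b₁ 0)) 0 :=
    hZ1p.neg
  have hWd : HasDerivAt (fun x =>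
      (deriv a x * (4 * b₀ x * b₁ x) - 2 * b₀ x * deriv b₀ x) ^ 2
        + (4 * b₀ x * b₁ x) ^ 2 + 1) 0 0 := by
    have h := ((hZ0d.fun_pow 2).add (hZ1p.fun_pow 2)).add_const 1
    rw [ha0', hb₀0] at h
    convert! h using 1
    push_cast
    ring
  have hGd : HasDerivAt (fun x => 1 + deriv a x ^ 2 + (2 * b₀ x * deriv b₀ x) ^ 2) 0 0 := by
    have h := (((da1 0).hasDerivAt.fun_pow 2).const_add 1).add
      ((((db₀ 0).hasDerivAt.const_mul 2).fun_mul (db₀1 0).hasDerivAt).fun_pow 2)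
    rw [ha0', hb₀0] at h
    convert! h using 1
    push_cast
    ring
  have hsqW : HasDerivAt (fun x => Real.sqrt
      ((deriv a x * (4 * b₀ x * b₁ x) - 2 * b₀ x * deriv b₀ x) ^ 2
        + (4 * b₀ x * b₁ x) ^ 2 + 1)) 0 0 := by
    simpa using hWd.sqrt (by positivity)
  have hinvW : HasDerivAt (fun x => (Real.sqrt
      ((deriv a x * (4 * b₀ x * b₁ x) - 2 * b₀ x * deriv b₀ x) ^ 2
        + (4 * b₀ x * b₁ x) ^ 2 + 1))⁻¹) 0 0 := by
    have h := hsqW.fun_inv (by positivity)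
    simpa using h
  have hsqG : HasDerivAt (fun x =>
      Real.sqrt (1 + deriv a x ^ 2 + (2 * b₀ x * deriv b₀ x) ^ 2)) 0 0 := by
    simpa using hGd.sqrt (by positivity)
  have hsqG3 : HasDerivAt (fun x =>
      Real.sqrt (1 + deriv a x ^ 2 + (2 * b₀ x * deriv b₀ x) ^ 2) ^ 3) 0 0 := by
    simpa using hsqG.fun_pow 3
  have hv2raw := (((db₀1 0).hasDerivAt.fun_pow 2).const_mul 2).fun_add
    (((db₀ 0).hasDerivAt.const_mul 2).fun_mul (db₀2 0).hasDerivAt)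
  have hEd : HasDerivAt (fun x =>
      deriv (deriv a) x
        - (2 * deriv b₀ x ^ 2 + 2 * b₀ x * deriv (deriv b₀) x) * (-(4 * b₀ x * b₁ x))
        + deriv a x * (2 * deriv b₀ x ^ 2 + 2 * b₀ x * deriv (deriv b₀) x)
            * (deriv a x * (4 * b₀ x * b₁ x) - 2 * b₀ x * deriv b₀ x)
        - (2 * b₀ x * deriv b₀ x) * deriv (deriv a) x
            * (deriv a x * (4 * b₀ x * b₁ x) - 2 * b₀ x * deriv b₀ x))
      (8 * b₁ 0 * deriv b₀ 0 ^ 3 + deriv (deriv (deriv a)) 0) 0 := by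
    have hu2 := ((db₀ 0).hasDerivAt.const_mul 2).fun_mul (db₀1 0).hasDerivAt
    have h := (((da2 0).hasDerivAt.sub (hv2raw.fun_mul hZ1d)).add
        (((da1 0).hasDerivAt.fun_mul hv2raw).fun_mul hZ0d)).sub
      ((hu2.fun_mul (da2 0).hasDerivAt).fun_mul hZ0d)
    rw [ha0', hb₀0] at h
    convert! h using 1
    push_cast
    ring
  have hFd : HasDerivAt κs (8 * b₁ 0 * deriv b₀ 0 ^ 3 + deriv (deriv (deriv a)) 0) 0 := by
    rw [hκformula]
    have hnum := hinvW.fun_mul hEd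
    have h := hnum.fun_div hsqG3 (by positivity)
    convert! h using 1
    rw [ha0', hb₀0]
    norm_num [Real.sqrt_one]
  exact ⟨by rw [hit2]; exact hκ0, by rw [hit3]; exact hFd.deriv⟩
end

section
/- Let κ_ν(x) := ⟨γ̂''(x), ν(x)⟩ / ‖γ̂'(x)‖² (the limiting normal curvature of the folded cuspidal edge φ along its singular curve y = 0). Then for every x ∈ ℝ, κ_ν(x) = 2(b₀'(x)² + b₀(x)(b₀''(x) − 2b₁(x)a''(x))) / (A(x)·√(B(x))), where A(x) = 1 + a'(x)² + 4b₀(x)²b₀'(x)² and B(x) = 1 + 16b₀(x)²b₁(x)² + 4b₀(x)²(b₀'(x) − 2b₁(x)a'(x))². In particular κ_ν(0) = 2b₀'(0)² and κ_ν'(0) = 2b₀'(0)(3b₀''(0) − 2b₁(0)a''(0)). -/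
open Real Set

private lemma dOne {f : ℝ → ℝ} (hf : ContDiff ℝ (⊤:ℕ∞) f) : Differentiable ℝ (deriv f) := by
  simpa using (hf.iterate_deriv 1).differentiable (by simp)

private lemma dTwo {f : ℝ → ℝ} (hf : ContDiff ℝ (⊤:ℕ∞) f) :
    Differentiable ℝ (deriv (deriv f)) := by
  simpa [Function.iterate_succ, Function.comp] using
    (hf.iterate_deriv 2).differentiable (by simp)

private lemma idTwo {F : Type*} [NormedAddCommGroup F] [NormedSpace ℝ F] {f : ℝ → F} :
    iteratedDeriv 2 f = deriv (deriv f) := by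
  rw [iteratedDeriv_succ, iteratedDeriv_one]

/-- For the folded cuspidal edge, the limiting normal curvature
`κ_ν(x) = ⟨γ̂''(x), ν(x)⟩ / ‖γ̂'(x)‖²` along `y = 0` satisfies, for every `x`,
`κ_ν(x) = 2(b₀'(x)² + b₀(x)(b₀''(x) − 2b₁(x)a''(x))) / (A(x)√(B(x)))` with
`A(x) = 1 + a'(x)² + 4b₀(x)²b₀'(x)²`,
`B(x) = 1 + 16b₀(x)²b₁(x)² + 4b₀(x)²(b₀'(x) − 2b₁(x)a'(x))²`;
in particular `κ_ν(0) = 2b₀'(0)²` and `κ_ν'(0) = 2b₀'(0)(3b₀''(0) − 2b₁(0)a''(0))`. -/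
theorem stmt1 (a b₀ b₁ b₂ : ℝ → ℝ) (b₃ : ℝ → ℝ → ℝ)
    (ha : ContDiff ℝ (⊤ : ℕ∞) a) (hb₀ : ContDiff ℝ (⊤ : ℕ∞) b₀)
    (hb₁ : ContDiff ℝ (⊤ : ℕ∞) b₁) (hb₂ : ContDiff ℝ (⊤ : ℕ∞) b₂)
    (hb₃ : ContDiff ℝ (⊤ : ℕ∞) (Function.uncurry b₃))
    (ha0 : a 0 = 0) (ha0' : deriv a 0 = 0) (hb₀0 : b₀ 0 = 0)
    (φ : ℝ → ℝ → Fin 3 → ℝ)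
    (hφ : ∀ x y, φ x y =
      ![x, a x + y ^ 2 / 2,
        (b₀ x + b₁ x * y ^ 2 + b₂ x * y ^ 3 + b₃ x y * y ^ 4) ^ 2])
    (γ : ℝ → Fin 3 → ℝ) (hγ : ∀ x, γ x = φ x 0)
    (w : ℝ → Fin 3 → ℝ)
    (hw : ∀ x, w x = cross3 (deriv (fun t => φ t 0) x) (iteratedDeriv 2 (φ x) 0))
    (ν : ℝ → Fin 3 → ℝ) (hν : ∀ x, ν x = (norm3 (w x))⁻¹ • w x)
    (κν : ℝ → ℝ)
    (hκν : ∀ x, κν x =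
      dot3 (iteratedDeriv 2 γ x) (ν x) / norm3 (deriv γ x) ^ 2) :
    (∀ x, κν x =
      2 * (deriv b₀ x ^ 2 + b₀ x * (iteratedDeriv 2 b₀ x - 2 * b₁ x * iteratedDeriv 2 a x)) /
        ((1 + deriv a x ^ 2 + 4 * b₀ x ^ 2 * deriv b₀ x ^ 2) *
          Real.sqrt (1 + 16 * b₀ x ^ 2 * b₁ x ^ 2 +
            4 * b₀ x ^ 2 * (deriv b₀ x - 2 * b₁ x * deriv a x) ^ 2))) ∧
    κν 0 = 2 * deriv b₀ 0 ^ 2 ∧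
    deriv κν 0 = 2 * deriv b₀ 0 * (3 * iteratedDeriv 2 b₀ 0 - 2 * b₁ 0 * iteratedDeriv 2 a 0) := by
  simp only [idTwo]
  -- basic differentiability
  have hda : Differentiable ℝ a := ha.differentiable (by simp)
  have hdb0 : Differentiable ℝ b₀ := hb₀.differentiable (by simp)
  have hdb1 : Differentiable ℝ b₁ := hb₁.differentiable (by simp)
  have hda' : Differentiable ℝ (deriv a) := dOne ha
  have hda'' : Differentiable ℝ (deriv (deriv a)) := dTwo ha
  have hdb0' : Differentiable ℝ (deriv b₀) := dOne hb₀
  have hdb0'' : Differentiable ℝ (deriv (deriv b₀)) := dTwo hb₀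
  -- explicit form of γ
  have hγ' : ∀ t, γ t = ![t, a t, b₀ t ^ 2] := by
    intro t
    rw [hγ t, hφ]
    funext i; fin_cases i <;> norm_num
  have hγd : ∀ t, HasDerivAt γ ![1, deriv a t, 2 * (b₀ t * deriv b₀ t)] t := by
    intro t
    apply hasDerivAt_pi.2
    intro i
    fin_cases i
    · simpa [hγ'] using hasDerivAt_id' t
    · simpa [hγ'] using (hda t).hasDerivAt
    · simp only [hγ']
      have h := ((hdb0 t).hasDerivAt).pow 2
      norm_num at h
      simpa [mul_comm, mul_assoc, mul_left_comm, Pi.pow_def] using h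
  have hderivγ : deriv γ = fun t => ![1, deriv a t, 2 * (b₀ t * deriv b₀ t)] :=
    funext fun t => (hγd t).deriv
  have hγdd : ∀ t, HasDerivAt (deriv γ)
      ![0, deriv (deriv a) t,
        2 * (deriv b₀ t * deriv b₀ t + b₀ t * deriv (deriv b₀) t)] t := by
    intro t
    rw [hderivγ]
    apply hasDerivAt_pi.2
    intro i
    fin_cases i
    · simpa using hasDerivAt_const t (1:ℝ)
    · simpa using (hda' t).hasDerivAt
    · simpa using ((hdb0 t).hasDerivAt.mul (hdb0' t).hasDerivAt).const_mul 2
  -- main pointwise formula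
  have hmain : ∀ x, κν x =
      2 * (deriv b₀ x ^ 2 + b₀ x * (deriv (deriv b₀) x - 2 * b₁ x * deriv (deriv a) x)) /
        ((1 + deriv a x ^ 2 + 4 * b₀ x ^ 2 * deriv b₀ x ^ 2) *
          Real.sqrt (1 + 16 * b₀ x ^ 2 * b₁ x ^ 2 +
            4 * b₀ x ^ 2 * (deriv b₀ x - 2 * b₁ x * deriv a x) ^ 2)) := by
    intro x
    have hiγ2 : iteratedDeriv 2 γ x =
        ![0, deriv (deriv a) x,
          2 * (deriv b₀ x * deriv b₀ x + b₀ x * deriv (deriv b₀) x)] := by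
      rw [idTwo]; exact (hγdd x).deriv
    -- the y-direction derivatives at the point x
    set c : ℝ → ℝ := fun y => b₃ x y with hc_def
    have hcC : ContDiff ℝ (⊤:ℕ∞) c := hb₃.comp (contDiff_const.prodMk contDiff_id)
    have hdc : Differentiable ℝ c := hcC.differentiable (by simp)
    have hdc' : Differentiable ℝ (deriv c) := dOne hcC
    have hφx : φ x = fun y =>
        ![x, a x + y ^ 2 / 2, (b₀ x + b₁ x * y ^ 2 + b₂ x * y ^ 3 + c y * y ^ 4) ^ 2] :=
      funext fun y => hφ x y
    have hf : ∀ y, HasDerivAt (fun y => b₀ x + b₁ x * y ^ 2 + b₂ x * y ^ 3 + c y * y ^ 4)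
        (2 * b₁ x * y + 3 * b₂ x * y ^ 2 + deriv c y * y ^ 4 + 4 * c y * y ^ 3) y := by
      intro y
      have h := (((hasDerivAt_const y (b₀ x)).add ((hasDerivAt_pow 2 y).const_mul (b₁ x))).add
          ((hasDerivAt_pow 3 y).const_mul (b₂ x))).add ((hdc y).hasDerivAt.mul (hasDerivAt_pow 4 y))
      refine h.congr_deriv ?_
      push_cast; ring
    have hφxd : ∀ y, HasDerivAt (φ x)
        ![0, y, 2 * (b₀ x + b₁ x * y ^ 2 + b₂ x * y ^ 3 + c y * y ^ 4) *
          (2 * b₁ x * y + 3 * b₂ x * y ^ 2 + deriv c y * y ^ 4 + 4 * c y * y ^ 3)] y := by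
      intro y
      rw [hφx]
      apply hasDerivAt_pi.2
      intro i
      fin_cases i
      · simpa using hasDerivAt_const y x
      · have h1 : HasDerivAt (fun y : ℝ => a x + y ^ 2 / 2) y y := by
          have h := (hasDerivAt_const y (a x)).add ((hasDerivAt_pow 2 y).div_const 2)
          refine h.congr_deriv ?_
          push_cast; ring
        simpa using h1
      · have h2 := (hf y).pow 2
        have h2' : HasDerivAt
            (fun y => (b₀ x + b₁ x * y ^ 2 + b₂ x * y ^ 3 + c y * y ^ 4) ^ 2)
            (2 * (b₀ x + b₁ x * y ^ 2 + b₂ x * y ^ 3 + c y * y ^ 4) *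
              (2 * b₁ x * y + 3 * b₂ x * y ^ 2 + deriv c y * y ^ 4 + 4 * c y * y ^ 3)) y := by
          refine h2.congr_deriv ?_
          push_cast; ring
        simpa using h2'
    have hderivφx : deriv (φ x) = fun y =>
        ![0, y, 2 * (b₀ x + b₁ x * y ^ 2 + b₂ x * y ^ 3 + c y * y ^ 4) *
          (2 * b₁ x * y + 3 * b₂ x * y ^ 2 + deriv c y * y ^ 4 + 4 * c y * y ^ 3)] :=
      funext fun y => (hφxd y).deriv
    have hG : HasDerivAt (deriv (φ x)) ![0, 1, 4 * (b₀ x * b₁ x)] 0 := by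
      rw [hderivφx]
      apply hasDerivAt_pi.2
      intro i
      fin_cases i
      · simpa using hasDerivAt_const (0:ℝ) (0:ℝ)
      · simpa using hasDerivAt_id' (0:ℝ)
      · have hf0 : HasDerivAt
            (fun y => 2 * b₁ x * y + 3 * b₂ x * y ^ 2 + deriv c y * y ^ 4 + 4 * c y * y ^ 3)
            (2 * b₁ x) 0 := by
          have h := ((((hasDerivAt_id (0:ℝ)).const_mul (2 * b₁ x)).add
              ((hasDerivAt_pow 2 (0:ℝ)).const_mul (3 * b₂ x))).add
              ((hdc' 0).hasDerivAt.mul (hasDerivAt_pow 4 (0:ℝ)))).add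
              (((hdc 0).hasDerivAt.const_mul 4).mul (hasDerivAt_pow 3 (0:ℝ)))
          refine h.congr_deriv ?_
          push_cast; norm_num
        have h3 := ((hf 0).const_mul 2).mul hf0
        have h3' : HasDerivAt
            (fun y => 2 * (b₀ x + b₁ x * y ^ 2 + b₂ x * y ^ 3 + c y * y ^ 4) *
              (2 * b₁ x * y + 3 * b₂ x * y ^ 2 + deriv c y * y ^ 4 + 4 * c y * y ^ 3))
            (4 * (b₀ x * b₁ x)) 0 := by
          refine h3.congr_deriv ?_
          push_cast; norm_num; ring
        simpa using h3'
    have hiφ2 : iteratedDeriv 2 (φ x) 0 = ![0, 1, 4 * (b₀ x * b₁ x)] := by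
      rw [idTwo]; exact hG.deriv
    have hfg : (fun t => φ t 0) = γ := funext fun t => (hγ t).symm
    have hwx : w x = ![4 * (b₀ x * b₁ x) * deriv a x - 2 * (b₀ x * deriv b₀ x),
        -(4 * (b₀ x * b₁ x)), 1] := by
      rw [hw x, hfg, (hγd x).deriv, hiφ2]
      funext i; fin_cases i <;> simp [cross3] <;> ring
    have hBpos : (0:ℝ) < 1 + 16 * b₀ x ^ 2 * b₁ x ^ 2 +
        4 * b₀ x ^ 2 * (deriv b₀ x - 2 * b₁ x * deriv a x) ^ 2 := by positivity
    have hB : norm3 (w x) = Real.sqrt (1 + 16 * b₀ x ^ 2 * b₁ x ^ 2 +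
        4 * b₀ x ^ 2 * (deriv b₀ x - 2 * b₁ x * deriv a x) ^ 2) := by
      rw [hwx]
      unfold norm3
      congr 1
      simp
      ring
    have hA2 : norm3 (deriv γ x) ^ 2 = 1 + deriv a x ^ 2 + 4 * b₀ x ^ 2 * deriv b₀ x ^ 2 := by
      rw [(hγd x).deriv]
      unfold norm3
      rw [Real.sq_sqrt (by positivity)]
      simp
      ring
    have hApos : (0:ℝ) < 1 + deriv a x ^ 2 + 4 * b₀ x ^ 2 * deriv b₀ x ^ 2 := by positivity
    have hsB : Real.sqrt (1 + 16 * b₀ x ^ 2 * b₁ x ^ 2 +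
        4 * b₀ x ^ 2 * (deriv b₀ x - 2 * b₁ x * deriv a x) ^ 2) ≠ 0 :=
      (Real.sqrt_pos.2 hBpos).ne'
    rw [hκν x, hν x, hB, hwx, hiγ2, hA2]
    simp only [dot3, Matrix.cons_val_zero, Matrix.cons_val_one, Matrix.head_cons,
      Matrix.cons_val_two, Matrix.tail_cons, Pi.smul_apply, smul_eq_mul]
    rw [show (2 * (deriv b₀ x ^ 2 + b₀ x * (deriv (deriv b₀) x - 2 * b₁ x * deriv (deriv a) x))) /
        ((1 + deriv a x ^ 2 + 4 * b₀ x ^ 2 * deriv b₀ x ^ 2) *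
          Real.sqrt (1 + 16 * b₀ x ^ 2 * b₁ x ^ 2 +
            4 * b₀ x ^ 2 * (deriv b₀ x - 2 * b₁ x * deriv a x) ^ 2)) =
        (2 * (deriv b₀ x ^ 2 + b₀ x * (deriv (deriv b₀) x - 2 * b₁ x * deriv (deriv a) x)) *
          (Real.sqrt (1 + 16 * b₀ x ^ 2 * b₁ x ^ 2 +
            4 * b₀ x ^ 2 * (deriv b₀ x - 2 * b₁ x * deriv a x) ^ 2))⁻¹) /
        (1 + deriv a x ^ 2 + 4 * b₀ x ^ 2 * deriv b₀ x ^ 2) from by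
      rw [div_eq_mul_inv, mul_inv, div_eq_mul_inv]; ring]
    congr 1
    ring
  refine ⟨hmain, ?_, ?_⟩
  · rw [hmain 0, hb₀0, ha0']
    norm_num
  · -- derivative at 0
    have hκf : κν = fun x =>
        2 * (deriv b₀ x ^ 2 + b₀ x * (deriv (deriv b₀) x - 2 * b₁ x * deriv (deriv a) x)) /
          ((1 + deriv a x ^ 2 + 4 * b₀ x ^ 2 * deriv b₀ x ^ 2) *
            Real.sqrt (1 + 16 * b₀ x ^ 2 * b₁ x ^ 2 +
              4 * b₀ x ^ 2 * (deriv b₀ x - 2 * b₁ x * deriv a x) ^ 2)) := funext hmain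
    have hN := (((hdb0' 0).hasDerivAt.pow 2).add
        ((hdb0 0).hasDerivAt.mul ((hdb0'' 0).hasDerivAt.sub
          (((hdb1 0).hasDerivAt.const_mul 2).mul (hda'' 0).hasDerivAt)))).const_mul 2
    have hAd := ((hasDerivAt_const (0:ℝ) (1:ℝ)).add ((hda' 0).hasDerivAt.pow 2)).add
        ((((hdb0 0).hasDerivAt.pow 2).const_mul 4).mul ((hdb0' 0).hasDerivAt.pow 2))
    have hBd := ((hasDerivAt_const (0:ℝ) (1:ℝ)).add
        ((((hdb0 0).hasDerivAt.pow 2).const_mul 16).mul ((hdb1 0).hasDerivAt.pow 2))).add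
        ((((hdb0 0).hasDerivAt.pow 2).const_mul 4).mul
          (((hdb0' 0).hasDerivAt.sub
            (((hdb1 0).hasDerivAt.const_mul 2).mul (hda' 0).hasDerivAt)).pow 2))
    have hBne : (1 + 16 * b₀ 0 ^ 2 * b₁ 0 ^ 2 +
        4 * b₀ 0 ^ 2 * (deriv b₀ 0 - 2 * b₁ 0 * deriv a 0) ^ 2) ≠ 0 := by positivity
    have hsq := (Real.hasDerivAt_sqrt hBne).comp 0 hBd
    have hDd := hAd.mul hsq
    have hDne : (1 + deriv a 0 ^ 2 + 4 * b₀ 0 ^ 2 * deriv b₀ 0 ^ 2) *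
        Real.sqrt (1 + 16 * b₀ 0 ^ 2 * b₁ 0 ^ 2 +
          4 * b₀ 0 ^ 2 * (deriv b₀ 0 - 2 * b₁ 0 * deriv a 0) ^ 2) ≠ 0 :=
      mul_ne_zero (by positivity) (Real.sqrt_ne_zero'.2 (by positivity))
    have hquot := hN.div hDd hDne
    have hder := hquot.deriv
    have hder2 : deriv (fun x =>
        2 * (deriv b₀ x ^ 2 + b₀ x * (deriv (deriv b₀) x - 2 * b₁ x * deriv (deriv a) x)) /
          ((1 + deriv a x ^ 2 + 4 * b₀ x ^ 2 * deriv b₀ x ^ 2) *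
            Real.sqrt (1 + 16 * b₀ x ^ 2 * b₁ x ^ 2 +
              4 * b₀ x ^ 2 * (deriv b₀ x - 2 * b₁ x * deriv a x) ^ 2))) 0 = _ := hder
    rw [hκf, hder2]
    simp only [Function.comp_apply]
    rw [hb₀0, ha0']
    norm_num [Real.sqrt_one, hb₀0, ha0']
    ring
end

section
/- Let κ_t(x) := det(φ_x, φ_yy, φ_xyy)/‖φ_x × φ_yy‖² − det(φ_x, φ_yy, φ_xyy)·⟨φ_x, φ_yy⟩/(‖φ_x‖²·‖φ_x × φ_yy‖²), all partial derivatives evaluated at (x,0) (the cusp-directional torsion of the folded cuspidal edge φ along its singular curve y = 0). Then κ_t(0) = 4·b₁(0)·b₀'(0). -/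
open Real Set

/-- For the folded cuspidal edge, the cusp-directional torsion
`κ_t(x) = det(φ_x, φ_yy, φ_xyy)/‖φ_x × φ_yy‖² −
  det(φ_x, φ_yy, φ_xyy)⟨φ_x, φ_yy⟩/(‖φ_x‖²‖φ_x × φ_yy‖²)` (partials at `(x,0)`)
satisfies `κ_t(0) = 4 b₁(0) b₀'(0)`. -/
theorem stmt2 (a b₀ b₁ b₂ : ℝ → ℝ) (b₃ : ℝ → ℝ → ℝ)
    (ha : ContDiff ℝ (⊤ : ℕ∞) a) (hb₀ : ContDiff ℝ (⊤ : ℕ∞) b₀)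
    (hb₁ : ContDiff ℝ (⊤ : ℕ∞) b₁) (hb₂ : ContDiff ℝ (⊤ : ℕ∞) b₂)
    (hb₃ : ContDiff ℝ (⊤ : ℕ∞) (Function.uncurry b₃))
    (ha0 : a 0 = 0) (ha0' : deriv a 0 = 0) (hb₀0 : b₀ 0 = 0)
    (φ : ℝ → ℝ → Fin 3 → ℝ)
    (hφ : ∀ x y, φ x y =
      ![x, a x + y ^ 2 / 2,
        (b₀ x + b₁ x * y ^ 2 + b₂ x * y ^ 3 + b₃ x y * y ^ 4) ^ 2])
    (φX φYY φXYY : ℝ → Fin 3 → ℝ)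
    (hφX : ∀ x, φX x = deriv (fun t => φ t 0) x)
    (hφYY : ∀ x, φYY x = iteratedDeriv 2 (φ x) 0)
    (hφXYY : ∀ x, φXYY x = deriv (fun t => iteratedDeriv 2 (φ t) 0) x)
    (κt : ℝ → ℝ)
    (hκt : ∀ x, κt x =
      det3 (φX x) (φYY x) (φXYY x) / norm3 (cross3 (φX x) (φYY x)) ^ 2 -
        det3 (φX x) (φYY x) (φXYY x) * dot3 (φX x) (φYY x) /
          (norm3 (φX x) ^ 2 * norm3 (cross3 (φX x) (φYY x)) ^ 2)) :
    κt 0 = 4 * b₁ 0 * deriv b₀ 0 := by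
  have hdiff : ∀ f : ℝ → ℝ, ContDiff ℝ (⊤ : ℕ∞) f → Differentiable ℝ f := fun f hf =>
    hf.differentiable (by simp)
  -- smoothness of `b₃ x` in `y`
  have hb3x : ∀ x, ContDiff ℝ (⊤ : ℕ∞) (b₃ x) := fun x =>
    hb₃.comp (contDiff_const.prodMk contDiff_id)
  have hb3x' : ∀ x, Differentiable ℝ (deriv (b₃ x)) := fun x =>
    hdiff _ (contDiff_infty_iff_deriv.mp (hb3x x)).2
  set B : ℝ → ℝ → ℝ := fun x y => b₀ x + b₁ x * y ^ 2 + b₂ x * y ^ 3 + b₃ x y * y ^ 4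
    with hBdef
  set P : ℝ → ℝ → ℝ := fun x y =>
      b₁ x * (2 * y) + b₂ x * (3 * y ^ 2) + (deriv (b₃ x) y * y ^ 4 + b₃ x y * (4 * y ^ 3))
    with hPdef
  have hBy : ∀ x y, HasDerivAt (fun y => B x y) (P x y) y := by
    intro x y
    have h3 : HasDerivAt (b₃ x) (deriv (b₃ x) y) y := (hdiff _ (hb3x x) y).hasDerivAt
    have h := (((hasDerivAt_const y (b₀ x)).add
        ((hasDerivAt_pow 2 y).const_mul (b₁ x))).add
        ((hasDerivAt_pow 3 y).const_mul (b₂ x))).add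
        (h3.mul (hasDerivAt_pow 4 y))
    refine h.congr_deriv ?_
    all_goals simp [hPdef]
    all_goals ring
  -- first y-derivative of φ x
  have hφy : ∀ x y, HasDerivAt (φ x) ![0, y, 2 * B x y * P x y] y := by
    intro x y
    have hfun : φ x = fun y => ![x, a x + y ^ 2 / 2, (B x y) ^ 2] := funext fun y => hφ x y
    rw [hfun]
    apply hasDerivAt_pi.mpr
    intro i
    fin_cases i
    · simpa using hasDerivAt_const y x
    · have := ((hasDerivAt_pow 2 y)).div_const 2
      simpa using this
    · have h := (hBy x y).pow 2
      refine h.congr_deriv ?_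
      all_goals simp
      all_goals ring
  have hderivφy : ∀ x, deriv (φ x) = fun y => ![0, y, 2 * B x y * P x y] :=
    fun x => funext fun y => (hφy x y).deriv
  -- value of P and B at y = 0
  have hP0 : ∀ x, P x 0 = 0 := by intro x; simp [hPdef]
  have hB0 : ∀ x, B x 0 = b₀ x := by intro x; simp [hBdef]
  -- derivative of P at 0
  have hPy0 : ∀ x, HasDerivAt (fun y => P x y) (2 * b₁ x) 0 := by
    intro x
    have h3 : HasDerivAt (b₃ x) (deriv (b₃ x) 0) 0 := (hdiff _ (hb3x x) 0).hasDerivAt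
    have h3' : HasDerivAt (deriv (b₃ x)) (deriv (deriv (b₃ x)) 0) 0 :=
      ((hb3x' x) 0).hasDerivAt
    have h := (((hasDerivAt_id 0).const_mul 2 |>.const_mul (b₁ x)).add
        (((hasDerivAt_pow 2 0).const_mul 3).const_mul (b₂ x))).add
        ((h3'.mul (hasDerivAt_pow 4 0)).add
          (h3.mul ((hasDerivAt_pow 3 0).const_mul 4)))
    refine h.congr_deriv ?_
    all_goals simp [hPdef]
    all_goals ring
  -- second y-derivative of φ x at 0
  have hφyy : ∀ x, iteratedDeriv 2 (φ x) 0 = ![0, 1, 4 * b₀ x * b₁ x] := by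
    intro x
    have h2 : iteratedDeriv 2 (φ x) = deriv (deriv (φ x)) := by
      have : (2 : ℕ) = 1 + 1 := rfl
      rw [this, iteratedDeriv_succ, iteratedDeriv_one]
    rw [h2, hderivφy x]
    have hD : HasDerivAt (fun y => (![0, y, 2 * B x y * P x y] : Fin 3 → ℝ))
        ![0, 1, 4 * b₀ x * b₁ x] 0 := by
      apply hasDerivAt_pi.mpr
      intro i
      fin_cases i
      · simpa using hasDerivAt_const (0 : ℝ) (0 : ℝ)
      · simpa using hasDerivAt_id' (0 : ℝ)
      · have h := ((hBy x 0).mul (hPy0 x)).const_mul 2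
        have h' : HasDerivAt (fun y => 2 * B x y * P x y) (4 * b₀ x * b₁ x) 0 := by
          have e1 : (fun y => 2 * B x y * P x y) = fun y => 2 * (B x y * P x y) := by
            funext y; ring
          rw [e1]
          refine h.congr_deriv ?_
          rw [hP0, hB0]; ring
        simpa using h'
    exact hD.deriv
  -- φYY at 0
  have hφYY0 : φYY 0 = ![0, 1, 0] := by
    rw [hφYY, hφyy 0, hb₀0]; norm_num
  -- φX at 0
  have hφX0 : φX 0 = ![1, 0, 0] := by
    rw [hφX]
    have hfun : (fun t => φ t 0) = fun t => ![t, a t, (b₀ t) ^ 2] := by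
      funext t; rw [hφ]; norm_num
    rw [hfun]
    have hD : HasDerivAt (fun t => (![t, a t, (b₀ t) ^ 2] : Fin 3 → ℝ)) ![1, 0, 0] 0 := by
      apply hasDerivAt_pi.mpr
      intro i
      fin_cases i
      · simpa using hasDerivAt_id' (0 : ℝ)
      · have := (hdiff _ ha 0).hasDerivAt
        rw [ha0'] at this; simpa using this
      · have := ((hdiff _ hb₀ 0).hasDerivAt).pow 2
        rw [hb₀0] at this; exact this.congr_deriv (by simp)
    exact hD.deriv
  -- φXYY at 0
  have hφXYY0 : φXYY 0 = ![0, 0, 4 * b₁ 0 * deriv b₀ 0] := by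
    rw [hφXYY]
    have hfun : (fun t => iteratedDeriv 2 (φ t) 0) = fun t => ![0, 1, 4 * b₀ t * b₁ t] :=
      funext fun t => hφyy t
    rw [hfun]
    have hD : HasDerivAt (fun t => (![0, 1, 4 * b₀ t * b₁ t] : Fin 3 → ℝ))
        ![0, 0, 4 * b₁ 0 * deriv b₀ 0] 0 := by
      apply hasDerivAt_pi.mpr
      intro i
      fin_cases i
      · simpa using hasDerivAt_const (0 : ℝ) (0 : ℝ)
      · simpa using hasDerivAt_const (0 : ℝ) (1 : ℝ)
      · have h := (((hdiff _ hb₀ 0).hasDerivAt).mul ((hdiff _ hb₁ 0).hasDerivAt)).const_mul 4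
        have h' : HasDerivAt (fun t => 4 * b₀ t * b₁ t) (4 * b₁ 0 * deriv b₀ 0) 0 := by
          have e1 : (fun t => 4 * b₀ t * b₁ t) = fun t => 4 * (b₀ t * b₁ t) := by
            funext t; ring
          rw [e1]
          refine h.congr_deriv ?_
          rw [hb₀0]; ring
        simpa using h'
    exact hD.deriv
  -- final computation
  rw [hκt, hφX0, hφYY0, hφXYY0]
  simp [det3, cross3, norm3, dot3, Matrix.det_fin_three]
end

section
/- Let κ_c(x) := ‖φ_x‖^{3/2}·det(φ_x, φ_yy, φ_yyy)/‖φ_x × φ_yy‖^{5/2}, all partial derivatives evaluated at (x,0) (the cuspidal curvature of the folded cuspidal edge φ along its singular curve y = 0). Then for every x ∈ ℝ, κ_c(x) = 12·b₀(x)·b₂(x)·A(x)^{3/4}/B(x)^{5/4}, where A(x) = 1 + a'(x)² + 4b₀(x)²b₀'(x)² and B(x) = 1 + 16b₀(x)²b₁(x)² + 4b₀(x)²(b₀'(x) − 2b₁(x)a'(x))². In particular κ_c(0) = 0 and κ_c'(0) = 12·b₂(0)·b₀'(0). -/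
open Real Set

private lemma smooth_one_le : ((⊤ : ℕ∞) : WithTop ℕ∞) ≠ 0 := by
  simp

private lemma deriv_pow_mul (n : ℕ) (H : ℝ → ℝ) (hH : ContDiff ℝ (⊤ : ℕ∞) H) (y : ℝ) :
    HasDerivAt (fun y : ℝ => y ^ (n + 1) * H y)
      (y ^ n * ((n + 1) * H y + y * deriv H y)) y := by
  have h := (hasDerivAt_pow (n + 1) y).mul (hH.differentiable smooth_one_le y).hasDerivAt
  refine h.congr_deriv ?_
  simp only [Nat.add_sub_cancel]
  push_cast
  ring

private lemma vanish : ∀ (k n : ℕ) (H : ℝ → ℝ), ContDiff ℝ (⊤ : ℕ∞) H → k < n →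
    iteratedDeriv k (fun y => y ^ n * H y) 0 = 0 := by
  intro k
  induction k with
  | zero =>
    intro n H hH hk
    obtain ⟨m, rfl⟩ : ∃ m, n = m + 1 := ⟨n - 1, by omega⟩
    simp [pow_succ]
  | succ k ih =>
    intro n H hH hk
    obtain ⟨m, rfl⟩ : ∃ m, n = m + 1 := ⟨n - 1, by omega⟩
    rw [iteratedDeriv_succ']
    have hd : deriv (fun y : ℝ => y ^ (m + 1) * H y)
        = fun y => y ^ m * ((m + 1) * H y + y * deriv H y) := by
      funext y; exact (deriv_pow_mul m H hH y).deriv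
    rw [hd]
    have hH' : ContDiff ℝ (⊤ : ℕ∞) (deriv H) := (contDiff_infty_iff_deriv.mp hH).2
    exact ih m (fun y => (m + 1) * H y + y * deriv H y)
      ((contDiff_const.mul hH).add (contDiff_id.mul hH')) (by omega)


private lemma key (c₀ c₂ c₃ : ℝ) (H : ℝ → ℝ) (hH : ContDiff ℝ (⊤ : ℕ∞) H) :
    iteratedDeriv 2 (fun y : ℝ => c₀ + c₂ * y ^ 2 + c₃ * y ^ 3 + y ^ 4 * H y) 0 = 2 * c₂ ∧
    iteratedDeriv 3 (fun y : ℝ => c₀ + c₂ * y ^ 2 + c₃ * y ^ 3 + y ^ 4 * H y) 0 = 6 * c₃ := by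
  have hH' : ContDiff ℝ (⊤ : ℕ∞) (deriv H) := (contDiff_infty_iff_deriv.mp hH).2
  set K : ℝ → ℝ := fun y => 4 * H y + y * deriv H y with hKdef
  have hK : ContDiff ℝ (⊤ : ℕ∞) K := (contDiff_const.mul hH).add (contDiff_id.mul hH')
  have hK' : ContDiff ℝ (⊤ : ℕ∞) (deriv K) := (contDiff_infty_iff_deriv.mp hK).2
  set K₂ : ℝ → ℝ := fun y => 3 * K y + y * deriv K y with hK₂def
  have hK₂ : ContDiff ℝ (⊤ : ℕ∞) K₂ := (contDiff_const.mul hK).add (contDiff_id.mul hK')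
  have d1 : deriv (fun y : ℝ => c₀ + c₂ * y ^ 2 + c₃ * y ^ 3 + y ^ 4 * H y)
      = fun y => 2 * c₂ * y + 3 * c₃ * y ^ 2 + y ^ 3 * K y := by
    funext y
    have h4 : HasDerivAt (fun y : ℝ => y ^ 4 * H y) (y ^ 3 * K y) y := by
      have h := (hasDerivAt_pow 4 y).mul (hH.differentiable smooth_one_le y).hasDerivAt
      refine h.congr_deriv ?_; simp only [hKdef]; push_cast; ring
    have h := (((hasDerivAt_const y c₀).add
        ((hasDerivAt_pow 2 y).const_mul c₂)).add
        ((hasDerivAt_pow 3 y).const_mul c₃)).add h4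
    rw [HasDerivAt.deriv (f := fun y : ℝ => c₀ + c₂ * y ^ 2 + c₃ * y ^ 3 + y ^ 4 * H y) h]; push_cast; ring
  have d2 : deriv (fun y : ℝ => 2 * c₂ * y + 3 * c₃ * y ^ 2 + y ^ 3 * K y)
      = fun y => 2 * c₂ + 6 * c₃ * y + y ^ 2 * K₂ y := by
    funext y
    have h3 : HasDerivAt (fun y : ℝ => y ^ 3 * K y) (y ^ 2 * K₂ y) y := by
      have h := (hasDerivAt_pow 3 y).mul (hK.differentiable smooth_one_le y).hasDerivAt
      refine h.congr_deriv ?_; simp only [hK₂def]; push_cast; ring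
    have h := (((hasDerivAt_id y).const_mul (2 * c₂)).add
        ((hasDerivAt_pow 2 y).const_mul (3 * c₃))).add h3
    simp only [id_eq] at h
    rw [HasDerivAt.deriv (f := fun y : ℝ => 2 * c₂ * y + 3 * c₃ * y ^ 2 + y ^ 3 * K y) h]; push_cast; ring
  have d3 : deriv (fun y : ℝ => 2 * c₂ + 6 * c₃ * y + y ^ 2 * K₂ y) 0 = 6 * c₃ := by
    have h2 : HasDerivAt (fun y : ℝ => y ^ 2 * K₂ y)
        ((2 : ℕ) * (0:ℝ) ^ 1 * K₂ 0 + (0:ℝ) ^ 2 * deriv K₂ 0) 0 :=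
      (hasDerivAt_pow 2 0).mul (hK₂.differentiable smooth_one_le 0).hasDerivAt
    have h := ((hasDerivAt_const (0:ℝ) (2 * c₂)).add
        ((hasDerivAt_id (0:ℝ)).const_mul (6 * c₃))).add h2
    simp only [id_eq] at h
    rw [HasDerivAt.deriv (f := fun y : ℝ => 2 * c₂ + 6 * c₃ * y + y ^ 2 * K₂ y) h]; norm_num
  constructor
  · rw [show (2 : ℕ) = 1 + 1 from rfl, iteratedDeriv_succ, iteratedDeriv_one, d1, d2]
    norm_num
  · rw [show (3 : ℕ) = 1 + 1 + 1 from rfl, iteratedDeriv_succ, iteratedDeriv_succ,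
      iteratedDeriv_one, d1, d2, d3]

private lemma pi_apply (n : ℕ) (f : ℝ → Fin 3 → ℝ) (hf : ContDiff ℝ (⊤ : ℕ∞) f)
    (x : ℝ) (i : Fin 3) :
    iteratedDeriv n f x i = iteratedDeriv n (fun y => f y i) x := by
  have h := ContinuousLinearMap.iteratedFDeriv_comp_left
    (ContinuousLinearMap.proj (R := ℝ) (φ := fun _ : Fin 3 => ℝ) i) (hf.contDiffAt (x := x))
    (i := n) (by exact_mod_cast le_top)
  rw [iteratedDeriv_eq_iteratedFDeriv, iteratedDeriv_eq_iteratedFDeriv,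
    show (fun y => f y i) = (ContinuousLinearMap.proj (R := ℝ) (φ := fun _ : Fin 3 => ℝ) i) ∘ f
      from rfl, h]
  rfl

/-- For the folded cuspidal edge, the cuspidal curvature
`κ_c(x) = ‖φ_x‖^{3/2} det(φ_x, φ_yy, φ_yyy)/‖φ_x × φ_yy‖^{5/2}` (partials at `(x,0)`)
satisfies `κ_c(x) = 12 b₀(x) b₂(x) A(x)^{3/4}/B(x)^{5/4}` for every `x`; in particular
`κ_c(0) = 0` and `κ_c'(0) = 12 b₂(0) b₀'(0)`. -/
theorem stmt3 (a b₀ b₁ b₂ : ℝ → ℝ) (b₃ : ℝ → ℝ → ℝ)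
    (ha : ContDiff ℝ (⊤ : ℕ∞) a) (hb₀ : ContDiff ℝ (⊤ : ℕ∞) b₀)
    (hb₁ : ContDiff ℝ (⊤ : ℕ∞) b₁) (hb₂ : ContDiff ℝ (⊤ : ℕ∞) b₂)
    (hb₃ : ContDiff ℝ (⊤ : ℕ∞) (Function.uncurry b₃))
    (ha0 : a 0 = 0) (ha0' : deriv a 0 = 0) (hb₀0 : b₀ 0 = 0)
    (φ : ℝ → ℝ → Fin 3 → ℝ)
    (hφ : ∀ x y, φ x y =
      ![x, a x + y ^ 2 / 2,
        (b₀ x + b₁ x * y ^ 2 + b₂ x * y ^ 3 + b₃ x y * y ^ 4) ^ 2])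
    (φX φYY φYYY : ℝ → Fin 3 → ℝ)
    (hφX : ∀ x, φX x = deriv (fun t => φ t 0) x)
    (hφYY : ∀ x, φYY x = iteratedDeriv 2 (φ x) 0)
    (hφYYY : ∀ x, φYYY x = iteratedDeriv 3 (φ x) 0)
    (κc : ℝ → ℝ)
    (hκc : ∀ x, κc x =
      norm3 (φX x) ^ ((3 : ℝ) / 2) * det3 (φX x) (φYY x) (φYYY x) /
        norm3 (cross3 (φX x) (φYY x)) ^ ((5 : ℝ) / 2)) :
    (∀ x, κc x =
      12 * b₀ x * b₂ x * (1 + deriv a x ^ 2 + 4 * b₀ x ^ 2 * deriv b₀ x ^ 2) ^ ((3 : ℝ) / 4) /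
        (1 + 16 * b₀ x ^ 2 * b₁ x ^ 2 +
          4 * b₀ x ^ 2 * (deriv b₀ x - 2 * b₁ x * deriv a x) ^ 2) ^ ((5 : ℝ) / 4)) ∧
    κc 0 = 0 ∧ deriv κc 0 = 12 * b₂ 0 * deriv b₀ 0 := by
  -- slice smoothness of b₃
  have hb₃x : ∀ x, ContDiff ℝ (⊤ : ℕ∞) (fun y => b₃ x y) := fun x =>
    hb₃.comp (contDiff_const.prodMk contDiff_id)
  have hderiva : ContDiff ℝ (⊤ : ℕ∞) (deriv a) := (contDiff_infty_iff_deriv.mp ha).2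
  have hderivb₀ : ContDiff ℝ (⊤ : ℕ∞) (deriv b₀) := (contDiff_infty_iff_deriv.mp hb₀).2
  -- Step A : first derivative in x
  have hφX' : ∀ x, φX x = ![1, deriv a x, 2 * b₀ x * deriv b₀ x] := by
    intro x
    rw [hφX]
    have hfun : (fun t => φ t 0) = fun t => ![t, a t, b₀ t ^ 2] := by
      funext t; rw [hφ]; norm_num
    rw [hfun]
    have h : HasDerivAt (fun t : ℝ => ![t, a t, b₀ t ^ 2])
        ![1, deriv a x, 2 * b₀ x * deriv b₀ x] x := by
      rw [hasDerivAt_pi]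
      intro i
      fin_cases i
      · simp; exact hasDerivAt_id' x
      · simpa using (ha.differentiable smooth_one_le x).hasDerivAt
      · have h2 := ((hb₀.differentiable smooth_one_le x).hasDerivAt).pow 2
        have h3 : HasDerivAt (fun t : ℝ => b₀ t ^ 2) (2 * b₀ x * deriv b₀ x) x := by
          refine h2.congr_deriv ?_; push_cast; ring
        simpa using h3
    exact h.deriv
  -- smoothness of φ x in y
  have hφsm : ∀ x, ContDiff ℝ (⊤ : ℕ∞) (φ x) := by
    intro x
    have he : φ x = fun y => ![x, a x + y ^ 2 / 2,
        (b₀ x + b₁ x * y ^ 2 + b₂ x * y ^ 3 + b₃ x y * y ^ 4) ^ 2] := funext (hφ x)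
    rw [he]
    refine contDiff_pi.mpr ?_
    intro i
    fin_cases i
    · simpa using (contDiff_const : ContDiff ℝ (⊤ : ℕ∞) (fun _ : ℝ => x))
    · simp only [Matrix.cons_val_one, Matrix.head_cons]
      exact contDiff_const.add ((contDiff_id.pow 2).div_const 2)
    · simp only [Matrix.cons_val_two, Matrix.tail_cons, Matrix.head_cons]
      exact (((contDiff_const.add (contDiff_const.mul (contDiff_id.pow 2))).add
        (contDiff_const.mul (contDiff_id.pow 3))).add
        ((hb₃x x).mul (contDiff_id.pow 4))).pow 2
  -- the H functions for the third component
  set Hx : ℝ → ℝ → ℝ := fun x y => b₁ x ^ 2 + 2 * b₁ x * b₂ x * y + b₂ x ^ 2 * y ^ 2 +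
      2 * (b₀ x + b₁ x * y ^ 2 + b₂ x * y ^ 3) * b₃ x y + (b₃ x y) ^ 2 * y ^ 4 with hHxdef
  have hHxsm : ∀ x, ContDiff ℝ (⊤ : ℕ∞) (Hx x) := by
    intro x
    exact ((((contDiff_const.add (contDiff_const.mul contDiff_id)).add
      (contDiff_const.mul (contDiff_id.pow 2))).add
      ((contDiff_const.mul ((contDiff_const.add (contDiff_const.mul (contDiff_id.pow 2))).add
        (contDiff_const.mul (contDiff_id.pow 3)))).mul (hb₃x x))).add
      (((hb₃x x).pow 2).mul (contDiff_id.pow 4)))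
  have hcomp0 : ∀ x, (fun y => φ x y 0) =
      fun y : ℝ => x + 0 * y ^ 2 + 0 * y ^ 3 + y ^ 4 * (fun _ : ℝ => (0:ℝ)) y := by
    intro x; funext y; rw [hφ x y]; norm_num
  have hcomp1 : ∀ x, (fun y => φ x y 1) =
      fun y : ℝ => a x + (1/2) * y ^ 2 + 0 * y ^ 3 + y ^ 4 * (fun _ : ℝ => (0:ℝ)) y := by
    intro x; funext y; rw [hφ x y]; norm_num; ring
  have hcomp2 : ∀ x, (fun y => φ x y 2) =
      fun y : ℝ => b₀ x ^ 2 + (2 * b₀ x * b₁ x) * y ^ 2 + (2 * b₀ x * b₂ x) * y ^ 3 +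
        y ^ 4 * Hx x y := by
    intro x; funext y; rw [hφ x y]
    simp only [Matrix.cons_val_two, Matrix.tail_cons, Matrix.head_cons, hHxdef]
    ring
  -- Step B : y-derivatives
  have hYY : ∀ x, φYY x = ![0, 1, 4 * b₀ x * b₁ x] := by
    intro x
    have h0 : iteratedDeriv 2 (φ x) 0 0 = 0 := by
      rw [pi_apply 2 (φ x) (hφsm x) 0 0, hcomp0 x, (key x 0 0 _ contDiff_const).1]; norm_num
    have h1 : iteratedDeriv 2 (φ x) 0 1 = 1 := by
      rw [pi_apply 2 (φ x) (hφsm x) 0 1, hcomp1 x, (key (a x) (1/2) 0 _ contDiff_const).1]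
      norm_num
    have h2 : iteratedDeriv 2 (φ x) 0 2 = 4 * b₀ x * b₁ x := by
      rw [pi_apply 2 (φ x) (hφsm x) 0 2, hcomp2 x,
        (key (b₀ x ^ 2) (2 * b₀ x * b₁ x) (2 * b₀ x * b₂ x) _ (hHxsm x)).1]
      ring
    funext i
    rw [hφYY]
    fin_cases i
    · simpa using h0
    · simpa using h1
    · simpa using h2
  have hYYY : ∀ x, φYYY x = ![0, 0, 12 * b₀ x * b₂ x] := by
    intro x
    have h0 : iteratedDeriv 3 (φ x) 0 0 = 0 := by
      rw [pi_apply 3 (φ x) (hφsm x) 0 0, hcomp0 x, (key x 0 0 _ contDiff_const).2]; norm_num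
    have h1 : iteratedDeriv 3 (φ x) 0 1 = 0 := by
      rw [pi_apply 3 (φ x) (hφsm x) 0 1, hcomp1 x, (key (a x) (1/2) 0 _ contDiff_const).2]
      norm_num
    have h2 : iteratedDeriv 3 (φ x) 0 2 = 12 * b₀ x * b₂ x := by
      rw [pi_apply 3 (φ x) (hφsm x) 0 2, hcomp2 x,
        (key (b₀ x ^ 2) (2 * b₀ x * b₁ x) (2 * b₀ x * b₂ x) _ (hHxsm x)).2]
      ring
    funext i
    rw [hφYYY]
    fin_cases i
    · simpa using h0
    · simpa using h1
    · simpa using h2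
  -- Step C : the closed formula
  have part1 : ∀ x, κc x =
      12 * b₀ x * b₂ x * (1 + deriv a x ^ 2 + 4 * b₀ x ^ 2 * deriv b₀ x ^ 2) ^ ((3 : ℝ) / 4) /
        (1 + 16 * b₀ x ^ 2 * b₁ x ^ 2 +
          4 * b₀ x ^ 2 * (deriv b₀ x - 2 * b₁ x * deriv a x) ^ 2) ^ ((5 : ℝ) / 4) := by
    intro x
    rw [hκc, hφX' x, hYY x, hYYY x]
    have hdet : det3 ![1, deriv a x, 2 * b₀ x * deriv b₀ x] ![0, 1, 4 * b₀ x * b₁ x]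
        ![0, 0, 12 * b₀ x * b₂ x] = 12 * b₀ x * b₂ x := by
      simp [det3, Matrix.det_fin_three, Matrix.vecHead, Matrix.vecTail]
    have hnormX : norm3 ![1, deriv a x, 2 * b₀ x * deriv b₀ x] =
        Real.sqrt (1 + deriv a x ^ 2 + 4 * b₀ x ^ 2 * deriv b₀ x ^ 2) := by
      simp only [norm3, Matrix.cons_val_zero, Matrix.cons_val_one, Matrix.head_cons,
        Matrix.cons_val_two, Matrix.tail_cons]
      congr 1; ring
    have hnormC : norm3 (cross3 ![1, deriv a x, 2 * b₀ x * deriv b₀ x] ![0, 1, 4 * b₀ x * b₁ x]) =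
        Real.sqrt (1 + 16 * b₀ x ^ 2 * b₁ x ^ 2 +
          4 * b₀ x ^ 2 * (deriv b₀ x - 2 * b₁ x * deriv a x) ^ 2) := by
      simp only [norm3, cross3, Matrix.cons_val_zero, Matrix.cons_val_one, Matrix.head_cons,
        Matrix.cons_val_two, Matrix.tail_cons]
      congr 1; ring
    rw [hdet, hnormX, hnormC]
    have hA0 : (0:ℝ) ≤ 1 + deriv a x ^ 2 + 4 * b₀ x ^ 2 * deriv b₀ x ^ 2 := by positivity
    have hB0 : (0:ℝ) ≤ 1 + 16 * b₀ x ^ 2 * b₁ x ^ 2 +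
        4 * b₀ x ^ 2 * (deriv b₀ x - 2 * b₁ x * deriv a x) ^ 2 := by positivity
    rw [Real.sqrt_eq_rpow, Real.sqrt_eq_rpow, ← Real.rpow_mul hA0, ← Real.rpow_mul hB0]
    norm_num
    ring
  refine ⟨part1, ?_, ?_⟩
  · rw [part1 0, hb₀0]; norm_num
  · have hA0v : (1 : ℝ) + deriv a 0 ^ 2 + 4 * b₀ 0 ^ 2 * deriv b₀ 0 ^ 2 = 1 := by
      rw [ha0', hb₀0]; norm_num
    have hB0v : (1 : ℝ) + 16 * b₀ 0 ^ 2 * b₁ 0 ^ 2 +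
        4 * b₀ 0 ^ 2 * (deriv b₀ 0 - 2 * b₁ 0 * deriv a 0) ^ 2 = 1 := by
      rw [hb₀0]; norm_num
    have hκeq : κc = fun x =>
        12 * b₀ x * b₂ x * (1 + deriv a x ^ 2 + 4 * b₀ x ^ 2 * deriv b₀ x ^ 2) ^ ((3 : ℝ) / 4) /
          (1 + 16 * b₀ x ^ 2 * b₁ x ^ 2 +
            4 * b₀ x ^ 2 * (deriv b₀ x - 2 * b₁ x * deriv a x) ^ 2) ^ ((5 : ℝ) / 4) :=
      funext part1
    have hAsm : ContDiff ℝ (⊤ : ℕ∞)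
        (fun x => 1 + deriv a x ^ 2 + 4 * b₀ x ^ 2 * deriv b₀ x ^ 2) :=
      (contDiff_const.add (hderiva.pow 2)).add
        ((contDiff_const.mul (hb₀.pow 2)).mul (hderivb₀.pow 2))
    have hBsm : ContDiff ℝ (⊤ : ℕ∞) (fun x => 1 + 16 * b₀ x ^ 2 * b₁ x ^ 2 +
        4 * b₀ x ^ 2 * (deriv b₀ x - 2 * b₁ x * deriv a x) ^ 2) :=
      (contDiff_const.add ((contDiff_const.mul (hb₀.pow 2)).mul (hb₁.pow 2))).add
        ((contDiff_const.mul (hb₀.pow 2)).mul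
          ((hderivb₀.sub ((contDiff_const.mul hb₁).mul hderiva)).pow 2))
    have hA : HasDerivAt (fun x => 1 + deriv a x ^ 2 + 4 * b₀ x ^ 2 * deriv b₀ x ^ 2)
        (deriv (fun x => 1 + deriv a x ^ 2 + 4 * b₀ x ^ 2 * deriv b₀ x ^ 2) 0) 0 :=
      (hAsm.differentiable smooth_one_le 0).hasDerivAt
    have hB : HasDerivAt (fun x => 1 + 16 * b₀ x ^ 2 * b₁ x ^ 2 +
          4 * b₀ x ^ 2 * (deriv b₀ x - 2 * b₁ x * deriv a x) ^ 2)
        (deriv (fun x => 1 + 16 * b₀ x ^ 2 * b₁ x ^ 2 +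
          4 * b₀ x ^ 2 * (deriv b₀ x - 2 * b₁ x * deriv a x) ^ 2) 0) 0 :=
      (hBsm.differentiable smooth_one_le 0).hasDerivAt
    have hu : HasDerivAt (fun x => 12 * b₀ x * b₂ x)
        (12 * deriv b₀ 0 * b₂ 0 + 12 * b₀ 0 * deriv b₂ 0) 0 := by
      have h := (((hb₀.differentiable smooth_one_le 0).hasDerivAt).const_mul 12).mul
        ((hb₂.differentiable smooth_one_le 0).hasDerivAt)
      have h2 : HasDerivAt (fun x => 12 * b₀ x * b₂ x)
          (12 * deriv b₀ 0 * b₂ 0 + 12 * b₀ 0 * deriv b₂ 0) 0 := by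
        exact h
      exact h2
    have hv := hA.rpow_const (p := (3 : ℝ) / 4) (Or.inl (by rw [hA0v]; norm_num))
    have hw := hB.rpow_const (p := (5 : ℝ) / 4) (Or.inl (by rw [hB0v]; norm_num))
    have hwne : ((1 : ℝ) + 16 * b₀ 0 ^ 2 * b₁ 0 ^ 2 +
        4 * b₀ 0 ^ 2 * (deriv b₀ 0 - 2 * b₁ 0 * deriv a 0) ^ 2) ^ ((5 : ℝ) / 4) ≠ 0 := by
      rw [hB0v, Real.one_rpow]; norm_num
    have hf := (hu.mul hv).div hw hwne
    rw [hκeq, HasDerivAt.deriv (f := fun x =>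
        12 * b₀ x * b₂ x * (1 + deriv a x ^ 2 + 4 * b₀ x ^ 2 * deriv b₀ x ^ 2) ^ ((3 : ℝ) / 4) /
          (1 + 16 * b₀ x ^ 2 * b₁ x ^ 2 +
            4 * b₀ x ^ 2 * (deriv b₀ x - 2 * b₁ x * deriv a x) ^ 2) ^ ((5 : ℝ) / 4)) hf, hA0v, hB0v, hb₀0, Real.one_rpow, Real.one_rpow]
    norm_num
    rw [hb₀0]; ring
end

section
/- The bias invariant of the folded cuspidal edge φ at the origin, defined by B := ‖φ_x‖²·det(φ_x, φ_yy, φ_yyyy)/‖φ_x × φ_yy‖³ with all partial derivatives evaluated at (0,0), equals 24·b₁(0)². -/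
open Real Set

lemma iteratedDeriv_const' (n : ℕ) (c x : ℝ) :
    iteratedDeriv n (fun _ : ℝ => c) x = if n = 0 then c else 0 := by
  induction n generalizing c with
  | zero => simp
  | succ k ih =>
    rw [iteratedDeriv_succ']
    have : deriv (fun _ : ℝ => c) = fun _ : ℝ => (0 : ℝ) := by
      funext y; simp
    rw [this, ih 0]
    simp

lemma polyA : ∀ (k : ℕ) (F : ℝ → ℝ), ContDiff ℝ (⊤ : ℕ∞) F → ∀ n : ℕ,
    iteratedDeriv k (fun y => y ^ (k + n) * F y) 0
      = if n = 0 then (Nat.factorial k : ℝ) * F 0 else 0 := by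
  intro k
  induction k with
  | zero =>
    intro F hF n
    rcases n with _ | n <;> simp
  | succ k ih =>
    intro F hF n
    have hF' : ContDiff ℝ (⊤ : ℕ∞) (deriv F) := (contDiff_infty_iff_deriv.mp hF).2
    set G : ℝ → ℝ := fun y => ((k : ℝ) + 1 + n) * F y + y * deriv F y with hG
    have hGc : ContDiff ℝ (⊤ : ℕ∞) G :=
      (contDiff_const.mul hF).add (contDiff_id.mul hF')
    have hde : deriv (fun y : ℝ => y ^ (k + 1 + n) * F y)
        = fun y : ℝ => y ^ (k + n) * G y := by
      funext y
      have h1 : HasDerivAt (fun y : ℝ => y ^ (k + 1 + n) * F y)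
          ((↑(k + 1 + n)) * y ^ (k + 1 + n - 1) * F y + y ^ (k + 1 + n) * deriv F y) y :=
        (hasDerivAt_pow _ y).mul (hF.differentiable (by simp) y).hasDerivAt
      rw [h1.deriv, hG]
      have h2 : k + 1 + n - 1 = k + n := by omega
      have h3 : k + 1 + n = (k + n) + 1 := by omega
      rw [h2, h3, pow_succ]
      push_cast
      ring
    rw [iteratedDeriv_succ', hde, ih G hGc n]
    rcases n with _ | n
    · simp only [if_pos rfl, hG, Nat.factorial_succ]
      push_cast
      ring
    · simp

lemma proj_iteratedDeriv {f : ℝ → Fin 3 → ℝ} (hf : ContDiff ℝ (⊤ : ℕ∞) f)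
    (n : ℕ) (x : ℝ) (i : Fin 3) :
    iteratedDeriv n f x i = iteratedDeriv n (fun y => f y i) x := by
  have h := (ContinuousLinearMap.proj (R := ℝ) (φ := fun _ : Fin 3 => ℝ) i).iteratedFDeriv_comp_left
    (hf.contDiffAt (x := x)) (i := n) (by exact_mod_cast le_top (a := (n : ℕ∞)))
  rw [iteratedDeriv_eq_iteratedFDeriv, iteratedDeriv_eq_iteratedFDeriv]
  have h2 : (fun y => f y i)
      = (ContinuousLinearMap.proj (R := ℝ) (φ := fun _ : Fin 3 => ℝ) i) ∘ f := rfl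
  rw [h2, h]
  rfl

/-- The bias invariant of the folded cuspidal edge at the origin,
`B = ‖φ_x‖² det(φ_x, φ_yy, φ_yyyy)/‖φ_x × φ_yy‖³` (all partials at `(0,0)`),
equals `24 b₁(0)²`. -/
theorem stmt4 (a b₀ b₁ b₂ : ℝ → ℝ) (b₃ : ℝ → ℝ → ℝ)
    (ha : ContDiff ℝ (⊤ : ℕ∞) a) (hb₀ : ContDiff ℝ (⊤ : ℕ∞) b₀)
    (hb₁ : ContDiff ℝ (⊤ : ℕ∞) b₁) (hb₂ : ContDiff ℝ (⊤ : ℕ∞) b₂)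
    (hb₃ : ContDiff ℝ (⊤ : ℕ∞) (Function.uncurry b₃))
    (ha0 : a 0 = 0) (ha0' : deriv a 0 = 0) (hb₀0 : b₀ 0 = 0)
    (φ : ℝ → ℝ → Fin 3 → ℝ)
    (hφ : ∀ x y, φ x y =
      ![x, a x + y ^ 2 / 2,
        (b₀ x + b₁ x * y ^ 2 + b₂ x * y ^ 3 + b₃ x y * y ^ 4) ^ 2])
    (φX φYY φYYYY : Fin 3 → ℝ)
    (hφX : φX = deriv (fun t => φ t 0) 0)
    (hφYY : φYY = iteratedDeriv 2 (φ 0) 0)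
    (hφYYYY : φYYYY = iteratedDeriv 4 (φ 0) 0) :
    norm3 φX ^ 2 * det3 φX φYY φYYYY / norm3 (cross3 φX φYY) ^ 3 = 24 * b₁ 0 ^ 2 := by
  -- smoothness of y ↦ b₃ 0 y
  have hg : ContDiff ℝ (⊤ : ℕ∞) (fun y : ℝ => b₃ 0 y) :=
    hb₃.comp (contDiff_const.prodMk contDiff_id)
  have hg' : ContDiff ℝ (⊤ : ℕ∞) (fun t : ℝ => b₃ t 0) :=
    hb₃.comp (contDiff_id.prodMk contDiff_const)
  -- φX computation
  have hX : φX = ![1, 0, 0] := by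
    rw [hφX]
    have hfun : (fun t : ℝ => φ t 0)
        = fun t : ℝ => ![t, a t + 0 ^ 2 / 2,
            (b₀ t + b₁ t * 0 ^ 2 + b₂ t * 0 ^ 3 + b₃ t 0 * 0 ^ 4) ^ 2] := by
      funext t; exact hφ t 0
    rw [hfun]
    have hB : HasDerivAt (fun t : ℝ => b₀ t + b₁ t * 0 ^ 2 + b₂ t * 0 ^ 3 + b₃ t 0 * 0 ^ 4)
        (deriv b₀ 0 + deriv b₁ 0 * 0 ^ 2 + deriv b₂ 0 * 0 ^ 3
          + deriv (fun t : ℝ => b₃ t 0) 0 * 0 ^ 4) 0 := by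
      exact ((((hb₀.differentiable (by simp) 0).hasDerivAt.add
        (((hb₁.differentiable (by simp) 0).hasDerivAt).mul_const _)).add
        (((hb₂.differentiable (by simp) 0).hasDerivAt).mul_const _)).add
        (((hg'.differentiable (by simp) 0).hasDerivAt).mul_const _))
    have hD : HasDerivAt (fun t : ℝ => ![t, a t + 0 ^ 2 / 2,
        (b₀ t + b₁ t * 0 ^ 2 + b₂ t * 0 ^ 3 + b₃ t 0 * 0 ^ 4) ^ 2]) ![1, 0, 0] 0 := by
      rw [hasDerivAt_pi]
      intro i
      fin_cases i
      · simpa using (hasDerivAt_id' (0 : ℝ))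
      · have := ((ha.differentiable (by simp) 0).hasDerivAt).add_const ((0 : ℝ) ^ 2 / 2)
        rw [ha0'] at this
        simpa using this
      · have h2 := hB.pow 2
        simp only [hb₀0] at h2
        norm_num at h2
        simpa [Pi.pow_def] using h2
    exact hD.deriv
  -- the y-direction function
  have hφ0 : φ 0 = fun y : ℝ => ![(0 : ℝ), a 0 + y ^ 2 / 2,
      (b₀ 0 + b₁ 0 * y ^ 2 + b₂ 0 * y ^ 3 + b₃ 0 y * y ^ 4) ^ 2] := by
    funext y; exact hφ 0 y
  have hsm : ContDiff ℝ (⊤ : ℕ∞) (φ 0) := by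
    rw [hφ0]
    apply contDiff_pi.2
    intro i
    fin_cases i
    · simpa using (contDiff_const : ContDiff ℝ (⊤ : ℕ∞) (fun _ : ℝ => (0 : ℝ)))
    · simpa using (contDiff_const.add ((contDiff_id.pow 2).div_const 2) :
        ContDiff ℝ (⊤ : ℕ∞) (fun y : ℝ => a 0 + y ^ 2 / 2))
    · simpa using ((((contDiff_const.add (contDiff_const.mul (contDiff_id.pow 2))).add
        (contDiff_const.mul (contDiff_id.pow 3))).add
        (hg.mul (contDiff_id.pow 4))).pow 2 :
        ContDiff ℝ (⊤ : ℕ∞)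
          (fun y : ℝ => (b₀ 0 + b₁ 0 * y ^ 2 + b₂ 0 * y ^ 3 + b₃ 0 y * y ^ 4) ^ 2))
  -- component functions
  have hc0 : (fun y : ℝ => φ 0 y 0) = fun _ : ℝ => (0 : ℝ) := by
    funext y; rw [hφ0]; simp
  have hc1 : (fun y : ℝ => φ 0 y 1) = fun y : ℝ => a 0 + y ^ 2 / 2 := by
    funext y; rw [hφ0]; simp
  -- F₂ and component 2
  set F₂ : ℝ → ℝ := fun y => (b₁ 0 + b₂ 0 * y + b₃ 0 y * y ^ 2) ^ 2 with hF₂def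
  have hF₂c : ContDiff ℝ (⊤ : ℕ∞) F₂ :=
    ((contDiff_const.add (contDiff_const.mul contDiff_id)).add
      (hg.mul (contDiff_id.pow 2))).pow 2
  have hc2 : ∀ m : ℕ, m = 4 → (fun y : ℝ => φ 0 y 2) = fun y : ℝ => y ^ m * F₂ y := by
    intro m hm
    funext y; rw [hφ0, hm]
    simp only [Matrix.cons_val_two, Matrix.tail_cons, Matrix.head_cons, hF₂def]
    rw [hb₀0]
    ring
  -- derivative chain for a 0 + y^2/2
  have hd1 : deriv (fun y : ℝ => a 0 + y ^ 2 / 2) = fun y : ℝ => y := by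
    funext y
    have : HasDerivAt (fun y : ℝ => a 0 + y ^ 2 / 2) (y : ℝ) y := by
      have := ((hasDerivAt_pow 2 y).div_const 2).const_add (a 0)
      norm_num at this
      simpa using this
    exact this.deriv
  have hd2 : deriv (fun y : ℝ => y) = fun _ : ℝ => (1 : ℝ) := by
    funext y; simp
  have hq2 : iteratedDeriv 2 (fun y : ℝ => a 0 + y ^ 2 / 2) 0 = 1 := by
    have e1 : iteratedDeriv 2 (fun y : ℝ => a 0 + y ^ 2 / 2)
        = iteratedDeriv 1 (deriv (fun y : ℝ => a 0 + y ^ 2 / 2)) := iteratedDeriv_succ'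
    rw [e1, hd1, iteratedDeriv_one, hd2]
  have hq4 : iteratedDeriv 4 (fun y : ℝ => a 0 + y ^ 2 / 2) 0 = 0 := by
    have e1 : iteratedDeriv 4 (fun y : ℝ => a 0 + y ^ 2 / 2)
        = iteratedDeriv 3 (deriv (fun y : ℝ => a 0 + y ^ 2 / 2)) := iteratedDeriv_succ'
    have e2 : iteratedDeriv 3 (fun y : ℝ => y)
        = iteratedDeriv 2 (deriv (fun y : ℝ => y)) := iteratedDeriv_succ'
    rw [e1, hd1, e2, hd2, iteratedDeriv_const']
    norm_num
  -- φYY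
  have hYY : φYY = ![0, 1, 0] := by
    rw [hφYY]
    have e0 : iteratedDeriv 2 (φ 0) 0 0 = 0 := by
      rw [proj_iteratedDeriv hsm, hc0, iteratedDeriv_const']; norm_num
    have e1 : iteratedDeriv 2 (φ 0) 0 1 = 1 := by
      rw [proj_iteratedDeriv hsm, hc1]; exact hq2
    have e2 : iteratedDeriv 2 (φ 0) 0 2 = 0 := by
      rw [proj_iteratedDeriv hsm, hc2 (2 + 2) rfl, polyA 2 F₂ hF₂c 2]; norm_num
    funext i
    fin_cases i
    · simpa using e0
    · simpa using e1
    · simpa using e2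
  -- φYYYY
  have hYYYY : φYYYY = ![0, 0, 24 * b₁ 0 ^ 2] := by
    rw [hφYYYY]
    have e0 : iteratedDeriv 4 (φ 0) 0 0 = 0 := by
      rw [proj_iteratedDeriv hsm, hc0, iteratedDeriv_const']; norm_num
    have e1 : iteratedDeriv 4 (φ 0) 0 1 = 0 := by
      rw [proj_iteratedDeriv hsm, hc1]; exact hq4
    have e2 : iteratedDeriv 4 (φ 0) 0 2 = 24 * b₁ 0 ^ 2 := by
      rw [proj_iteratedDeriv hsm, hc2 (4 + 0) rfl, polyA 4 F₂ hF₂c 0]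
      simp [hF₂def, Nat.factorial]
    funext i
    fin_cases i
    · simpa using e0
    · simpa using e1
    · simpa using e2
  rw [hX, hYY, hYYYY]
  have hn1 : norm3 ![1, 0, 0] = 1 := by
    simp [norm3]
  have hcr : cross3 ![(1:ℝ), 0, 0] ![(0:ℝ), 1, 0] = ![0, 0, 1] := by
    simp [cross3]
  have hn2 : norm3 ![(0:ℝ), 0, 1] = 1 := by
    simp [norm3]
  rw [hcr, hn1, hn2]
  simp [det3, Matrix.det_fin_three]
end

section
/- For the folded cuspidal edge φ one has φ_yyy(0,0) = (0,0,0), and the secondary cuspidal curvature κ_c^r := ‖φ_x‖^{5/2}·det(φ_x, φ_yy, 3·φ_yyyyy)/‖φ_x × φ_yy‖^{7/2}, with all partial derivatives evaluated at (0,0), equals 720·b₁(0)·b₂(0). -/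
open Real Set

private lemma iterZero' (n : ℕ) : iteratedDeriv n (fun _ : ℝ => (0:ℝ)) = fun _ => 0 := by
  induction n with
  | zero => simp [iteratedDeriv_zero]
  | succ n ih => rw [iteratedDeriv_succ', deriv_const']; exact ih

private lemma mono' : ∀ (k m : ℕ), k ≤ m → ∀ c : ℝ,
    iteratedDeriv k (fun y : ℝ => c * y ^ m) =
      fun y => (c * (m.descFactorial k : ℝ)) * y ^ (m - k) := by
  intro k
  induction k with
  | zero => intro m _ c; funext y; simp
  | succ k ih =>
    intro m hk c
    rw [iteratedDeriv_succ, ih m (Nat.le_of_succ_le hk) c]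
    funext y
    have h := ((hasDerivAt_pow (m - k) y).const_mul (c * (m.descFactorial k : ℝ))).deriv
    rw [h]
    have hklt : k < m := hk
    have h1 : m - k - 1 = m - (k + 1) := by omega
    have h2 : ((m.descFactorial (k+1) : ℕ) : ℝ) = (m - k : ℕ) * (m.descFactorial k : ℝ) := by
      rw [Nat.descFactorial_succ]; push_cast; ring
    rw [h1, h2]; ring

private lemma remnder' : ∀ (k m : ℕ) (g : ℝ → ℝ), ContDiff ℝ (⊤:ℕ∞) g → k < m →
    iteratedDeriv k (fun y => y ^ m * g y) 0 = 0 := by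
  intro k
  induction k with
  | zero =>
    intro m g _ hm
    simp only [iteratedDeriv_zero]
    rw [zero_pow (by omega), zero_mul]
  | succ k ih =>
    intro m g hg hm
    obtain ⟨n, rfl⟩ : ∃ n, m = n + 1 := ⟨m - 1, by omega⟩
    rw [iteratedDeriv_succ']
    have hg' : ContDiff ℝ (⊤:ℕ∞) (deriv g) := (contDiff_infty_iff_deriv.mp hg).2
    have hd : (deriv fun y : ℝ => y ^ (n+1) * g y) =
        fun y => y ^ n * (((n:ℝ)+1) * g y + y * deriv g y) := by
      funext y
      have h1 : HasDerivAt (fun y : ℝ => y ^ (n+1) * g y)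
          ((((n+1:ℕ)) * y ^ n) * g y + y ^ (n+1) * deriv g y) y :=
        (hasDerivAt_pow (n+1) y).mul ((hg.differentiable (by simp) y).hasDerivAt)
      rw [h1.deriv]; push_cast; ring
    rw [hd]
    exact ih n _ ((contDiff_const.mul hg).add (contDiff_id.mul hg')) (by omega)

private lemma pi3' {f₁ f₂ f₃ : ℝ → ℝ} (h₁ : ContDiff ℝ (⊤:ℕ∞) f₁) (h₂ : ContDiff ℝ (⊤:ℕ∞) f₂)
    (h₃ : ContDiff ℝ (⊤:ℕ∞) f₃) (n : ℕ) :
    iteratedDeriv n (fun y => (![f₁ y, f₂ y, f₃ y] : Fin 3 → ℝ)) =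
      fun y => ![iteratedDeriv n f₁ y, iteratedDeriv n f₂ y, iteratedDeriv n f₃ y] := by
  induction n with
  | zero => simp [iteratedDeriv_zero]
  | succ n ih =>
    have d₁ := (h₁.differentiable_iteratedDeriv n (by exact_mod_cast WithTop.coe_lt_top n))
    have d₂ := (h₂.differentiable_iteratedDeriv n (by exact_mod_cast WithTop.coe_lt_top n))
    have d₃ := (h₃.differentiable_iteratedDeriv n (by exact_mod_cast WithTop.coe_lt_top n))
    rw [iteratedDeriv_succ, ih]
    funext y
    rw [deriv_pi]
    · funext i
      fin_cases i <;> simp [iteratedDeriv_succ]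
    · intro i
      fin_cases i <;> simp <;> [exact (d₁ y); exact (d₂ y); exact (d₃ y)]

/-- For the folded cuspidal edge one has `φ_yyy(0,0) = 0`, and the
secondary cuspidal curvature
`κ_c^r = ‖φ_x‖^{5/2} det(φ_x, φ_yy, 3 φ_yyyyy)/‖φ_x × φ_yy‖^{7/2}` (all partials at
`(0,0)`) equals `720 b₁(0) b₂(0)`. -/
theorem stmt5 (a b₀ b₁ b₂ : ℝ → ℝ) (b₃ : ℝ → ℝ → ℝ)
    (ha : ContDiff ℝ (⊤ : ℕ∞) a) (hb₀ : ContDiff ℝ (⊤ : ℕ∞) b₀)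
    (hb₁ : ContDiff ℝ (⊤ : ℕ∞) b₁) (hb₂ : ContDiff ℝ (⊤ : ℕ∞) b₂)
    (hb₃ : ContDiff ℝ (⊤ : ℕ∞) (Function.uncurry b₃))
    (ha0 : a 0 = 0) (ha0' : deriv a 0 = 0) (hb₀0 : b₀ 0 = 0)
    (φ : ℝ → ℝ → Fin 3 → ℝ)
    (hφ : ∀ x y, φ x y =
      ![x, a x + y ^ 2 / 2,
        (b₀ x + b₁ x * y ^ 2 + b₂ x * y ^ 3 + b₃ x y * y ^ 4) ^ 2])
    (φX φYY φYYYYY : Fin 3 → ℝ)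
    (hφX : φX = deriv (fun t => φ t 0) 0)
    (hφYY : φYY = iteratedDeriv 2 (φ 0) 0)
    (hφYYYYY : φYYYYY = iteratedDeriv 5 (φ 0) 0) :
    iteratedDeriv 3 (φ 0) 0 = 0 ∧
      norm3 φX ^ ((5 : ℝ) / 2) * det3 φX φYY ((3 : ℝ) • φYYYYY) /
        norm3 (cross3 φX φYY) ^ ((7 : ℝ) / 2) = 720 * b₁ 0 * b₂ 0 := by
  -- abbreviations
  set A := b₁ 0 with hA
  set B := b₂ 0 with hB
  have hc : ContDiff ℝ (⊤:ℕ∞) (fun y => b₃ 0 y) :=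
    hb₃.comp (contDiff_const.prodMk contDiff_id)
  -- the three component functions of φ 0
  set g : ℝ → ℝ := fun y => B^2 + 2*A*(b₃ 0 y) + 2*B*(b₃ 0 y)*y + (b₃ 0 y)^2*y^2 with hgdef
  have hg : ContDiff ℝ (⊤:ℕ∞) g := by
    refine ((contDiff_const.add (contDiff_const.mul hc)).add
      ((contDiff_const.mul hc).mul contDiff_id)).add ((hc.pow 2).mul (contDiff_id.pow 2))
  set f₂ : ℝ → ℝ := fun y => (1/2 : ℝ) * y ^ 2 with hf₂def
  set f₃ : ℝ → ℝ := fun y => A^2 * y^4 + (2*A*B) * y^5 + y^6 * g y with hf₃def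
  have hφ0 : φ 0 = fun y => ![(0:ℝ), f₂ y, f₃ y] := by
    funext y i
    rw [hφ]
    fin_cases i <;> simp [ha0, hb₀0, hf₂def, hf₃def, hgdef, hA, hB] <;> ring
  have hcd₁ : ContDiff ℝ (⊤:ℕ∞) (fun _ : ℝ => (0:ℝ)) := contDiff_const
  have hcd₂ : ContDiff ℝ (⊤:ℕ∞) f₂ := contDiff_const.mul (contDiff_id.pow 2)
  have hcd₃ : ContDiff ℝ (⊤:ℕ∞) f₃ :=
    ((contDiff_const.mul (contDiff_id.pow 4)).add
      (contDiff_const.mul (contDiff_id.pow 5))).add ((contDiff_id.pow 6).mul hg)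
  -- iterated derivatives of f₂
  have if₂ : ∀ k, k ≤ 2 → iteratedDeriv k f₂ =
      fun y => ((1/2 : ℝ) * ((2:ℕ).descFactorial k : ℝ)) * y ^ (2 - k) :=
    fun k hk => mono' k 2 hk (1/2)
  have if₂2 : iteratedDeriv 2 f₂ = fun _ => 1 := by
    rw [if₂ 2 le_rfl]; funext y; norm_num
  have if₂3 : iteratedDeriv 3 f₂ = fun _ => 0 := by
    show iteratedDeriv (2+1) f₂ = _
    rw [iteratedDeriv_succ, if₂2, deriv_const']
  have if₂4 : iteratedDeriv 4 f₂ = fun _ => 0 := by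
    show iteratedDeriv (3+1) f₂ = _
    rw [iteratedDeriv_succ, if₂3, deriv_const']
  have if₂5 : iteratedDeriv 5 f₂ = fun _ => 0 := by
    show iteratedDeriv (4+1) f₂ = _
    rw [iteratedDeriv_succ, if₂4, deriv_const']
  -- iterated derivatives of f₃ at 0, via splitting into three pieces
  have hsplit : ∀ k : ℕ, iteratedDeriv k f₃ 0 =
      iteratedDeriv k (fun y : ℝ => A^2 * y^4) 0 +
      iteratedDeriv k (fun y : ℝ => (2*A*B) * y^5) 0 +
      iteratedDeriv k (fun y : ℝ => y^6 * g y) 0 := by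
    intro k
    have e1 : ContDiff ℝ (⊤:ℕ∞) (fun y : ℝ => A^2 * y^4) := contDiff_const.mul (contDiff_id.pow 4)
    have e2 : ContDiff ℝ (⊤:ℕ∞) (fun y : ℝ => (2*A*B) * y^5) :=
      contDiff_const.mul (contDiff_id.pow 5)
    have e3 : ContDiff ℝ (⊤:ℕ∞) (fun y : ℝ => y^6 * g y) := (contDiff_id.pow 6).mul hg
    have add1 : iteratedDeriv k
        (fun y : ℝ => (A^2 * y^4 + (2*A*B) * y^5) + y^6 * g y) 0 =
        iteratedDeriv k (fun y : ℝ => A^2 * y^4 + (2*A*B) * y^5) 0 +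
        iteratedDeriv k (fun y : ℝ => y^6 * g y) 0 := by
      simp only [← iteratedDerivWithin_univ]
      exact iteratedDerivWithin_add (mem_univ 0) uniqueDiffOn_univ
        ((e1.add e2).of_le (by exact_mod_cast (le_top : (k:ℕ∞) ≤ ⊤))).contDiffWithinAt (e3.of_le (by exact_mod_cast (le_top : (k:ℕ∞) ≤ ⊤))).contDiffWithinAt
    have add2 : iteratedDeriv k (fun y : ℝ => A^2 * y^4 + (2*A*B) * y^5) 0 =
        iteratedDeriv k (fun y : ℝ => A^2 * y^4) 0 +
        iteratedDeriv k (fun y : ℝ => (2*A*B) * y^5) 0 := by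
      simp only [← iteratedDerivWithin_univ]
      exact iteratedDerivWithin_add (mem_univ 0) uniqueDiffOn_univ
        (e1.of_le (by exact_mod_cast (le_top : (k:ℕ∞) ≤ ⊤))).contDiffWithinAt (e2.of_le (by exact_mod_cast (le_top : (k:ℕ∞) ≤ ⊤))).contDiffWithinAt
    have : f₃ = fun y : ℝ => (A^2 * y^4 + (2*A*B) * y^5) + y^6 * g y := by
      funext y; rw [hf₃def]
    rw [this, add1, add2]
  have if₃3 : iteratedDeriv 3 f₃ 0 = 0 := by
    rw [hsplit 3, mono' 3 4 (by norm_num) (A^2), mono' 3 5 (by norm_num) (2*A*B),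
      remnder' 3 6 g hg (by norm_num)]
    norm_num
  have if₃5 : iteratedDeriv 5 f₃ 0 = 240 * A * B := by
    have h4 : iteratedDeriv 5 (fun y : ℝ => A^2 * y^4) 0 = 0 := by
      have : iteratedDeriv (4+1) (fun y : ℝ => A^2 * y^4) 0 = 0 := by
        rw [iteratedDeriv_succ, mono' 4 4 le_rfl (A^2)]
        have : (fun y : ℝ => A ^ 2 * ((4:ℕ).descFactorial 4 : ℝ) * y ^ (4-4)) =
            fun _ : ℝ => A ^ 2 * ((4:ℕ).descFactorial 4 : ℝ) := by
          funext y; norm_num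
        rw [this, deriv_const']
      exact this
    rw [hsplit 5, h4, mono' 5 5 le_rfl (2*A*B), remnder' 5 6 g hg (by norm_num)]
    norm_num [Nat.descFactorial]
    ring
  -- componentwise iterated derivatives of φ 0
  have if₃2 : iteratedDeriv 2 f₃ 0 = 0 := by
    rw [hsplit 2, mono' 2 4 (by norm_num) (A^2), mono' 2 5 (by norm_num) (2*A*B),
      remnder' 2 6 g hg (by norm_num)]
    norm_num
  have hiter : ∀ n, iteratedDeriv n (φ 0) 0 =
      ![iteratedDeriv n (fun _ : ℝ => (0:ℝ)) 0, iteratedDeriv n f₂ 0, iteratedDeriv n f₃ 0] := by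
    intro n
    rw [hφ0, pi3' hcd₁ hcd₂ hcd₃ n]
  have goal1 : iteratedDeriv 3 (φ 0) 0 = 0 := by
    funext i
    rw [hiter 3]
    fin_cases i <;> simp [iterZero' 3, if₂3, if₃3]
  refine ⟨goal1, ?_⟩
  -- φYY and φYYYYY
  have hYY : φYY = ![0, 1, 0] := by
    rw [hφYY, hiter 2, iterZero' 2, if₂2, if₃2]
  have hY5 : φYYYYY = ![0, 0, 240 * A * B] := by
    rw [hφYYYYY, hiter 5, iterZero' 5, if₂5, if₃5]
  -- φX
  have hφx0 : (fun t => φ t 0) = fun t => ![t, a t, (b₀ t)^2] := by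
    funext t i
    rw [hφ]
    fin_cases i <;> norm_num
  have hX : φX = ![1, 0, 0] := by
    rw [hφX, hφx0]
    have hD : HasDerivAt (fun t : ℝ => (![t, a t, (b₀ t)^2] : Fin 3 → ℝ)) ![1, 0, 0] 0 := by
      rw [hasDerivAt_pi]
      intro i
      fin_cases i
      · simp; exact hasDerivAt_id' 0
      · simpa [ha0'] using ((ha.differentiable (by simp) 0).hasDerivAt)
      · have hb : HasDerivAt (fun t => (b₀ t)^2) (2 * b₀ 0 ^ 1 * deriv b₀ 0) 0 :=
          (hasDerivAt_pow 2 (b₀ 0)).comp 0 ((hb₀.differentiable (by simp) 0).hasDerivAt)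
        simpa [hb₀0] using hb
    exact hD.deriv
  rw [hX, hYY, hY5]
  have hnorm1 : norm3 ![1, 0, 0] = 1 := by
    simp [norm3]
  have hcross : cross3 ![(1:ℝ), 0, 0] ![0, 1, 0] = ![0, 0, 1] := by
    funext i; fin_cases i <;> simp [cross3]
  have hnorm2 : norm3 (cross3 ![(1:ℝ), 0, 0] ![0, 1, 0]) = 1 := by
    rw [hcross]; simp [norm3]
  have hsmul : (3:ℝ) • (![0, 0, 240 * A * B] : Fin 3 → ℝ) = ![0, 0, 720 * A * B] := by
    funext i; fin_cases i <;> simp <;> ring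
  rw [hnorm1, hnorm2, hsmul, Real.one_rpow, Real.one_rpow]
  simp [det3, Matrix.det_fin_three]
end

section
/- Let Σ(x) = (x, a(x), b₀(x)²) be the image of the singular curve of the folded cuspidal edge φ, and define its curvature κ_Σ(x) = ‖Σ'(x) × Σ''(x)‖/‖Σ'(x)‖³ and (where Σ'(x) × Σ''(x) ≠ 0) its torsion τ_Σ(x) = det(Σ'(x), Σ''(x), Σ'''(x))/‖Σ'(x) × Σ''(x)‖². Then κ_Σ(0) = √(a''(0)² + 4b₀'(0)⁴), and if a''(0)² + 4b₀'(0)⁴ ≠ 0 then τ_Σ(0) = 2b₀'(0)(3a''(0)b₀''(0) − a'''(0)b₀'(0))/(a''(0)² + 4b₀'(0)⁴). -/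
open Real Set

/-- For the cuspidal edge curve `Σ(x) = (x, a(x), b₀(x)²)` (here `Sgm`)
of the folded cuspidal edge, with curvature `κ_Σ = ‖Σ' × Σ''‖/‖Σ'‖³` and torsion
`τ_Σ = det(Σ', Σ'', Σ''')/‖Σ' × Σ''‖²`, one has `κ_Σ(0) = √(a''(0)² + 4b₀'(0)⁴)`,
and if `a''(0)² + 4b₀'(0)⁴ ≠ 0` then
`τ_Σ(0) = 2b₀'(0)(3a''(0)b₀''(0) − a'''(0)b₀'(0))/(a''(0)² + 4b₀'(0)⁴)`. -/
theorem stmt6 (a b₀ : ℝ → ℝ)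
    (ha : ContDiff ℝ (⊤ : ℕ∞) a) (hb₀ : ContDiff ℝ (⊤ : ℕ∞) b₀)
    (ha0 : a 0 = 0) (ha0' : deriv a 0 = 0) (hb₀0 : b₀ 0 = 0)
    (Sgm : ℝ → Fin 3 → ℝ) (hSgm : ∀ x, Sgm x = ![x, a x, b₀ x ^ 2])
    (κS τS : ℝ → ℝ)
    (hκS : ∀ x, κS x =
      norm3 (cross3 (deriv Sgm x) (iteratedDeriv 2 Sgm x)) / norm3 (deriv Sgm x) ^ 3)
    (hτS : ∀ x, τS x =
      det3 (deriv Sgm x) (iteratedDeriv 2 Sgm x) (iteratedDeriv 3 Sgm x) /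
        norm3 (cross3 (deriv Sgm x) (iteratedDeriv 2 Sgm x)) ^ 2) :
    κS 0 = Real.sqrt (iteratedDeriv 2 a 0 ^ 2 + 4 * deriv b₀ 0 ^ 4) ∧
      (iteratedDeriv 2 a 0 ^ 2 + 4 * deriv b₀ 0 ^ 4 ≠ 0 →
        τS 0 = 2 * deriv b₀ 0 *
            (3 * iteratedDeriv 2 a 0 * iteratedDeriv 2 b₀ 0 -
              iteratedDeriv 3 a 0 * deriv b₀ 0) /
          (iteratedDeriv 2 a 0 ^ 2 + 4 * deriv b₀ 0 ^ 4)) := by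
  have hSgm' : Sgm = fun x => ![x, a x, b₀ x ^ 2] := funext hSgm
  have h1 : ((⊤ : ℕ∞) : WithTop ℕ∞) ≠ 0 := by simp
  have ha1 : ContDiff ℝ (⊤ : ℕ∞) (deriv a) := (contDiff_infty_iff_deriv.mp ha).2
  have ha2 : ContDiff ℝ (⊤ : ℕ∞) (deriv (deriv a)) := (contDiff_infty_iff_deriv.mp ha1).2
  have hb1 : ContDiff ℝ (⊤ : ℕ∞) (deriv b₀) := (contDiff_infty_iff_deriv.mp hb₀).2
  have hb2 : ContDiff ℝ (⊤ : ℕ∞) (deriv (deriv b₀)) := (contDiff_infty_iff_deriv.mp hb1).2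
  have da : ∀ x, HasDerivAt a (deriv a x) x := fun x => (ha.differentiable h1 x).hasDerivAt
  have da1 : ∀ x, HasDerivAt (deriv a) (deriv (deriv a) x) x :=
    fun x => (ha1.differentiable h1 x).hasDerivAt
  have da2 : ∀ x, HasDerivAt (deriv (deriv a)) (deriv (deriv (deriv a)) x) x :=
    fun x => (ha2.differentiable h1 x).hasDerivAt
  have db : ∀ x, HasDerivAt b₀ (deriv b₀ x) x := fun x => (hb₀.differentiable h1 x).hasDerivAt
  have db1 : ∀ x, HasDerivAt (deriv b₀) (deriv (deriv b₀) x) x :=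
    fun x => (hb1.differentiable h1 x).hasDerivAt
  have db2 : ∀ x, HasDerivAt (deriv (deriv b₀)) (deriv (deriv (deriv b₀)) x) x :=
    fun x => (hb2.differentiable h1 x).hasDerivAt
  -- first derivative
  have hD1 : ∀ x, HasDerivAt Sgm (![1, deriv a x, 2 * b₀ x * deriv b₀ x]) x := by
    intro x
    rw [hSgm', hasDerivAt_pi]
    intro i
    fin_cases i
    · simpa using hasDerivAt_id' x
    · simpa using da x
    · have := (db x).fun_pow 2
      have h2 : (2 : ℝ) * b₀ x * deriv b₀ x = (2 : ℕ) * b₀ x ^ (2 - 1) * deriv b₀ x := by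
        push_cast; ring
      simpa [h2] using this
  have hS1 : deriv Sgm = fun x => ![1, deriv a x, 2 * b₀ x * deriv b₀ x] :=
    funext fun x => (hD1 x).deriv
  -- second derivative
  have hD2 : ∀ x, HasDerivAt (deriv Sgm)
      (![0, deriv (deriv a) x,
        2 * deriv b₀ x * deriv b₀ x + 2 * b₀ x * deriv (deriv b₀) x]) x := by
    intro x
    rw [hS1, hasDerivAt_pi]
    intro i
    fin_cases i
    · simpa using hasDerivAt_const x (1:ℝ)
    · simpa using da1 x
    · have := ((hasDerivAt_const x (2:ℝ)).fun_mul (db x)).fun_mul (db1 x)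
      have h2 : (0 * b₀ x + 2 * deriv b₀ x) * deriv b₀ x
          + 2 * b₀ x * deriv (deriv b₀) x
          = 2 * deriv b₀ x * deriv b₀ x + 2 * b₀ x * deriv (deriv b₀) x := by ring
      simpa using this.congr_deriv h2
  have hS2 : iteratedDeriv 2 Sgm = fun x =>
      ![0, deriv (deriv a) x,
        2 * deriv b₀ x * deriv b₀ x + 2 * b₀ x * deriv (deriv b₀) x] := by
    rw [iteratedDeriv_succ, iteratedDeriv_one]
    exact funext fun x => (hD2 x).deriv
  -- third derivative at 0
  have hD3 : HasDerivAt (iteratedDeriv 2 Sgm)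
      (![0, deriv (deriv (deriv a)) 0,
        6 * deriv b₀ 0 * deriv (deriv b₀) 0]) 0 := by
    rw [hS2, hasDerivAt_pi]
    intro i
    fin_cases i
    · simpa using hasDerivAt_const (0:ℝ) (0:ℝ)
    · simpa using da2 0
    · have h₁ := ((hasDerivAt_const (0:ℝ) (2:ℝ)).fun_mul (db1 0)).fun_mul (db1 0)
      have h₂ := ((hasDerivAt_const (0:ℝ) (2:ℝ)).fun_mul (db 0)).fun_mul (db2 0)
      have h := h₁.fun_add h₂
      have h2 : (0 * deriv b₀ 0 + 2 * deriv (deriv b₀) 0) * deriv b₀ 0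
            + 2 * deriv b₀ 0 * deriv (deriv b₀) 0
          + ((0 * b₀ 0 + 2 * deriv b₀ 0) * deriv (deriv b₀) 0
            + 2 * b₀ 0 * deriv (deriv (deriv b₀)) 0)
          = 6 * deriv b₀ 0 * deriv (deriv b₀) 0 := by rw [hb₀0]; ring
      simpa using h.congr_deriv h2
  have hS3 : iteratedDeriv 3 Sgm 0 =
      ![0, deriv (deriv (deriv a)) 0, 6 * deriv b₀ 0 * deriv (deriv b₀) 0] := by
    have e2 : iteratedDeriv 3 Sgm = deriv (iteratedDeriv 2 Sgm) :=
      iteratedDeriv_succ (n := 2)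
    rw [e2]
    exact hD3.deriv
  -- values at 0
  have hv1 : deriv Sgm 0 = ![1, 0, 0] := by
    rw [hS1]; simp [ha0', hb₀0]
  have hv2 : iteratedDeriv 2 Sgm 0 =
      ![0, deriv (deriv a) 0, 2 * deriv b₀ 0 ^ 2] := by
    rw [hS2]
    ext i; fin_cases i <;> simp [hb₀0] <;> ring
  -- iterated derivs of a, b₀
  have hiA : iteratedDeriv 2 a 0 = deriv (deriv a) 0 := by
    rw [iteratedDeriv_succ, iteratedDeriv_one]
  have hiq : iteratedDeriv 2 b₀ 0 = deriv (deriv b₀) 0 := by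
    rw [iteratedDeriv_succ, iteratedDeriv_one]
  have hiA3 : iteratedDeriv 3 a 0 = deriv (deriv (deriv a)) 0 := by
    have e : iteratedDeriv 3 a = deriv (iteratedDeriv 2 a) := iteratedDeriv_succ (n := 2)
    rw [e, iteratedDeriv_succ, iteratedDeriv_one]
  set A := deriv (deriv a) 0 with hA
  set A3 := deriv (deriv (deriv a)) 0 with hA3'
  set p := deriv b₀ 0 with hp
  set q := deriv (deriv b₀) 0 with hq
  constructor
  · rw [hκS 0, hv1, hv2, hiA]
    simp only [cross3, norm3, Matrix.cons_val_zero, Matrix.cons_val_one, Matrix.head_cons,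
      Matrix.cons_val_two, Matrix.tail_cons]
    norm_num
    rw [show (2 * p ^ 2) ^ 2 + A ^ 2 = A ^ 2 + 4 * p ^ 4 by ring]
  · intro h
    rw [hiA, hiq, hiA3] at *
    rw [hτS 0, hv1, hv2, hS3]
    simp only [cross3, det3, norm3, Matrix.det_fin_three, Matrix.of_apply,
      Matrix.cons_val_zero, Matrix.cons_val_one, Matrix.head_cons,
      Matrix.cons_val_two, Matrix.tail_cons, Matrix.head_fin_const]
    rw [Real.sq_sqrt (by positivity)]
    rw [show (0 * (2 * p ^ 2) - 0 * A) ^ 2 + (0 * 0 - 1 * (2 * p ^ 2)) ^ 2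
        + (1 * A - 0 * 0) ^ 2 = A ^ 2 + 4 * p ^ 4 by ring]
    congr 1
    ring
end

section
/- Assume a''(0)² + 4b₀'(0)⁴ ≠ 0. Then the torsion of the singular curve of the folded cuspidal edge satisfies, at x = 0, τ_Σ(0) = (κ_s(0)·κ_ν'(0) − κ_s'(0)·κ_ν(0))/(κ_s(0)² + κ_ν(0)²) + κ_t(0), where τ_Σ(x) = det(γ̂'(x), γ̂''(x), γ̂'''(x))/‖γ̂'(x) × γ̂''(x)‖², κ_s(x) = det(γ̂'(x), γ̂''(x), ν(x))/‖γ̂'(x)‖³, κ_ν(x) = ⟨γ̂''(x), ν(x)⟩/‖γ̂'(x)‖², and κ_t(0) = det(φ_x, φ_yy, φ_xyy)/‖φ_x × φ_yy‖² − det(φ_x, φ_yy, φ_xyy)·⟨φ_x, φ_yy⟩/(‖φ_x‖²·‖φ_x × φ_yy‖²) evaluated at (0,0). -/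
open Real Set

lemma hasDerivAt_vec3_s8 {f₀ f₁ f₂ : ℝ → ℝ} {d₀ d₁ d₂ x : ℝ}
    (h₀ : HasDerivAt f₀ d₀ x) (h₁ : HasDerivAt f₁ d₁ x) (h₂ : HasDerivAt f₂ d₂ x) :
    HasDerivAt (fun t => (![f₀ t, f₁ t, f₂ t] : Fin 3 → ℝ)) ![d₀, d₁, d₂] x := by
  rw [hasDerivAt_pi]; intro i; fin_cases i <;> simpa using ‹_›

lemma HasDerivAt.reshape {f g : ℝ → ℝ} {d e x : ℝ} (h : HasDerivAt f d x)
    (hfg : ∀ y, g y = f y) (hde : e = d) : HasDerivAt g e x := by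
  subst hde; exact h.congr_of_eventuallyEq (Filter.Eventually.of_forall hfg)

lemma hasDerivAt_mul_contAt {k : ℝ → ℝ} (hk : ContinuousAt k 0) :
    HasDerivAt (fun y => y * k y) (k 0) 0 := by
  rw [hasDerivAt_iff_tendsto_slope]
  have : ∀ y ∈ ({0}ᶜ : Set ℝ), k y = slope (fun y => y * k y) 0 y := by
    intro y hy
    simp only [Set.mem_compl_iff, Set.mem_singleton_iff] at hy
    rw [slope_def_field]; simp only [zero_mul, sub_zero]; rw [mul_div_cancel_left₀ _ hy]
  exact Filter.Tendsto.congr' (Filter.eventuallyEq_of_mem self_mem_nhdsWithin this)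
    hk.continuousWithinAt

set_option maxHeartbeats 2000000 in
/-- If `a''(0)² + 4b₀'(0)⁴ ≠ 0`, the torsion of the singular curve of
the folded cuspidal edge satisfies, at `x = 0`,
`τ_Σ(0) = (κ_s(0)κ_ν'(0) − κ_s'(0)κ_ν(0))/(κ_s(0)² + κ_ν(0)²) + κ_t(0)`. -/
theorem stmt8 (a b₀ b₁ b₂ : ℝ → ℝ) (b₃ : ℝ → ℝ → ℝ)
    (ha : ContDiff ℝ (⊤ : ℕ∞) a) (hb₀ : ContDiff ℝ (⊤ : ℕ∞) b₀)
    (hb₁ : ContDiff ℝ (⊤ : ℕ∞) b₁) (hb₂ : ContDiff ℝ (⊤ : ℕ∞) b₂)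
    (hb₃ : ContDiff ℝ (⊤ : ℕ∞) (Function.uncurry b₃))
    (ha0 : a 0 = 0) (ha0' : deriv a 0 = 0) (hb₀0 : b₀ 0 = 0)
    (hA : iteratedDeriv 2 a 0 ^ 2 + 4 * deriv b₀ 0 ^ 4 ≠ 0)
    (φ : ℝ → ℝ → Fin 3 → ℝ)
    (hφ : ∀ x y, φ x y =
      ![x, a x + y ^ 2 / 2,
        (b₀ x + b₁ x * y ^ 2 + b₂ x * y ^ 3 + b₃ x y * y ^ 4) ^ 2])
    (γ : ℝ → Fin 3 → ℝ) (hγ : ∀ x, γ x = φ x 0)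
    (φX φYY φXYY : ℝ → Fin 3 → ℝ)
    (hφX : ∀ x, φX x = deriv (fun t => φ t 0) x)
    (hφYY : ∀ x, φYY x = iteratedDeriv 2 (φ x) 0)
    (hφXYY : ∀ x, φXYY x = deriv (fun t => iteratedDeriv 2 (φ t) 0) x)
    (w : ℝ → Fin 3 → ℝ) (hw : ∀ x, w x = cross3 (φX x) (φYY x))
    (ν : ℝ → Fin 3 → ℝ) (hν : ∀ x, ν x = (norm3 (w x))⁻¹ • w x)
    (κs κν : ℝ → ℝ)
    (hκs : ∀ x, κs x =
      det3 (deriv γ x) (iteratedDeriv 2 γ x) (ν x) / norm3 (deriv γ x) ^ 3)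
    (hκν : ∀ x, κν x =
      dot3 (iteratedDeriv 2 γ x) (ν x) / norm3 (deriv γ x) ^ 2)
    (τS0 : ℝ)
    (hτS0 : τS0 =
      det3 (deriv γ 0) (iteratedDeriv 2 γ 0) (iteratedDeriv 3 γ 0) /
        norm3 (cross3 (deriv γ 0) (iteratedDeriv 2 γ 0)) ^ 2)
    (κt0 : ℝ)
    (hκt0 : κt0 =
      det3 (φX 0) (φYY 0) (φXYY 0) / norm3 (cross3 (φX 0) (φYY 0)) ^ 2 -
        det3 (φX 0) (φYY 0) (φXYY 0) * dot3 (φX 0) (φYY 0) /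
          (norm3 (φX 0) ^ 2 * norm3 (cross3 (φX 0) (φYY 0)) ^ 2)) :
    τS0 = (κs 0 * deriv κν 0 - deriv κs 0 * κν 0) / (κs 0 ^ 2 + κν 0 ^ 2) + κt0 := by
  have hT : ((⊤ : ℕ∞) : WithTop ℕ∞) ≠ 0 := by simp
  have hda : Differentiable ℝ a := ha.differentiable hT
  have ha1 : ContDiff ℝ (⊤ : ℕ∞) (deriv a) := (contDiff_infty_iff_deriv.mp ha).2
  have hda1 : Differentiable ℝ (deriv a) := ha1.differentiable hT
  have ha2 : ContDiff ℝ (⊤ : ℕ∞) (deriv (deriv a)) := (contDiff_infty_iff_deriv.mp ha1).2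
  have hda2 : Differentiable ℝ (deriv (deriv a)) := ha2.differentiable hT
  have hdb₀ : Differentiable ℝ b₀ := hb₀.differentiable hT
  have hp1 : ContDiff ℝ (⊤ : ℕ∞) (deriv b₀) := (contDiff_infty_iff_deriv.mp hb₀).2
  have hdp1 : Differentiable ℝ (deriv b₀) := hp1.differentiable hT
  have hp2 : ContDiff ℝ (⊤ : ℕ∞) (deriv (deriv b₀)) := (contDiff_infty_iff_deriv.mp hp1).2
  have hdp2 : Differentiable ℝ (deriv (deriv b₀)) := hp2.differentiable hT
  have hdb₁ : Differentiable ℝ b₁ := hb₁.differentiable hT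
  -- γ explicit
  have hγ' : γ = fun x => ![x, a x, b₀ x ^ 2] := by
    funext x
    rw [hγ, hφ]
    norm_num
  -- first derivative of γ
  have hdγ : ∀ x, HasDerivAt γ ![1, deriv a x, 2 * b₀ x * deriv b₀ x] x := by
    intro x
    rw [hγ']
    refine hasDerivAt_vec3_s8 (hasDerivAt_id x) (hda x).hasDerivAt ?_
    simpa using (hdb₀ x).hasDerivAt.fun_pow 2
  have hγ1 : deriv γ = fun x => ![1, deriv a x, 2 * b₀ x * deriv b₀ x] :=
    funext fun x => (hdγ x).deriv
  -- second derivative of γ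
  have hdγ2 : ∀ x, HasDerivAt (deriv γ)
      ![0, deriv (deriv a) x, 2 * deriv b₀ x ^ 2 + 2 * b₀ x * deriv (deriv b₀) x] x := by
    intro x
    rw [hγ1]
    refine hasDerivAt_vec3_s8 (hasDerivAt_const x 1) (hda1 x).hasDerivAt ?_
    exact (((hdb₀ x).hasDerivAt.fun_mul (hdp1 x).hasDerivAt).const_mul (2:ℝ)).reshape
      (fun y => by ring) (by ring)
  have hγ2 : iteratedDeriv 2 γ = fun x =>
      ![0, deriv (deriv a) x, 2 * deriv b₀ x ^ 2 + 2 * b₀ x * deriv (deriv b₀) x] := by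
    rw [show (2:ℕ) = 1 + 1 from rfl, iteratedDeriv_succ, iteratedDeriv_one]
    exact funext fun x => (hdγ2 x).deriv
  -- third derivative of γ at 0
  have hdQ : HasDerivAt (fun x => (2:ℝ) * deriv b₀ x ^ 2 + 2 * b₀ x * deriv (deriv b₀) x)
      (6 * deriv b₀ 0 * deriv (deriv b₀) 0) 0 := by
    refine ((((hdp1 0).hasDerivAt.fun_pow 2).const_mul (2:ℝ)).fun_add
      (((hdb₀ 0).hasDerivAt.fun_mul (hdp2 0).hasDerivAt).const_mul (2:ℝ))).reshape
      (fun y => by ring) ?_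
    simp [hb₀0]
    ring
  have hγ3 : iteratedDeriv 3 γ 0 = ![0, deriv (deriv (deriv a)) 0,
      6 * deriv b₀ 0 * deriv (deriv b₀) 0] := by
    have h3 : iteratedDeriv 3 γ = deriv (iteratedDeriv 2 γ) := iteratedDeriv_succ (n := 2)
    rw [h3, hγ2]
    exact (hasDerivAt_vec3_s8 (hasDerivAt_const 0 (0:ℝ)) (hda2 0).hasDerivAt hdQ).deriv
  -- b₃ in the second variable
  have hb₃t : ∀ t, ContDiff ℝ (⊤ : ℕ∞) (fun y => b₃ t y) :=
    fun t => hb₃.comp ((contDiff_const (c := t)).prodMk contDiff_id)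
  have hdb₃t : ∀ t, Differentiable ℝ (fun y => b₃ t y) := fun t => (hb₃t t).differentiable hT
  have hcD : ∀ t, Continuous (fun y => deriv (fun s => b₃ t s) y) :=
    fun t => ((contDiff_infty_iff_deriv.mp (hb₃t t)).2).continuous
  -- second y-derivative of φ at y = 0
  have hφYY' : ∀ t, iteratedDeriv 2 (φ t) 0 = ![0, 1, 4 * b₀ t * b₁ t] := by
    intro t
    set B : ℝ → ℝ := fun y => b₀ t + b₁ t * y ^ 2 + b₂ t * y ^ 3 + b₃ t y * y ^ 4 with hB
    set Bd : ℝ → ℝ := fun y =>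
      2 * b₁ t * y + 3 * b₂ t * y ^ 2 + (deriv (fun s => b₃ t s) y * y + 4 * b₃ t y) * y ^ 3
      with hBd
    have hφt : φ t = fun y => ![t, a t + y ^ 2 / 2, B y ^ 2] := by
      funext y; rw [hφ]
    have hBder : ∀ y, HasDerivAt B (Bd y) y := by
      intro y
      refine (((((hasDerivAt_pow 2 y).const_mul (b₁ t)).fun_add
          ((hasDerivAt_pow 3 y).const_mul (b₂ t))).const_add (b₀ t)).fun_add
          ((hdb₃t t y).hasDerivAt.fun_mul (hasDerivAt_pow 4 y))).reshape
          (fun s => by simp only [hB]; ring) (by simp only [hBd]; ring)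
    have hdφt : deriv (φ t) = fun y => ![0, y, 2 * B y * Bd y] := by
      funext y
      rw [hφt]
      refine HasDerivAt.deriv (hasDerivAt_vec3_s8 ?_ ?_ ?_)
      · exact hasDerivAt_const y t
      · simpa using ((hasDerivAt_pow 2 y).div_const 2).const_add (a t)
      · simpa using (hBder y).fun_pow 2
    have hBd0 : HasDerivAt Bd (2 * b₁ t) 0 := by
      have hcb : Continuous (b₃ t) := (hb₃t t).continuous
      have hcDt : Continuous (deriv (fun s => b₃ t s)) := hcD t
      have hk : ContinuousAt (fun y : ℝ =>
          2 * b₁ t + 3 * b₂ t * y + (deriv (fun s => b₃ t s) y * y + 4 * b₃ t y) * y ^ 2) 0 := by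
        refine Continuous.continuousAt ?_
        exact (continuous_const.add (continuous_const.mul continuous_id)).add
          (((hcDt.mul continuous_id).add (continuous_const.mul hcb)).mul (continuous_pow 2))
      have := hasDerivAt_mul_contAt hk
      refine this.reshape (fun y => by simp only [hBd]; ring) (by norm_num)
    have hB0 : B 0 = b₀ t := by simp only [hB]; norm_num
    have hBd00 : Bd 0 = 0 := by simp only [hBd]; norm_num
    have h2d : iteratedDeriv 2 (φ t) 0 = deriv (deriv (φ t)) 0 := by
      rw [show (2:ℕ) = 1 + 1 from rfl, iteratedDeriv_succ, iteratedDeriv_one]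
    rw [h2d, hdφt]
    have h3 : HasDerivAt (fun y => 2 * B y * Bd y) (4 * b₀ t * b₁ t) 0 := by
      refine (((hBder 0).const_mul 2).fun_mul hBd0).reshape (fun y => by ring) ?_
      rw [hB0, hBd00]; ring
    exact (hasDerivAt_vec3_s8 (hasDerivAt_const 0 (0:ℝ))
      (by simpa using hasDerivAt_id' (0:ℝ)) h3).deriv
  -- φX, φYY, φXYY explicit
  have hφX' : ∀ x, φX x = ![1, deriv a x, 2 * b₀ x * deriv b₀ x] := by
    intro x
    rw [hφX]
    have he : (fun t => φ t 0) = γ := funext fun t => (hγ t).symm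
    rw [he, hγ1]
  have hφYYe : ∀ x, φYY x = ![0, 1, 4 * b₀ x * b₁ x] := fun x => by
    rw [hφYY x, hφYY' x]
  have hφXYY0 : φXYY 0 = ![0, 0, 4 * deriv b₀ 0 * b₁ 0] := by
    rw [hφXYY 0]
    have he : (fun t => iteratedDeriv 2 (φ t) 0) = fun t => ![0, 1, 4 * b₀ t * b₁ t] :=
      funext fun t => hφYY' t
    rw [he]
    refine (hasDerivAt_vec3_s8 (hasDerivAt_const 0 (0:ℝ)) (hasDerivAt_const 0 (1:ℝ)) ?_).deriv
    refine (((hdb₀ 0).hasDerivAt.fun_mul (hdb₁ 0).hasDerivAt).const_mul 4).reshape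
      (fun y => by ring) ?_
    rw [hb₀0]; ring
  -- w explicit
  set W0 : ℝ → ℝ := fun x => 4 * deriv a x * b₀ x * b₁ x - 2 * b₀ x * deriv b₀ x with hW0
  set W1 : ℝ → ℝ := fun x => -(4 * b₀ x * b₁ x) with hW1
  have hw' : ∀ x, w x = ![W0 x, W1 x, 1] := by
    intro x
    rw [hw, hφX' x, hφYYe x]
    funext i
    fin_cases i <;> simp [cross3, hW0, hW1] <;> ring
  have hW00 : W0 0 = 0 := by simp [hW0, hb₀0]
  have hW10 : W1 0 = 0 := by simp [hW1, hb₀0]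
  -- norms
  set NwF : ℝ → ℝ := fun x => Real.sqrt (W0 x ^ 2 + W1 x ^ 2 + 1) with hNwF
  set NgF : ℝ → ℝ := fun x =>
    Real.sqrt (1 + deriv a x ^ 2 + (2 * b₀ x * deriv b₀ x) ^ 2) with hNgF
  have hNw' : ∀ x, norm3 ![W0 x, W1 x, 1] = NwF x := by
    intro x; simp only [norm3, hNwF]; norm_num [Matrix.cons_val_two]
  have hNg' : ∀ x, norm3 ![1, deriv a x, 2 * b₀ x * deriv b₀ x] = NgF x := by
    intro x; simp only [norm3, hNgF]; norm_num [Matrix.cons_val_two]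
  have hNw0 : NwF 0 = 1 := by
    simp only [hNwF]; rw [hW00, hW10]; norm_num
  have hNg0 : NgF 0 = 1 := by
    simp only [hNgF]; rw [ha0', hb₀0]; norm_num
  -- derivatives of auxiliary scalar functions at 0
  obtain ⟨dW0, hdW0⟩ : ∃ d, HasDerivAt W0 d 0 :=
    ⟨_, (((((hda1 0).hasDerivAt.fun_mul (hdb₀ 0).hasDerivAt).fun_mul
      (hdb₁ 0).hasDerivAt).const_mul 4).fun_sub
      (((hdb₀ 0).hasDerivAt.fun_mul (hdp1 0).hasDerivAt).const_mul 2)).reshape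
      (fun y => by simp only [hW0]; ring) rfl⟩
  have hdW1 : HasDerivAt W1 (-(4 * deriv b₀ 0 * b₁ 0)) 0 := by
    refine ((((hdb₀ 0).hasDerivAt.fun_mul (hdb₁ 0).hasDerivAt).const_mul 4).fun_neg).reshape
      (fun y => by simp only [hW1]; ring) ?_
    rw [hb₀0]; ring
  have hNwd : HasDerivAt NwF 0 0 := by
    have hu : HasDerivAt (fun x => W0 x ^ 2 + W1 x ^ 2 + 1) 0 0 := by
      refine (((hdW0.pow 2).add (hdW1.pow 2)).add_const 1).reshape (fun y => rfl) ?_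
      rw [hW00, hW10]; ring
    have hu0 : W0 0 ^ 2 + W1 0 ^ 2 + 1 = 1 := by rw [hW00, hW10]; norm_num
    have := (Real.hasDerivAt_sqrt (x := W0 0 ^ 2 + W1 0 ^ 2 + 1)
      (by rw [hu0]; norm_num)).comp 0 hu
    simp only [Function.comp_def] at this
    refine this.reshape (fun y => rfl) (by simp)
  have hNgd : HasDerivAt NgF 0 0 := by
    have hv : HasDerivAt (fun x => 1 + deriv a x ^ 2 + (2 * b₀ x * deriv b₀ x) ^ 2) 0 0 := by
      refine ((((hda1 0).hasDerivAt.fun_pow 2).const_add 1).fun_add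
        ((((hdb₀ 0).hasDerivAt.fun_mul (hdp1 0).hasDerivAt).const_mul 2).fun_pow 2)).reshape
        (fun y => by ring) ?_
      rw [ha0', hb₀0]; ring
    have hv0 : 1 + deriv a 0 ^ 2 + (2 * b₀ 0 * deriv b₀ 0) ^ 2 = 1 := by
      rw [ha0', hb₀0]; norm_num
    have := (Real.hasDerivAt_sqrt (x := 1 + deriv a 0 ^ 2 + (2 * b₀ 0 * deriv b₀ 0) ^ 2)
      (by rw [hv0]; norm_num)).comp 0 hv
    simp only [Function.comp_def] at this
    refine this.reshape (fun y => rfl) (by simp)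
  have hNwInv : HasDerivAt (fun x => (NwF x)⁻¹) 0 0 := by
    have := hNwd.inv (by rw [hNw0]; norm_num)
    refine this.reshape (fun y => rfl) (by simp)
  have hNg2Inv : HasDerivAt (fun x => ((NgF x) ^ 2)⁻¹) 0 0 := by
    have := (hNgd.fun_pow 2).inv (by rw [hNg0]; norm_num)
    refine this.reshape (fun y => rfl) (by simp)
  have hNg3Inv : HasDerivAt (fun x => ((NgF x) ^ 3)⁻¹) 0 0 := by
    have := (hNgd.fun_pow 3).inv (by rw [hNg0]; norm_num)
    refine this.reshape (fun y => rfl) (by simp)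
  have hNNInv : HasDerivAt (fun x => (NwF x)⁻¹ * ((NgF x) ^ 2)⁻¹) 0 0 := by
    refine (hNwInv.mul hNg2Inv).reshape (fun y => rfl) (by ring)
  have hNNInv3 : HasDerivAt (fun x => (NwF x)⁻¹ * ((NgF x) ^ 3)⁻¹) 0 0 := by
    refine (hNwInv.mul hNg3Inv).reshape (fun y => rfl) (by ring)
  -- κν explicit and its derivative
  have hκνF : κν = fun x => (deriv (deriv a) x * W1 x +
      (2 * deriv b₀ x ^ 2 + 2 * b₀ x * deriv (deriv b₀) x)) *
      ((NwF x)⁻¹ * ((NgF x) ^ 2)⁻¹) := by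
    funext x
    rw [hκν x, hν x, hw' x, hγ1, hγ2, hNw' x]
    simp only [hNg' x]
    simp only [dot3, Pi.smul_apply, smul_eq_mul, Matrix.cons_val_zero, Matrix.cons_val_one,
      Matrix.head_cons, Matrix.cons_val_two, Matrix.tail_cons]
    field_simp
    try ring
  have hκνd : HasDerivAt κν
      (deriv (deriv a) 0 * -(4 * deriv b₀ 0 * b₁ 0) + 6 * deriv b₀ 0 * deriv (deriv b₀) 0) 0 := by
    rw [hκνF]
    have hAd : HasDerivAt (fun x => deriv (deriv a) x * W1 x +
        (2 * deriv b₀ x ^ 2 + 2 * b₀ x * deriv (deriv b₀) x))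
        (deriv (deriv a) 0 * -(4 * deriv b₀ 0 * b₁ 0) + 6 * deriv b₀ 0 * deriv (deriv b₀) 0)
        0 := by
      refine (((hda2 0).hasDerivAt.mul hdW1).add hdQ).reshape (fun y => rfl) ?_
      rw [hW10]; ring
    refine (hAd.mul hNNInv).reshape (fun y => rfl) ?_
    rw [hNw0, hNg0]; norm_num
  -- κs explicit and its derivative
  have hκsF : κs = fun x => (deriv (deriv a) x -
      (2 * deriv b₀ x ^ 2 + 2 * b₀ x * deriv (deriv b₀) x) * W1 x +
      deriv a x * (2 * deriv b₀ x ^ 2 + 2 * b₀ x * deriv (deriv b₀) x) * W0 x -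
      2 * b₀ x * deriv b₀ x * (deriv (deriv a) x * W0 x)) *
      ((NwF x)⁻¹ * ((NgF x) ^ 3)⁻¹) := by
    funext x
    rw [hκs x, hν x, hw' x, hγ1, hγ2, hNw' x]
    simp only [hNg' x]
    simp only [det3, Matrix.det_fin_three, Matrix.of_apply, Pi.smul_apply, smul_eq_mul,
      Matrix.cons_val_zero, Matrix.cons_val_one, Matrix.head_cons, Matrix.cons_val_two,
      Matrix.tail_cons, Matrix.cons_val', Matrix.head_fin_const, Matrix.empty_val']
    field_simp
    ring
  have hκsd : HasDerivAt κs
      (deriv (deriv (deriv a)) 0 + 8 * deriv b₀ 0 ^ 3 * b₁ 0) 0 := by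
    rw [hκsF]
    have hGd : HasDerivAt (fun x => deriv (deriv a) x -
        (2 * deriv b₀ x ^ 2 + 2 * b₀ x * deriv (deriv b₀) x) * W1 x +
        deriv a x * (2 * deriv b₀ x ^ 2 + 2 * b₀ x * deriv (deriv b₀) x) * W0 x -
        2 * b₀ x * deriv b₀ x * (deriv (deriv a) x * W0 x))
        (deriv (deriv (deriv a)) 0 + 8 * deriv b₀ 0 ^ 3 * b₁ 0) 0 := by
      refine ((((hda2 0).hasDerivAt.fun_sub (hdQ.fun_mul hdW1)).fun_add
        (((hda1 0).hasDerivAt.fun_mul hdQ).fun_mul hdW0)).fun_sub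
        ((((hdb₀ 0).hasDerivAt.fun_mul (hdp1 0).hasDerivAt).const_mul 2).fun_mul
          ((hda2 0).hasDerivAt.fun_mul hdW0))).reshape (fun y => by ring) ?_
      rw [hW00, hW10, ha0', hb₀0]; ring
    refine (hGd.mul hNNInv3).reshape (fun y => rfl) ?_
    rw [hNw0, hNg0]; norm_num
  -- values at 0
  have hκν0 : κν 0 = 2 * deriv b₀ 0 ^ 2 := by
    rw [hκνF]
    simp only
    rw [hW10, hNw0, hNg0, hb₀0]
    norm_num
  have hκs0 : κs 0 = deriv (deriv a) 0 := by
    rw [hκsF]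
    simp only
    rw [hW00, hW10, hNw0, hNg0]; norm_num
  -- value of τS0
  have hτ : τS0 = (deriv (deriv a) 0 * (6 * deriv b₀ 0 * deriv (deriv b₀) 0) -
      2 * deriv b₀ 0 ^ 2 * deriv (deriv (deriv a)) 0) /
      (deriv (deriv a) 0 ^ 2 + 4 * deriv b₀ 0 ^ 4) := by
    rw [hτS0, hγ1, hγ2, hγ3]
    simp only [ha0', hb₀0]
    norm_num [det3, cross3, norm3, Matrix.det_fin_three, Matrix.cons_val_two]
    rw [Real.sq_sqrt (by positivity)]
    ring_nf
  -- value of κt0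
  have hκt : κt0 = 4 * deriv b₀ 0 * b₁ 0 := by
    rw [hκt0, hφX' 0, hφYYe 0, hφXYY0]
    simp only [ha0', hb₀0]
    norm_num [det3, cross3, norm3, dot3, Matrix.det_fin_three, Matrix.cons_val_two]
  -- denominator nonzero
  have hita : iteratedDeriv 2 a 0 = deriv (deriv a) 0 := by
    rw [show (2:ℕ) = 1 + 1 from rfl, iteratedDeriv_succ, iteratedDeriv_one]
  have hden : deriv (deriv a) 0 ^ 2 + (2 * deriv b₀ 0 ^ 2) ^ 2 ≠ 0 := by
    have he : deriv (deriv a) 0 ^ 2 + (2 * deriv b₀ 0 ^ 2) ^ 2 =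
        iteratedDeriv 2 a 0 ^ 2 + 4 * deriv b₀ 0 ^ 4 := by rw [hita]; ring
    rw [he]; exact hA
  have hden' : deriv (deriv a) 0 ^ 2 + 4 * deriv b₀ 0 ^ 4 ≠ 0 := by
    have he : deriv (deriv a) 0 ^ 2 + 4 * deriv b₀ 0 ^ 4 =
        deriv (deriv a) 0 ^ 2 + (2 * deriv b₀ 0 ^ 2) ^ 2 := by ring
    rw [he]; exact hden
  -- conclusion
  have key : ∀ A2 A3 B1 B2 c : ℝ, A2 ^ 2 + 4 * B1 ^ 4 ≠ 0 →
      (A2 * (6 * B1 * B2) - 2 * B1 ^ 2 * A3) / (A2 ^ 2 + 4 * B1 ^ 4) =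
      (A2 * (A2 * -(4 * B1 * c) + 6 * B1 * B2) - (A3 + 8 * B1 ^ 3 * c) * (2 * B1 ^ 2)) /
        (A2 ^ 2 + (2 * B1 ^ 2) ^ 2) + 4 * B1 * c := by
    intro A2 A3 B1 B2 c h
    have h2 : A2 ^ 2 + (2 * B1 ^ 2) ^ 2 = A2 ^ 2 + 4 * B1 ^ 4 := by ring
    rw [h2]
    rw [div_add' _ _ _ h, div_eq_div_iff h h]
    ring
  rw [hτ, hκt, hκs0, hκν0, hκνd.deriv, hκsd.deriv]
  exact key _ _ _ _ _ hden'
end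

section
/- Assume b₀'(0) ≠ 0. Then there exist ε > 0 and a smooth function d : (−ε, ε) → ℝ with d(0) = 0 such that b₀(d(y)) + b₁(d(y))·y² + ½(b₃(d(y), y) + b₃(d(y), −y))·y⁴ = 0 for all |y| < ε (equivalently, φ(d(y), y) = φ(d(y), −y) for all |y| < ε, so y ↦ (d(y), y) parametrises the double point curve of the folded cuspidal edge φ). Moreover any such d satisfies d'(0) = 0, d''(0) = −2b₁(0)/b₀'(0), and d⁽⁴⁾(0) = −(12/b₀'(0)³)·(2b₃(0,0)b₀'(0)² + b₁(0)(b₁(0)b₀''(0) − 2b₀'(0)b₁'(0))). -/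
open Real Set

lemma aux_part2 (b₀ b₁ : ℝ → ℝ) (b₃ : ℝ → ℝ → ℝ)
    (hb₀ : ContDiff ℝ (⊤ : ℕ∞) b₀) (hb₁ : ContDiff ℝ (⊤ : ℕ∞) b₁)
    (hb₃ : ContDiff ℝ (⊤ : ℕ∞) (Function.uncurry b₃))
    (hβ : deriv b₀ 0 ≠ 0)
    (ε : ℝ) (hε : 0 < ε) (d : ℝ → ℝ)
    (hd : ContDiffOn ℝ (⊤ : ℕ∞) d (Set.Ioo (-ε) ε)) (hd0 : d 0 = 0)
    (heq : ∀ y ∈ Set.Ioo (-ε) ε,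
      b₀ (d y) + b₁ (d y) * y ^ 2 +
        (1 / 2) * (b₃ (d y) y + b₃ (d y) (-y)) * y ^ 4 = 0) :
    deriv d 0 = 0 ∧
    deriv (deriv d) 0 = -2 * b₁ 0 / deriv b₀ 0 ∧
    deriv (deriv (deriv (deriv d))) 0 = -(12 / deriv b₀ 0 ^ 3) *
      (2 * b₃ 0 0 * deriv b₀ 0 ^ 2 +
        b₁ 0 * (b₁ 0 * deriv (deriv b₀) 0 - 2 * deriv b₀ 0 * deriv b₁ 0)) := by
  set U := Set.Ioo (-ε) ε with hU_def
  have hU : IsOpen U := isOpen_Ioo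
  have h0U : (0 : ℝ) ∈ U := by simp [hU_def, hε]
  set c : ℝ → ℝ := fun y => (1 / 2) * (b₃ (d y) y + b₃ (d y) (-y)) with hc_def
  have hccd : ContDiffOn ℝ (⊤ : ℕ∞) c U := by
    have h1 : ContDiffOn ℝ (⊤ : ℕ∞) (fun y => Function.uncurry b₃ (d y, y)) U :=
      hb₃.comp_contDiffOn (hd.prodMk contDiffOn_id)
    have h2 : ContDiffOn ℝ (⊤ : ℕ∞) (fun y => Function.uncurry b₃ (d y, -y)) U :=
      hb₃.comp_contDiffOn (hd.prodMk contDiffOn_id.neg)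
    exact contDiffOn_const.mul (h1.add h2)
  have key : ∀ f : ℝ → ℝ, ContDiffOn ℝ (⊤ : ℕ∞) f U →
      (∀ y ∈ U, HasDerivAt f (deriv f y) y) ∧ ContDiffOn ℝ (⊤ : ℕ∞) (deriv f) U := by
    intro f hf
    constructor
    · intro y hy
      exact ((hf.contDiffAt (hU.mem_nhds hy)).differentiableAt
        (by simp)).hasDerivAt
    · exact hf.deriv_of_isOpen hU (by exact_mod_cast le_top)
  obtain ⟨hd1, hdc1⟩ := key d hd
  obtain ⟨hd2, hdc2⟩ := key _ hdc1
  obtain ⟨hd3, hdc3⟩ := key _ hdc2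
  obtain ⟨hd4, -⟩ := key _ hdc3
  obtain ⟨hc1, hcc1⟩ := key c hccd
  obtain ⟨hc2, hcc2⟩ := key _ hcc1
  obtain ⟨hc3, hcc3⟩ := key _ hcc2
  obtain ⟨hc4, -⟩ := key _ hcc3
  have keyG : ∀ f : ℝ → ℝ, ContDiff ℝ (⊤ : ℕ∞) f →
      (∀ x : ℝ, HasDerivAt f (deriv f x) x) ∧ ContDiff ℝ (⊤ : ℕ∞) (deriv f) := by
    intro f hf
    refine ⟨fun x => (hf.differentiable (by simp)).differentiableAt.hasDerivAt, ?_⟩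
    exact (contDiff_infty_iff_deriv.mp (by exact_mod_cast hf)).2
  obtain ⟨hB1, hBc1⟩ := keyG b₀ hb₀
  obtain ⟨hB2, hBc2⟩ := keyG _ hBc1
  obtain ⟨hB3, hBc3⟩ := keyG _ hBc2
  obtain ⟨hB4, -⟩ := keyG _ hBc3
  obtain ⟨hC1, hCc1⟩ := keyG b₁ hb₁
  obtain ⟨hC2, hCc2⟩ := keyG _ hCc1
  obtain ⟨hC3, hCc3⟩ := keyG _ hCc2
  obtain ⟨hC4, -⟩ := keyG _ hCc3
  have hBd1 : ∀ y ∈ U, HasDerivAt (fun t => b₀ (d t)) (deriv b₀ (d y) * deriv d y) y :=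
    fun y hy => (hB1 (d y)).comp y (hd1 y hy)
  have hBd2 : ∀ y ∈ U, HasDerivAt (fun t => deriv b₀ (d t))
      (deriv (deriv b₀) (d y) * deriv d y) y := fun y hy => (hB2 (d y)).comp y (hd1 y hy)
  have hBd3 : ∀ y ∈ U, HasDerivAt (fun t => deriv (deriv b₀) (d t))
      (deriv (deriv (deriv b₀)) (d y) * deriv d y) y := fun y hy => (hB3 (d y)).comp y (hd1 y hy)
  have hBd4 : ∀ y ∈ U, HasDerivAt (fun t => deriv (deriv (deriv b₀)) (d t))
      (deriv (deriv (deriv (deriv b₀))) (d y) * deriv d y) y :=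
    fun y hy => (hB4 (d y)).comp y (hd1 y hy)
  have hCd1 : ∀ y ∈ U, HasDerivAt (fun t => b₁ (d t)) (deriv b₁ (d y) * deriv d y) y :=
    fun y hy => (hC1 (d y)).comp y (hd1 y hy)
  have hCd2 : ∀ y ∈ U, HasDerivAt (fun t => deriv b₁ (d t))
      (deriv (deriv b₁) (d y) * deriv d y) y := fun y hy => (hC2 (d y)).comp y (hd1 y hy)
  have hCd3 : ∀ y ∈ U, HasDerivAt (fun t => deriv (deriv b₁) (d t))
      (deriv (deriv (deriv b₁)) (d y) * deriv d y) y := fun y hy => (hC3 (d y)).comp y (hd1 y hy)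
  have hCd4 : ∀ y ∈ U, HasDerivAt (fun t => deriv (deriv (deriv b₁)) (d t))
      (deriv (deriv (deriv (deriv b₁))) (d y) * deriv d y) y :=
    fun y hy => (hC4 (d y)).comp y (hd1 y hy)
  have hE0 : ∀ y ∈ U, b₀ (d y) + b₁ (d y) * y ^ 2 + c y * y ^ 4 = 0 := by
    intro y hy
    have h := heq y hy
    simp only [hc_def]
    linear_combination h
  have zero_deriv : ∀ {f g : ℝ → ℝ}, (∀ y ∈ U, f y = 0) → (∀ y ∈ U, HasDerivAt f (g y) y) →
      ∀ y ∈ U, g y = 0 := by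
    intro f g hf hfg y hy
    have he : f =ᶠ[nhds y] fun _ => (0 : ℝ) :=
      Filter.eventuallyEq_of_mem (hU.mem_nhds hy) hf
    exact (hfg y hy).unique ((hasDerivAt_const y (0 : ℝ)).congr_of_eventuallyEq he)
  -- step 1
  have hG0der : ∀ y ∈ U, HasDerivAt (fun y => b₀ (d y) + b₁ (d y) * y ^ 2 + c y * y ^ 4)
      (deriv b₀ (d y) * deriv d y + deriv b₁ (d y) * deriv d y * y ^ 2 + 2 * (b₁ (d y) * y) +
        deriv c y * y ^ 4 + 4 * (c y * y ^ 3)) y := by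
    intro y hy
    have h := ((hBd1 y hy).add ((hCd1 y hy).mul (hasDerivAt_pow 2 y))).add
      ((hc1 y hy).mul (hasDerivAt_pow 4 y))
    refine h.congr_deriv ?_
    push_cast
    ring
  have hE1 := zero_deriv hE0 hG0der
  -- step 2
  have hG1der : ∀ y ∈ U, HasDerivAt
      (fun y => deriv b₀ (d y) * deriv d y + deriv b₁ (d y) * deriv d y * y ^ 2 +
        2 * (b₁ (d y) * y) + deriv c y * y ^ 4 + 4 * (c y * y ^ 3))
      (deriv (deriv b₀) (d y) * deriv d y ^ 2 + deriv b₀ (d y) * deriv (deriv d) y +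
        deriv (deriv b₁) (d y) * deriv d y ^ 2 * y ^ 2 +
        deriv b₁ (d y) * deriv (deriv d) y * y ^ 2 +
        4 * (deriv b₁ (d y) * deriv d y * y) + 2 * b₁ (d y) +
        deriv (deriv c) y * y ^ 4 + 8 * (deriv c y * y ^ 3) + 12 * (c y * y ^ 2)) y := by
    intro y hy
    have h := (((((hBd2 y hy).mul (hd2 y hy)).add
      ((((hCd2 y hy).mul (hd2 y hy)).mul (hasDerivAt_pow 2 y)))).add
      (((hCd1 y hy).mul (hasDerivAt_id' y)).const_mul 2)).add
      ((hc2 y hy).mul (hasDerivAt_pow 4 y))).add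
      (((hc1 y hy).mul (hasDerivAt_pow 3 y)).const_mul 4)
    refine h.congr_deriv ?_
    push_cast [Pi.mul_apply, Pi.pow_apply]
    ring
  have hE2 := zero_deriv hE1 hG1der
  -- step 3
  have hG2der : ∀ y ∈ U, HasDerivAt
      (fun y => deriv (deriv b₀) (d y) * deriv d y ^ 2 + deriv b₀ (d y) * deriv (deriv d) y +
        deriv (deriv b₁) (d y) * deriv d y ^ 2 * y ^ 2 +
        deriv b₁ (d y) * deriv (deriv d) y * y ^ 2 +
        4 * (deriv b₁ (d y) * deriv d y * y) + 2 * b₁ (d y) +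
        deriv (deriv c) y * y ^ 4 + 8 * (deriv c y * y ^ 3) + 12 * (c y * y ^ 2))
      (deriv (deriv (deriv b₀)) (d y) * deriv d y ^ 3 +
        3 * (deriv (deriv b₀) (d y) * deriv d y * deriv (deriv d) y) +
        deriv b₀ (d y) * deriv (deriv (deriv d)) y +
        deriv (deriv (deriv b₁)) (d y) * deriv d y ^ 3 * y ^ 2 +
        3 * (deriv (deriv b₁) (d y) * deriv d y * deriv (deriv d) y * y ^ 2) +
        6 * (deriv (deriv b₁) (d y) * deriv d y ^ 2 * y) +
        deriv b₁ (d y) * deriv (deriv (deriv d)) y * y ^ 2 +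
        6 * (deriv b₁ (d y) * deriv (deriv d) y * y) +
        6 * (deriv b₁ (d y) * deriv d y) +
        deriv (deriv (deriv c)) y * y ^ 4 + 12 * (deriv (deriv c) y * y ^ 3) +
        36 * (deriv c y * y ^ 2) + 24 * (c y * y)) y := by
    intro y hy
    have h := (((((((((hBd3 y hy).mul ((hd2 y hy).pow 2)).add
      ((hBd2 y hy).mul (hd3 y hy))).add
      (((hCd3 y hy).mul ((hd2 y hy).pow 2)).mul (hasDerivAt_pow 2 y))).add
      ((((hCd2 y hy).mul (hd3 y hy)).mul (hasDerivAt_pow 2 y)))).add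
      ((((hCd2 y hy).mul (hd2 y hy)).mul (hasDerivAt_id' y)).const_mul 4)).add
      ((hCd1 y hy).const_mul 2)).add
      ((hc3 y hy).mul (hasDerivAt_pow 4 y))).add
      (((hc2 y hy).mul (hasDerivAt_pow 3 y)).const_mul 8)).add
      (((hc1 y hy).mul (hasDerivAt_pow 2 y)).const_mul 12)
    refine h.congr_deriv ?_
    push_cast [Pi.mul_apply, Pi.pow_apply]
    ring
  have hE3 := zero_deriv hE2 hG2der
  -- values at 0
  have e1 := hE1 0 h0U
  rw [hd0] at e1
  norm_num at e1
  have hu1 : deriv d 0 = 0 := by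
    rcases e1 with h | h
    · exact absurd h hβ
    · exact h
  have e2 := hE2 0 h0U
  rw [hd0, hu1] at e2
  norm_num at e2
  have hu2 : deriv (deriv d) 0 = -2 * b₁ 0 / deriv b₀ 0 := by
    field_simp
    linear_combination e2
  have e3 := hE3 0 h0U
  rw [hd0, hu1] at e3
  norm_num at e3
  have hu3 : deriv (deriv (deriv d)) 0 = 0 := by
    rcases e3 with h | h
    · exact absurd h hβ
    · exact h
  -- step 4 at 0
  have h40 : HasDerivAt
      (fun y => deriv (deriv (deriv b₀)) (d y) * deriv d y ^ 3 +
        3 * (deriv (deriv b₀) (d y) * deriv d y * deriv (deriv d) y) +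
        deriv b₀ (d y) * deriv (deriv (deriv d)) y +
        deriv (deriv (deriv b₁)) (d y) * deriv d y ^ 3 * y ^ 2 +
        3 * (deriv (deriv b₁) (d y) * deriv d y * deriv (deriv d) y * y ^ 2) +
        6 * (deriv (deriv b₁) (d y) * deriv d y ^ 2 * y) +
        deriv b₁ (d y) * deriv (deriv (deriv d)) y * y ^ 2 +
        6 * (deriv b₁ (d y) * deriv (deriv d) y * y) +
        6 * (deriv b₁ (d y) * deriv d y) +
        deriv (deriv (deriv c)) y * y ^ 4 + 12 * (deriv (deriv c) y * y ^ 3) +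
        36 * (deriv c y * y ^ 2) + 24 * (c y * y))
      (deriv (deriv (deriv (deriv b₀))) (d 0) * deriv d 0 ^ 4 +
        6 * (deriv (deriv (deriv b₀)) (d 0) * deriv d 0 ^ 2 * deriv (deriv d) 0) +
        3 * (deriv (deriv b₀) (d 0) * deriv (deriv d) 0 ^ 2) +
        4 * (deriv (deriv b₀) (d 0) * deriv d 0 * deriv (deriv (deriv d)) 0) +
        deriv b₀ (d 0) * deriv (deriv (deriv (deriv d))) 0 +
        12 * (deriv (deriv b₁) (d 0) * deriv d 0 ^ 2) +
        12 * (deriv b₁ (d 0) * deriv (deriv d) 0) +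
        24 * c 0) 0 := by
    have h := (((((((((((((hBd4 0 h0U).mul ((hd2 0 h0U).pow 3)).add
      ((((hBd3 0 h0U).mul (hd2 0 h0U)).mul (hd3 0 h0U)).const_mul 3)).add
      ((hBd2 0 h0U).mul (hd4 0 h0U))).add
      ((((hCd4 0 h0U).mul ((hd2 0 h0U).pow 3)).mul (hasDerivAt_pow 2 (0:ℝ))))).add
      ((((((hCd3 0 h0U).mul (hd2 0 h0U)).mul (hd3 0 h0U)).mul
        (hasDerivAt_pow 2 (0:ℝ))).const_mul 3))).add
      ((((hCd3 0 h0U).mul ((hd2 0 h0U).pow 2)).mul (hasDerivAt_id' (0:ℝ))).const_mul 6)).add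
      ((((hCd2 0 h0U).mul (hd4 0 h0U)).mul (hasDerivAt_pow 2 (0:ℝ))))).add
      ((((hCd2 0 h0U).mul (hd3 0 h0U)).mul (hasDerivAt_id' (0:ℝ))).const_mul 6)).add
      (((hCd2 0 h0U).mul (hd2 0 h0U)).const_mul 6)).add
      ((hc4 0 h0U).mul (hasDerivAt_pow 4 (0:ℝ)))).add
      (((hc3 0 h0U).mul (hasDerivAt_pow 3 (0:ℝ))).const_mul 12)).add
      (((hc2 0 h0U).mul (hasDerivAt_pow 2 (0:ℝ))).const_mul 36)).add
      (((hc1 0 h0U).mul (hasDerivAt_id' (0:ℝ))).const_mul 24)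
    refine h.congr_deriv ?_
    push_cast [Pi.mul_apply, Pi.pow_apply]
    ring
  have hX := h40.unique ((hasDerivAt_const 0 (0 : ℝ)).congr_of_eventuallyEq
    (Filter.eventuallyEq_of_mem (hU.mem_nhds h0U) hE3))
  rw [hd0, hu1, hu3] at hX
  have hc0 : c 0 = b₃ 0 0 := by
    simp only [hc_def]
    rw [hd0]
    ring
  rw [hc0] at hX
  refine ⟨hu1, hu2, ?_⟩
  have hX' : deriv b₀ 0 * deriv (deriv (deriv (deriv d))) 0 +
      3 * (deriv (deriv b₀) 0 * deriv (deriv d) 0 ^ 2) +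
      12 * (deriv b₁ 0 * deriv (deriv d) 0) + 24 * b₃ 0 0 = 0 := by
    linear_combination hX
  field_simp
  linear_combination (deriv b₀ 0 ^ 2) * hX' +
    (-3 * deriv (deriv b₀) 0 * (deriv b₀ 0 * deriv (deriv d) 0 - 2 * b₁ 0) -
      12 * deriv b₁ 0 * deriv b₀ 0) * e2


lemma aux_part1 (b₀ b₁ : ℝ → ℝ) (b₃ : ℝ → ℝ → ℝ)
    (hb₀ : ContDiff ℝ (⊤ : ℕ∞) b₀) (hb₁ : ContDiff ℝ (⊤ : ℕ∞) b₁)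
    (hb₃ : ContDiff ℝ (⊤ : ℕ∞) (Function.uncurry b₃))
    (hb₀0 : b₀ 0 = 0) (hβ : deriv b₀ 0 ≠ 0) :
    ∃ ε > (0 : ℝ), ∃ d : ℝ → ℝ,
      ContDiffOn ℝ (⊤ : ℕ∞) d (Set.Ioo (-ε) ε) ∧ d 0 = 0 ∧
      ∀ y ∈ Set.Ioo (-ε) ε,
        b₀ (d y) + b₁ (d y) * y ^ 2 +
          (1 / 2) * (b₃ (d y) y + b₃ (d y) (-y)) * y ^ 4 = 0 := by
  classical
  set F : ℝ × ℝ → ℝ := fun p =>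
    b₀ p.1 + b₁ p.1 * p.2 ^ 2 +
      (1 / 2) * (Function.uncurry b₃ (p.1, p.2) + Function.uncurry b₃ (p.1, -p.2)) * p.2 ^ 4
    with hF_def
  have hF : ContDiff ℝ (⊤ : ℕ∞) F := by
    apply ContDiff.add
    apply ContDiff.add
    · exact hb₀.comp contDiff_fst
    · exact (hb₁.comp contDiff_fst).mul (contDiff_snd.pow 2)
    · refine ContDiff.mul (contDiff_const.mul ?_) (contDiff_snd.pow 4)
      exact (hb₃.comp (contDiff_fst.prodMk contDiff_snd)).add
        (hb₃.comp (contDiff_fst.prodMk contDiff_snd.neg))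
  set Φ : ℝ × ℝ → ℝ × ℝ := fun p => (F p, p.2) with hΦ_def
  have hΦ : ContDiff ℝ (⊤ : ℕ∞) Φ := hF.prodMk contDiff_snd
  have hFdiff : Differentiable ℝ F := hF.differentiable (by simp)
  -- the partial derivative in the x-direction
  have hFx0 : fderiv ℝ F (0, 0) (1, 0) = deriv b₀ 0 := by
    have hcurve : HasDerivAt (fun t : ℝ => ((t, (0 : ℝ)) : ℝ × ℝ)) (1, 0) 0 :=
      (hasDerivAt_id' (0:ℝ)).prodMk (hasDerivAt_const (0:ℝ) (0:ℝ))
    have h1 : HasDerivAt (fun t => F (t, 0)) (fderiv ℝ F (0, 0) (1, 0)) 0 :=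
      HasFDerivAt.comp_hasDerivAt_of_eq 0 (hFdiff ((0 : ℝ), (0 : ℝ))).hasFDerivAt hcurve rfl
    have h2 : (fun t => F (t, 0)) = b₀ := by
      funext t
      simp [hF_def, Function.uncurry]
    rw [h2] at h1
    exact h1.deriv.symm
  -- invertible linear maps at points with nonzero x-derivative
  have keyEquiv : ∀ p : ℝ × ℝ, fderiv ℝ F p (1, 0) ≠ 0 →
      ∃ e : (ℝ × ℝ) ≃L[ℝ] (ℝ × ℝ), HasFDerivAt Φ (e : (ℝ × ℝ) →L[ℝ] ℝ × ℝ) p := by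
    intro p hp
    set K := fderiv ℝ F p with hK_def
    have hexp : ∀ v : ℝ × ℝ, K v = v.1 * K (1, 0) + v.2 * K (0, 1) := by
      intro v
      have hv : v = v.1 • ((1 : ℝ), (0 : ℝ)) + v.2 • ((0 : ℝ), (1 : ℝ)) := by
        ext <;> simp
      conv_lhs => rw [hv]
      rw [map_add, map_smul, map_smul]
      simp [smul_eq_mul]
    set L : (ℝ × ℝ) →L[ℝ] ℝ × ℝ := K.prod (ContinuousLinearMap.snd ℝ ℝ ℝ) with hL_def
    set M : (ℝ × ℝ) →L[ℝ] ℝ × ℝ :=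
      ((K (1, 0))⁻¹ • (ContinuousLinearMap.fst ℝ ℝ ℝ -
        K (0, 1) • ContinuousLinearMap.snd ℝ ℝ ℝ)).prod (ContinuousLinearMap.snd ℝ ℝ ℝ)
      with hM_def
    have hleft : Function.LeftInverse M L := by
      intro v
      simp only [hL_def, hM_def, ContinuousLinearMap.prod_apply, ContinuousLinearMap.smul_apply,
        ContinuousLinearMap.coe_sub', Pi.sub_apply, ContinuousLinearMap.coe_fst',
        ContinuousLinearMap.coe_snd', smul_eq_mul]
      rw [hexp v]
      ext
      · simp only
        field_simp
        ring
      · simp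
    have hright : Function.RightInverse M L := by
      intro w
      simp only [hL_def, hM_def, ContinuousLinearMap.prod_apply, ContinuousLinearMap.smul_apply,
        ContinuousLinearMap.coe_sub', Pi.sub_apply, ContinuousLinearMap.coe_fst',
        ContinuousLinearMap.coe_snd', smul_eq_mul]
      rw [hexp (((K (1, 0))⁻¹ * (w.1 - K (0, 1) * w.2), w.2) : ℝ × ℝ)]
      ext
      · simp only
        field_simp
        ring
      · simp
    refine ⟨ContinuousLinearEquiv.equivOfInverse L M hleft hright, ?_⟩
    have : HasFDerivAt Φ L p :=
      (hFdiff p).hasFDerivAt.prodMk ((ContinuousLinearMap.snd ℝ ℝ ℝ).hasFDerivAt)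
    exact this
  obtain ⟨e0, he0⟩ := keyEquiv (0, 0) (by rw [hFx0]; exact hβ)
  have hn : ((⊤ : ℕ∞) : WithTop ℕ∞) ≠ 0 := by simp
  have hΦat : ContDiffAt ℝ (⊤ : ℕ∞) Φ (0, 0) := hΦ.contDiffAt
  set P := hΦat.toOpenPartialHomeomorph Φ he0 hn with hP_def
  have hPcoe : (P : ℝ × ℝ → ℝ × ℝ) = Φ := ContDiffAt.toOpenPartialHomeomorph_coe hΦat he0 hn
  have hsrc : (0, 0) ∈ P.source := ContDiffAt.mem_toOpenPartialHomeomorph_source hΦat he0 hn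
  have hΦ00 : Φ (0, 0) = (0, 0) := by
    simp [hΦ_def, hF_def, Function.uncurry, hb₀0]
  have htgt : ((0 : ℝ), (0 : ℝ)) ∈ P.target := by
    have := ContDiffAt.image_mem_toOpenPartialHomeomorph_target hΦat he0 hn
    rwa [hΦ00] at this
  have hsymm00 : P.symm (0, 0) = (0, 0) := by
    have := P.left_inv hsrc
    rw [hPcoe, hΦ00] at this
    exact this
  -- the good open set
  have hVopen : IsOpen {p : ℝ × ℝ | fderiv ℝ F p (1, 0) ≠ 0} := by
    have hcont : Continuous fun p : ℝ × ℝ => fderiv ℝ F p (1, 0) :=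
      (hF.continuous_fderiv (by simp)).clm_apply continuous_const
    exact isOpen_compl_singleton.preimage hcont
  set W := P.target ∩ P.symm ⁻¹' {p : ℝ × ℝ | fderiv ℝ F p (1, 0) ≠ 0} with hW_def
  have hWopen : IsOpen W :=
    P.continuousOn_symm.isOpen_inter_preimage P.open_target hVopen
  have h00W : ((0 : ℝ), (0 : ℝ)) ∈ W := by
    refine ⟨htgt, ?_⟩
    simp only [Set.mem_preimage, hsymm00, Set.mem_setOf_eq, hFx0]
    exact hβ
  have hline : Continuous fun y : ℝ => (((0 : ℝ), y) : ℝ × ℝ) :=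
    continuous_const.prodMk continuous_id
  have hnhds : (fun y : ℝ => (((0 : ℝ), y) : ℝ × ℝ)) ⁻¹' W ∈ nhds (0 : ℝ) :=
    hline.continuousAt.preimage_mem_nhds (hWopen.mem_nhds h00W)
  obtain ⟨δ, hδ, hball⟩ := Metric.mem_nhds_iff.mp hnhds
  have hsub : Set.Ioo (-δ) δ ⊆ (fun y : ℝ => (((0 : ℝ), y) : ℝ × ℝ)) ⁻¹' W := by
    intro y hy
    apply hball
    rw [Real.ball_eq_Ioo]
    simpa using hy
  refine ⟨δ, hδ, fun y => (P.symm (0, y)).1, ?_, ?_, ?_⟩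
  · intro y hy
    obtain ⟨hyT, hyV⟩ := hsub hy
    obtain ⟨e, he⟩ := keyEquiv (P.symm (0, y)) hyV
    have hsymm_cd : ContDiffAt ℝ (⊤ : ℕ∞) P.symm (0, y) := by
      apply P.contDiffAt_symm hyT
      · rw [hPcoe]; exact he
      · rw [hPcoe]; exact hΦ.contDiffAt
    have hlineAt : ContDiffAt ℝ (⊤ : ℕ∞) (fun y : ℝ => (((0 : ℝ), y) : ℝ × ℝ)) y :=
      (contDiff_const.prodMk contDiff_id).contDiffAt
    have hcomp : ContDiffAt ℝ (⊤ : ℕ∞) (fun y : ℝ => P.symm (0, y)) y :=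
      hsymm_cd.comp y hlineAt
    exact ((contDiff_fst.contDiffAt).comp y hcomp).contDiffWithinAt
  · simp only []
    rw [hsymm00]
  · intro y hy
    have hyT := (hsub hy).1
    have hrinv := P.right_inv hyT
    rw [hPcoe] at hrinv
    have h1 : F (P.symm (0, y)) = 0 := congrArg Prod.fst hrinv
    have h2 : (P.symm (0, y)).2 = y := congrArg Prod.snd hrinv
    have h3 : F ((P.symm (0, y)).1, (P.symm (0, y)).2) = 0 := by
      rw [Prod.mk.eta]; exact h1
    rw [h2] at h3
    simpa [hF_def, Function.uncurry] using h3

/-- If `b₀'(0) ≠ 0`, there exist `ε > 0` and a smooth `d : (−ε,ε) → ℝ`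
with `d(0) = 0` and `b₀(d(y)) + b₁(d(y))y² + ½(b₃(d(y),y) + b₃(d(y),−y))y⁴ = 0` for
`|y| < ε` (parametrising the double point curve of the folded cuspidal edge), and any
such `d` satisfies `d'(0) = 0`, `d''(0) = −2b₁(0)/b₀'(0)` and
`d⁗(0) = −(12/b₀'(0)³)(2b₃(0,0)b₀'(0)² + b₁(0)(b₁(0)b₀''(0) − 2b₀'(0)b₁'(0)))`. -/
theorem stmt9 (a b₀ b₁ b₂ : ℝ → ℝ) (b₃ : ℝ → ℝ → ℝ)
    (ha : ContDiff ℝ (⊤ : ℕ∞) a) (hb₀ : ContDiff ℝ (⊤ : ℕ∞) b₀)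
    (hb₁ : ContDiff ℝ (⊤ : ℕ∞) b₁) (hb₂ : ContDiff ℝ (⊤ : ℕ∞) b₂)
    (hb₃ : ContDiff ℝ (⊤ : ℕ∞) (Function.uncurry b₃))
    (ha0 : a 0 = 0) (ha0' : deriv a 0 = 0) (hb₀0 : b₀ 0 = 0)
    (hb₀0' : deriv b₀ 0 ≠ 0) :
    (∃ ε > (0 : ℝ), ∃ d : ℝ → ℝ,
      ContDiffOn ℝ (⊤ : ℕ∞) d (Set.Ioo (-ε) ε) ∧ d 0 = 0 ∧
      ∀ y ∈ Set.Ioo (-ε) ε,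
        b₀ (d y) + b₁ (d y) * y ^ 2 +
          (1 / 2) * (b₃ (d y) y + b₃ (d y) (-y)) * y ^ 4 = 0) ∧
    (∀ ε : ℝ, 0 < ε → ∀ d : ℝ → ℝ,
      ContDiffOn ℝ (⊤ : ℕ∞) d (Set.Ioo (-ε) ε) → d 0 = 0 →
      (∀ y ∈ Set.Ioo (-ε) ε,
        b₀ (d y) + b₁ (d y) * y ^ 2 +
          (1 / 2) * (b₃ (d y) y + b₃ (d y) (-y)) * y ^ 4 = 0) →
      deriv d 0 = 0 ∧
      iteratedDeriv 2 d 0 = -2 * b₁ 0 / deriv b₀ 0 ∧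
      iteratedDeriv 4 d 0 = -(12 / deriv b₀ 0 ^ 3) *
        (2 * b₃ 0 0 * deriv b₀ 0 ^ 2 +
          b₁ 0 * (b₁ 0 * iteratedDeriv 2 b₀ 0 - 2 * deriv b₀ 0 * deriv b₁ 0))) := by
  constructor
  · exact aux_part1 b₀ b₁ b₃ hb₀ hb₁ hb₃ hb₀0 hb₀0'
  · intro ε hε d hd hd0 heqn
    obtain ⟨h1, h2, h4⟩ := aux_part2 b₀ b₁ b₃ hb₀ hb₁ hb₃ hb₀0' ε hε d hd hd0 heqn
    have it2 : ∀ f : ℝ → ℝ, iteratedDeriv 2 f 0 = deriv (deriv f) 0 := by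
      intro f; rw [iteratedDeriv_eq_iterate]; rfl
    have it4 : iteratedDeriv 4 d 0 = deriv (deriv (deriv (deriv d))) 0 := by
      rw [iteratedDeriv_eq_iterate]; rfl
    exact ⟨h1, by rw [it2]; exact h2, by rw [it4, it2]; exact h4⟩
end

section
/- Assume b₀'(0) ≠ 0, let ε > 0 and let d : (−ε, ε) → ℝ be a smooth function with d(0) = 0 satisfying b₀(d(y)) + b₁(d(y))·y² + ½(b₃(d(y), y) + b₃(d(y), −y))·y⁴ = 0 for all |y| < ε. Define the singular space curve d̃(y) = f(d(y), y), where f(x,y) = (x, a(x) + y²/2, b₀(x) + b₁(x)y² + b₂(x)y³ + b₃(x,y)y⁴) is the cuspidal edge before folding. Then d̃'(0) = (0,0,0), d̃''(0) = (−2b₁(0)/b₀'(0), 1, 0), and d̃'''(0) = (0, 0, 6b₂(0)). In particular, if b₂(0) ≠ 0 then d̃''(0) × d̃'''(0) ≠ 0, i.e. 0 is a (2,3)-type singular point of d̃. -/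
open Real Set

private lemma eqOn_deriv {E : Type*} [NormedAddCommGroup E] [NormedSpace ℝ E]
    {f : ℝ → E} {g : ℝ → E} {U : Set ℝ} (h : ∀ x ∈ U, HasDerivAt f (g x) x) :
    Set.EqOn (deriv f) g U := fun x hx => (h x hx).deriv

private lemma eqOn_deriv_of_eqOn {E : Type*} [NormedAddCommGroup E] [NormedSpace ℝ E]
    {f g : ℝ → E} {U : Set ℝ} (hU : IsOpen U) (h : Set.EqOn f g U) :
    Set.EqOn (deriv f) (deriv g) U := fun x hx =>
  Filter.EventuallyEq.deriv_eq (Filter.eventuallyEq_of_mem (hU.mem_nhds hx) h)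

private lemma hasDerivAt_of_contDiffOn {f : ℝ → ℝ} {U : Set ℝ} (hU : IsOpen U)
    (hf : ContDiffOn ℝ (⊤ : ℕ∞) f U) {x : ℝ} (hx : x ∈ U) : HasDerivAt f (deriv f x) x :=
  ((hf.contDiffAt (hU.mem_nhds hx)).differentiableAt (by simp)).hasDerivAt

private lemma contDiffOn_deriv {f : ℝ → ℝ} {U : Set ℝ} (hU : IsOpen U)
    (hf : ContDiffOn ℝ (⊤ : ℕ∞) f U) : ContDiffOn ℝ (⊤ : ℕ∞) (deriv f) U :=
  hf.deriv_of_isOpen hU (le_refl _)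

private lemma contDiff_deriv {f : ℝ → ℝ} (hf : ContDiff ℝ (⊤ : ℕ∞) f) :
    ContDiff ℝ (⊤ : ℕ∞) (deriv f) := (contDiff_infty_iff_deriv.mp hf).2

/-- derivatives of `u ∘ d` at `0` up to order 3. -/
private lemma comp_chain {u dd : ℝ → ℝ} {U : Set ℝ} (hU : IsOpen U) (h0 : (0:ℝ) ∈ U)
    (hu : ContDiff ℝ (⊤ : ℕ∞) u) (hdd : ContDiffOn ℝ (⊤ : ℕ∞) dd U) :
    deriv (fun y => u (dd y)) 0 = deriv u (dd 0) * deriv dd 0 ∧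
    deriv (deriv (fun y => u (dd y))) 0 =
      deriv (deriv u) (dd 0) * deriv dd 0 * deriv dd 0 +
        deriv u (dd 0) * deriv (deriv dd) 0 ∧
    deriv (deriv (deriv (fun y => u (dd y)))) 0 =
      deriv (deriv (deriv u)) (dd 0) * deriv dd 0 ^ 3 +
        3 * deriv (deriv u) (dd 0) * deriv dd 0 * deriv (deriv dd) 0 +
        deriv u (dd 0) * deriv (deriv (deriv dd)) 0 := by
  have hu1 : ContDiff ℝ (⊤ : ℕ∞) (deriv u) := contDiff_deriv hu
  have hu2 : ContDiff ℝ (⊤ : ℕ∞) (deriv (deriv u)) := contDiff_deriv hu1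
  have hdd1 : ContDiffOn ℝ (⊤ : ℕ∞) (deriv dd) U := contDiffOn_deriv hU hdd
  have hdd2 : ContDiffOn ℝ (⊤ : ℕ∞) (deriv (deriv dd)) U := contDiffOn_deriv hU hdd1
  have hud : ∀ (v : ℝ → ℝ), ContDiff ℝ (⊤ : ℕ∞) v → ∀ x ∈ U,
      HasDerivAt (fun y => v (dd y)) (deriv v (dd x) * deriv dd x) x := fun v hv x hx =>
    ((hv.differentiable (by simp)) (dd x)).hasDerivAt.comp x
      (hasDerivAt_of_contDiffOn hU hdd hx)
  -- level 1
  have h1 : ∀ x ∈ U, HasDerivAt (fun y => u (dd y)) (deriv u (dd x) * deriv dd x) x :=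
    hud u hu
  have e1 : Set.EqOn (deriv (fun y => u (dd y)))
      (fun x => deriv u (dd x) * deriv dd x) U := eqOn_deriv h1
  -- level 2
  have h2 : ∀ x ∈ U, HasDerivAt (fun x => deriv u (dd x) * deriv dd x)
      ((deriv (deriv u) (dd x) * deriv dd x) * deriv dd x
        + deriv u (dd x) * deriv (deriv dd) x) x := fun x hx =>
    (hud (deriv u) hu1 x hx).mul (hasDerivAt_of_contDiffOn hU hdd1 hx)
  have e2 : Set.EqOn (deriv fun x => deriv u (dd x) * deriv dd x)
      (fun x => (deriv (deriv u) (dd x) * deriv dd x) * deriv dd x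
        + deriv u (dd x) * deriv (deriv dd) x) U := eqOn_deriv h2
  -- level 3 (at 0 only)
  have h3 : HasDerivAt (fun x => (deriv (deriv u) (dd x) * deriv dd x) * deriv dd x
        + deriv u (dd x) * deriv (deriv dd) x)
      ((((deriv (deriv (deriv u)) (dd 0) * deriv dd 0) * deriv dd 0
          + deriv (deriv u) (dd 0) * deriv (deriv dd) 0) * deriv dd 0
        + (deriv (deriv u) (dd 0) * deriv dd 0) * deriv (deriv dd) 0)
        + ((deriv (deriv u) (dd 0) * deriv dd 0) * deriv (deriv dd) 0
          + deriv u (dd 0) * deriv (deriv (deriv dd)) 0)) 0 := by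
    exact (((hud (deriv (deriv u)) hu2 0 h0).mul
        (hasDerivAt_of_contDiffOn hU hdd1 h0)).mul
        (hasDerivAt_of_contDiffOn hU hdd1 h0)).add
      ((hud (deriv u) hu1 0 h0).mul (hasDerivAt_of_contDiffOn hU hdd2 h0))
  refine ⟨e1 h0, ?_, ?_⟩
  · rw [eqOn_deriv_of_eqOn hU e1 h0, e2 h0]
  · rw [eqOn_deriv_of_eqOn hU (eqOn_deriv_of_eqOn hU e1) h0,
      eqOn_deriv_of_eqOn hU e2 h0, h3.deriv]
    ring

/-- derivatives of `c y * y ^ 2` at 0 -/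
private lemma chain_sq {c : ℝ → ℝ} {U : Set ℝ} (hU : IsOpen U) (h0 : (0:ℝ) ∈ U)
    (hc : ContDiffOn ℝ (⊤ : ℕ∞) c U) :
    deriv (fun y => c y * y ^ 2) 0 = 0 ∧
    deriv (deriv (fun y => c y * y ^ 2)) 0 = 2 * c 0 ∧
    deriv (deriv (deriv (fun y => c y * y ^ 2))) 0 = 6 * deriv c 0 := by
  have hc1 := contDiffOn_deriv hU hc
  have hc2 := contDiffOn_deriv hU hc1
  have h1 : ∀ x ∈ U, HasDerivAt (fun y => c y * y ^ 2)
      (deriv c x * x ^ 2 + c x * (2 * x)) x := by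
    intro x hx
    have := (hasDerivAt_of_contDiffOn hU hc hx).mul (hasDerivAt_pow 2 x)
    refine this.congr_deriv ?_
    push_cast; ring
  have e1 := eqOn_deriv h1
  have h2 : ∀ x ∈ U, HasDerivAt (fun x => deriv c x * x ^ 2 + c x * (2 * x))
      ((deriv (deriv c) x * x ^ 2 + deriv c x * (2 * x))
        + (deriv c x * (2 * x) + c x * 2)) x := by
    intro x hx
    have := ((hasDerivAt_of_contDiffOn hU hc1 hx).mul (hasDerivAt_pow 2 x)).add
      ((hasDerivAt_of_contDiffOn hU hc hx).mul ((hasDerivAt_id' x).const_mul (2:ℝ)))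
    refine this.congr_deriv ?_
    push_cast; ring
  have e2 := eqOn_deriv h2
  have h3 : HasDerivAt (fun x => (deriv (deriv c) x * x ^ 2 + deriv c x * (2 * x))
        + (deriv c x * (2 * x) + c x * 2))
      (((deriv (deriv (deriv c)) 0 * 0 ^ 2 + deriv (deriv c) 0 * (2 * 0))
        + (deriv (deriv c) 0 * (2 * 0) + deriv c 0 * (2 * 1)))
        + ((deriv (deriv c) 0 * (2 * 0) + deriv c 0 * (2 * 1)) + deriv c 0 * 2)) 0 := by
    have := (((hasDerivAt_of_contDiffOn hU hc2 h0).mul (hasDerivAt_pow 2 0)).add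
        ((hasDerivAt_of_contDiffOn hU hc1 h0).mul ((hasDerivAt_id' 0).const_mul (2:ℝ)))).add
      (((hasDerivAt_of_contDiffOn hU hc1 h0).mul ((hasDerivAt_id' 0).const_mul (2:ℝ))).add
        ((hasDerivAt_of_contDiffOn hU hc h0).mul_const 2))
    refine this.congr_deriv ?_
    push_cast; ring
  refine ⟨?_, ?_, ?_⟩
  · rw [e1 h0]; ring
  · rw [eqOn_deriv_of_eqOn hU e1 h0, e2 h0]; ring
  · rw [eqOn_deriv_of_eqOn hU (eqOn_deriv_of_eqOn hU e1) h0,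
      eqOn_deriv_of_eqOn hU e2 h0, h3.deriv]
    ring
/-- derivatives of `c y * y ^ 3` at 0 -/
private lemma chain_cube {c : ℝ → ℝ} {U : Set ℝ} (hU : IsOpen U) (h0 : (0:ℝ) ∈ U)
    (hc : ContDiffOn ℝ (⊤ : ℕ∞) c U) :
    deriv (fun y => c y * y ^ 3) 0 = 0 ∧
    deriv (deriv (fun y => c y * y ^ 3)) 0 = 0 ∧
    deriv (deriv (deriv (fun y => c y * y ^ 3))) 0 = 6 * c 0 := by
  have hc1 := contDiffOn_deriv hU hc
  have hc2 := contDiffOn_deriv hU hc1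
  have h1 : ∀ x ∈ U, HasDerivAt (fun y => c y * y ^ 3)
      (deriv c x * x ^ 3 + c x * (3 * x ^ 2)) x := by
    intro x hx
    have := (hasDerivAt_of_contDiffOn hU hc hx).mul (hasDerivAt_pow 3 x)
    refine this.congr_deriv ?_
    push_cast; ring
  have e1 := eqOn_deriv h1
  have h2 : ∀ x ∈ U, HasDerivAt (fun x => deriv c x * x ^ 3 + c x * (3 * x ^ 2))
      ((deriv (deriv c) x * x ^ 3 + deriv c x * (3 * x ^ 2))
        + (deriv c x * (3 * x ^ 2) + c x * (6 * x))) x := by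
    intro x hx
    have := ((hasDerivAt_of_contDiffOn hU hc1 hx).mul (hasDerivAt_pow 3 x)).add
      ((hasDerivAt_of_contDiffOn hU hc hx).mul ((hasDerivAt_pow 2 x).const_mul (3:ℝ)))
    refine this.congr_deriv ?_
    push_cast; ring
  have e2 := eqOn_deriv h2
  have h3 : HasDerivAt (fun x => (deriv (deriv c) x * x ^ 3 + deriv c x * (3 * x ^ 2))
        + (deriv c x * (3 * x ^ 2) + c x * (6 * x)))
      (((deriv (deriv (deriv c)) 0 * 0 ^ 3 + deriv (deriv c) 0 * (3 * 0 ^ 2))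
        + (deriv (deriv c) 0 * (3 * 0 ^ 2) + deriv c 0 * (6 * 0)))
        + ((deriv (deriv c) 0 * (3 * 0 ^ 2) + deriv c 0 * (6 * 0)) + c 0 * 6)) 0 := by
    have := (((hasDerivAt_of_contDiffOn hU hc2 h0).mul (hasDerivAt_pow 3 0)).add
        ((hasDerivAt_of_contDiffOn hU hc1 h0).mul ((hasDerivAt_pow 2 0).const_mul (3:ℝ)))).add
      (((hasDerivAt_of_contDiffOn hU hc1 h0).mul ((hasDerivAt_pow 2 0).const_mul (3:ℝ))).add
        ((hasDerivAt_of_contDiffOn hU hc h0).mul ((hasDerivAt_id' 0).const_mul (6:ℝ))))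
    refine this.congr_deriv ?_
    push_cast; ring
  refine ⟨?_, ?_, ?_⟩
  · rw [e1 h0]; ring
  · rw [eqOn_deriv_of_eqOn hU e1 h0, e2 h0]; ring
  · rw [eqOn_deriv_of_eqOn hU (eqOn_deriv_of_eqOn hU e1) h0,
      eqOn_deriv_of_eqOn hU e2 h0, h3.deriv]
    ring

/-- derivatives of `c y * y ^ 4` at 0 -/
private lemma chain_quart {c : ℝ → ℝ} {U : Set ℝ} (hU : IsOpen U) (h0 : (0:ℝ) ∈ U)
    (hc : ContDiffOn ℝ (⊤ : ℕ∞) c U) :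
    deriv (fun y => c y * y ^ 4) 0 = 0 ∧
    deriv (deriv (fun y => c y * y ^ 4)) 0 = 0 ∧
    deriv (deriv (deriv (fun y => c y * y ^ 4))) 0 = 0 := by
  have hc1 := contDiffOn_deriv hU hc
  have hc2 := contDiffOn_deriv hU hc1
  have h1 : ∀ x ∈ U, HasDerivAt (fun y => c y * y ^ 4)
      (deriv c x * x ^ 4 + c x * (4 * x ^ 3)) x := by
    intro x hx
    have := (hasDerivAt_of_contDiffOn hU hc hx).mul (hasDerivAt_pow 4 x)
    refine this.congr_deriv ?_
    push_cast; ring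
  have e1 := eqOn_deriv h1
  have h2 : ∀ x ∈ U, HasDerivAt (fun x => deriv c x * x ^ 4 + c x * (4 * x ^ 3))
      ((deriv (deriv c) x * x ^ 4 + deriv c x * (4 * x ^ 3))
        + (deriv c x * (4 * x ^ 3) + c x * (12 * x ^ 2))) x := by
    intro x hx
    have := ((hasDerivAt_of_contDiffOn hU hc1 hx).mul (hasDerivAt_pow 4 x)).add
      ((hasDerivAt_of_contDiffOn hU hc hx).mul ((hasDerivAt_pow 3 x).const_mul (4:ℝ)))
    refine this.congr_deriv ?_
    push_cast; ring
  have e2 := eqOn_deriv h2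
  have h3 : HasDerivAt (fun x => (deriv (deriv c) x * x ^ 4 + deriv c x * (4 * x ^ 3))
        + (deriv c x * (4 * x ^ 3) + c x * (12 * x ^ 2)))
      (((deriv (deriv (deriv c)) 0 * 0 ^ 4 + deriv (deriv c) 0 * (4 * 0 ^ 3))
        + (deriv (deriv c) 0 * (4 * 0 ^ 3) + deriv c 0 * (12 * 0 ^ 2)))
        + ((deriv (deriv c) 0 * (4 * 0 ^ 3) + deriv c 0 * (12 * 0 ^ 2))
          + c 0 * (24 * 0))) 0 := by
    have := (((hasDerivAt_of_contDiffOn hU hc2 h0).mul (hasDerivAt_pow 4 0)).add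
        ((hasDerivAt_of_contDiffOn hU hc1 h0).mul ((hasDerivAt_pow 3 0).const_mul (4:ℝ)))).add
      (((hasDerivAt_of_contDiffOn hU hc1 h0).mul ((hasDerivAt_pow 3 0).const_mul (4:ℝ))).add
        ((hasDerivAt_of_contDiffOn hU hc h0).mul ((hasDerivAt_pow 2 0).const_mul (12:ℝ))))
    refine this.congr_deriv ?_
    push_cast; ring
  refine ⟨?_, ?_, ?_⟩
  · rw [e1 h0]; ring
  · rw [eqOn_deriv_of_eqOn hU e1 h0, e2 h0]; ring
  · rw [eqOn_deriv_of_eqOn hU (eqOn_deriv_of_eqOn hU e1) h0,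
      eqOn_deriv_of_eqOn hU e2 h0, h3.deriv]
    ring

/-- derivatives of a sum at 0 -/
private lemma sum_chain {F G : ℝ → ℝ} {U : Set ℝ} (hU : IsOpen U) (h0 : (0:ℝ) ∈ U)
    (hF : ContDiffOn ℝ (⊤ : ℕ∞) F U) (hG : ContDiffOn ℝ (⊤ : ℕ∞) G U) :
    deriv (fun y => F y + G y) 0 = deriv F 0 + deriv G 0 ∧
    deriv (deriv (fun y => F y + G y)) 0 = deriv (deriv F) 0 + deriv (deriv G) 0 ∧
    deriv (deriv (deriv (fun y => F y + G y))) 0 =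
      deriv (deriv (deriv F)) 0 + deriv (deriv (deriv G)) 0 := by
  have hF1 := contDiffOn_deriv hU hF
  have hG1 := contDiffOn_deriv hU hG
  have hF2 := contDiffOn_deriv hU hF1
  have hG2 := contDiffOn_deriv hU hG1
  have h1 : ∀ x ∈ U, HasDerivAt (fun y => F y + G y) (deriv F x + deriv G x) x :=
    fun x hx => (hasDerivAt_of_contDiffOn hU hF hx).add (hasDerivAt_of_contDiffOn hU hG hx)
  have e1 := eqOn_deriv h1
  have h2 : ∀ x ∈ U, HasDerivAt (fun x => deriv F x + deriv G x)
      (deriv (deriv F) x + deriv (deriv G) x) x :=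
    fun x hx => (hasDerivAt_of_contDiffOn hU hF1 hx).add (hasDerivAt_of_contDiffOn hU hG1 hx)
  have e2 := eqOn_deriv h2
  have h3 : HasDerivAt (fun x => deriv (deriv F) x + deriv (deriv G) x)
      (deriv (deriv (deriv F)) 0 + deriv (deriv (deriv G)) 0) 0 :=
    (hasDerivAt_of_contDiffOn hU hF2 h0).add (hasDerivAt_of_contDiffOn hU hG2 h0)
  exact ⟨e1 h0, by rw [eqOn_deriv_of_eqOn hU e1 h0, e2 h0],
    by rw [eqOn_deriv_of_eqOn hU (eqOn_deriv_of_eqOn hU e1) h0,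
      eqOn_deriv_of_eqOn hU e2 h0, h3.deriv]⟩

private lemma hasDerivAt_fin3 {c0 c1 c2 : ℝ → ℝ} {p0 p1 p2 x : ℝ}
    (h0 : HasDerivAt c0 p0 x) (h1 : HasDerivAt c1 p1 x) (h2 : HasDerivAt c2 p2 x) :
    HasDerivAt (fun y => (![c0 y, c1 y, c2 y] : Fin 3 → ℝ)) ![p0, p1, p2] x := by
  rw [hasDerivAt_pi]
  intro i
  fin_cases i
  · simpa using h0
  · simpa using h1
  · simpa using h2

/-- With `d` parametrising the double point curve of the folded cuspidal
edge in the source, the singular space curve `d̃(y) = f(d(y), y)` on the cuspidal edge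
`f(x,y) = (x, a(x) + y²/2, b₀(x) + b₁(x)y² + b₂(x)y³ + b₃(x,y)y⁴)` satisfies
`d̃'(0) = 0`, `d̃''(0) = (−2b₁(0)/b₀'(0), 1, 0)`, `d̃'''(0) = (0, 0, 6b₂(0))`; in
particular, if `b₂(0) ≠ 0` then `d̃''(0) × d̃'''(0) ≠ 0`, i.e. `0` is a `(2,3)`-type
singular point of `d̃`. -/
theorem stmt10 (a b₀ b₁ b₂ : ℝ → ℝ) (b₃ : ℝ → ℝ → ℝ)
    (ha : ContDiff ℝ (⊤ : ℕ∞) a) (hb₀ : ContDiff ℝ (⊤ : ℕ∞) b₀)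
    (hb₁ : ContDiff ℝ (⊤ : ℕ∞) b₁) (hb₂ : ContDiff ℝ (⊤ : ℕ∞) b₂)
    (hb₃ : ContDiff ℝ (⊤ : ℕ∞) (Function.uncurry b₃))
    (ha0 : a 0 = 0) (ha0' : deriv a 0 = 0) (hb₀0 : b₀ 0 = 0)
    (hb₀0' : deriv b₀ 0 ≠ 0)
    (ε : ℝ) (hε : 0 < ε) (d : ℝ → ℝ)
    (hd : ContDiffOn ℝ (⊤ : ℕ∞) d (Set.Ioo (-ε) ε)) (hd0 : d 0 = 0)
    (hdeq : ∀ y ∈ Set.Ioo (-ε) ε,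
      b₀ (d y) + b₁ (d y) * y ^ 2 +
        (1 / 2) * (b₃ (d y) y + b₃ (d y) (-y)) * y ^ 4 = 0)
    (f : ℝ → ℝ → Fin 3 → ℝ)
    (hf : ∀ x y, f x y =
      ![x, a x + y ^ 2 / 2,
        b₀ x + b₁ x * y ^ 2 + b₂ x * y ^ 3 + b₃ x y * y ^ 4])
    (dt : ℝ → Fin 3 → ℝ) (hdt : ∀ y, dt y = f (d y) y) :
    deriv dt 0 = 0 ∧
    iteratedDeriv 2 dt 0 = ![-2 * b₁ 0 / deriv b₀ 0, 1, 0] ∧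
    iteratedDeriv 3 dt 0 = ![0, 0, 6 * b₂ 0] ∧
    (b₂ 0 ≠ 0 → cross3 (iteratedDeriv 2 dt 0) (iteratedDeriv 3 dt 0) ≠ 0) := by
  have hU : IsOpen (Set.Ioo (-ε) ε) := isOpen_Ioo
  have h0 : (0:ℝ) ∈ Set.Ioo (-ε) ε := by constructor <;> linarith
  set U := Set.Ioo (-ε) ε with hUdef
  -- smoothness facts
  have hFb0 : ContDiffOn ℝ (⊤ : ℕ∞) (fun y => b₀ (d y)) U := by
    exact hb₀.comp_contDiffOn hd
  have hFb1 : ContDiffOn ℝ (⊤ : ℕ∞) (fun y => b₁ (d y)) U := by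
    exact hb₁.comp_contDiffOn hd
  have hFa : ContDiffOn ℝ (⊤ : ℕ∞) (fun y => a (d y)) U := by
    exact ha.comp_contDiffOn hd
  have hFb2 : ContDiffOn ℝ (⊤ : ℕ∞) (fun y => b₂ (d y)) U := by
    exact hb₂.comp_contDiffOn hd
  have hq1 : ContDiffOn ℝ (⊤ : ℕ∞) (fun y => b₃ (d y) y) U := by
    exact hb₃.comp_contDiffOn (hd.prodMk contDiffOn_id)
  have hq2 : ContDiffOn ℝ (⊤ : ℕ∞) (fun y => b₃ (d y) (-y)) U := by
    exact hb₃.comp_contDiffOn (hd.prodMk contDiffOn_id.neg)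
  have hcQ : ContDiffOn ℝ (⊤ : ℕ∞)
      (fun y => -((1/2) * (b₃ (d y) y + b₃ (d y) (-y)))) U := by
    exact (contDiffOn_const.mul (hq1.add hq2)).neg
  have hw : ContDiffOn ℝ (⊤ : ℕ∞)
      (fun y => b₃ (d y) y + -((1/2) * (b₃ (d y) y + b₃ (d y) (-y)))) U := hq1.add hcQ
  have hGsq : ContDiffOn ℝ (⊤ : ℕ∞) (fun y : ℝ => b₁ (d y) * y ^ 2) U := by
    exact hFb1.mul (contDiffOn_id.pow 2)
  have hhalf : ContDiffOn ℝ (⊤ : ℕ∞) (fun y : ℝ => y ^ 2 / 2) U := by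
    exact (contDiffOn_id.pow 2).div_const 2
  -- constraint: P = cQ * y^4 on U
  have hPQ : Set.EqOn (fun y => b₀ (d y) + b₁ (d y) * y ^ 2)
      (fun y => -((1/2) * (b₃ (d y) y + b₃ (d y) (-y))) * y ^ 4) U := fun y hy => by
    have h := hdeq y hy
    simp only
    linear_combination h
  -- chains
  obtain ⟨pb0_1, pb0_2, pb0_3⟩ := comp_chain hU h0 hb₀ hd
  obtain ⟨pb1_1, -, -⟩ := comp_chain hU h0 hb₁ hd
  obtain ⟨pa1, pa2, pa3⟩ := comp_chain hU h0 ha hd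
  obtain ⟨ps1, ps2, ps3⟩ := chain_sq hU h0 hFb1
  obtain ⟨pq1, pq2, pq3⟩ := chain_quart hU h0 hcQ
  obtain ⟨pu1, pu2, pu3⟩ := sum_chain hU h0 hFb0 hGsq
  -- transfer constraint derivatives
  have hP1 : deriv (fun y => b₀ (d y) + b₁ (d y) * y ^ 2) 0 = 0 := by
    rw [eqOn_deriv_of_eqOn hU hPQ h0]; exact pq1
  have hP2 : deriv (deriv (fun y => b₀ (d y) + b₁ (d y) * y ^ 2)) 0 = 0 := by
    rw [eqOn_deriv_of_eqOn hU (eqOn_deriv_of_eqOn hU hPQ) h0]; exact pq2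
  have hP3 : deriv (deriv (deriv (fun y => b₀ (d y) + b₁ (d y) * y ^ 2))) 0 = 0 := by
    rw [eqOn_deriv_of_eqOn hU (eqOn_deriv_of_eqOn hU (eqOn_deriv_of_eqOn hU hPQ)) h0]
    exact pq3
  -- derivatives of d at 0
  have hk1 : deriv d 0 = 0 := by
    have t := pu1
    rw [pb0_1, hd0, ps1, hP1] at t
    rcases mul_eq_zero.mp (by linarith : deriv b₀ 0 * deriv d 0 = 0) with h | h
    · exact absurd h hb₀0'
    · exact h
  have hk2 : deriv (deriv d) 0 = -2 * b₁ 0 / deriv b₀ 0 := by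
    have t := pu2
    rw [pb0_2, hd0, ps2, hP2, hd0, hk1] at t
    field_simp
    linarith
  have hk3 : deriv (deriv (deriv d)) 0 = 0 := by
    have t := pu3
    rw [pb0_3, hd0, ps3, hP3, pb1_1, hd0, hk1] at t
    rcases mul_eq_zero.mp (by linarith : deriv b₀ 0 * deriv (deriv (deriv d)) 0 = 0) with h | h
    · exact absurd h hb₀0'
    · exact h
  -- component 1 : a (d y) + y^2/2
  have hg : deriv (fun y : ℝ => y ^ 2 / 2) = fun y => y := by
    ext x
    rw [deriv_div_const, deriv_pow_field]
    norm_num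
  have g1 : deriv (fun y : ℝ => y ^ 2 / 2) 0 = 0 := by rw [hg]
  have g2 : deriv (deriv (fun y : ℝ => y ^ 2 / 2)) 0 = 1 := by rw [hg, deriv_id'']
  have g3 : deriv (deriv (deriv (fun y : ℝ => y ^ 2 / 2))) 0 = 0 := by
    rw [hg, deriv_id'']
    simp
  obtain ⟨pc1_1, pc1_2, pc1_3⟩ := sum_chain hU h0 hFa hhalf
  have v1_1 : deriv (fun y => a (d y) + y ^ 2 / 2) 0 = 0 := by
    rw [pc1_1, pa1, hd0, ha0', g1]; ring
  have v1_2 : deriv (deriv (fun y => a (d y) + y ^ 2 / 2)) 0 = 1 := by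
    rw [pc1_2, pa2, hd0, ha0', hk1, g2]; ring
  have v1_3 : deriv (deriv (deriv (fun y => a (d y) + y ^ 2 / 2))) 0 = 0 := by
    rw [pc1_3, pa3, hd0, ha0', hk1, g3]; ring
  -- component 2
  have hc2R : Set.EqOn
      (fun y => b₀ (d y) + b₁ (d y) * y ^ 2 + b₂ (d y) * y ^ 3 + b₃ (d y) y * y ^ 4)
      (fun y => b₂ (d y) * y ^ 3 +
        (b₃ (d y) y + -((1/2) * (b₃ (d y) y + b₃ (d y) (-y)))) * y ^ 4) U := fun y hy => by
    have h := hdeq y hy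
    simp only
    linear_combination h
  have hFcube : ContDiffOn ℝ (⊤ : ℕ∞) (fun y : ℝ => b₂ (d y) * y ^ 3) U := by
    exact hFb2.mul (contDiffOn_id.pow 3)
  have hGquart : ContDiffOn ℝ (⊤ : ℕ∞)
      (fun y : ℝ => (b₃ (d y) y + -((1/2) * (b₃ (d y) y + b₃ (d y) (-y)))) * y ^ 4) U := by
    exact hw.mul (contDiffOn_id.pow 4)
  obtain ⟨pr1, pr2, pr3⟩ := sum_chain hU h0 hFcube hGquart
  obtain ⟨pm1, pm2, pm3⟩ := chain_cube hU h0 hFb2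
  obtain ⟨pw1, pw2, pw3⟩ := chain_quart hU h0 hw
  have v2_1 : deriv (fun y => b₀ (d y) + b₁ (d y) * y ^ 2 + b₂ (d y) * y ^ 3
      + b₃ (d y) y * y ^ 4) 0 = 0 := by
    rw [eqOn_deriv_of_eqOn hU hc2R h0, pr1, pm1, pw1]; ring
  have v2_2 : deriv (deriv (fun y => b₀ (d y) + b₁ (d y) * y ^ 2 + b₂ (d y) * y ^ 3
      + b₃ (d y) y * y ^ 4)) 0 = 0 := by
    rw [eqOn_deriv_of_eqOn hU (eqOn_deriv_of_eqOn hU hc2R) h0, pr2, pm2, pw2]; ring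
  have v2_3 : deriv (deriv (deriv (fun y => b₀ (d y) + b₁ (d y) * y ^ 2 + b₂ (d y) * y ^ 3
      + b₃ (d y) y * y ^ 4))) 0 = 6 * b₂ 0 := by
    rw [eqOn_deriv_of_eqOn hU (eqOn_deriv_of_eqOn hU (eqOn_deriv_of_eqOn hU hc2R)) h0,
      pr3, pm3, pw3, hd0]
    ring
  -- vector assembly
  have hdtv : dt = fun y => ![d y, a (d y) + y ^ 2 / 2,
      b₀ (d y) + b₁ (d y) * y ^ 2 + b₂ (d y) * y ^ 3 + b₃ (d y) y * y ^ 4] :=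
    funext fun y => by rw [hdt y, hf (d y) y]
  have s1 : ContDiffOn ℝ (⊤ : ℕ∞) (fun y => a (d y) + y ^ 2 / 2) U :=
    hFa.add hhalf
  have s2 : ContDiffOn ℝ (⊤ : ℕ∞) (fun y => b₀ (d y) + b₁ (d y) * y ^ 2
      + b₂ (d y) * y ^ 3 + b₃ (d y) y * y ^ 4) U :=
    ((hFb0.add hGsq).add hFcube).add (hq1.mul (contDiffOn_id.pow 4))
  have hV1 : ∀ x ∈ U, HasDerivAt (fun y => (![d y, a (d y) + y ^ 2 / 2,
      b₀ (d y) + b₁ (d y) * y ^ 2 + b₂ (d y) * y ^ 3 + b₃ (d y) y * y ^ 4] : Fin 3 → ℝ))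
      ![deriv d x, deriv (fun y => a (d y) + y ^ 2 / 2) x,
        deriv (fun y => b₀ (d y) + b₁ (d y) * y ^ 2 + b₂ (d y) * y ^ 3
          + b₃ (d y) y * y ^ 4) x] x := fun x hx =>
    hasDerivAt_fin3 (hasDerivAt_of_contDiffOn hU hd hx)
      (hasDerivAt_of_contDiffOn hU s1 hx) (hasDerivAt_of_contDiffOn hU s2 hx)
  have eV1 := eqOn_deriv hV1
  have hV2 : ∀ x ∈ U, HasDerivAt (fun x => (![deriv d x,
      deriv (fun y => a (d y) + y ^ 2 / 2) x,
      deriv (fun y => b₀ (d y) + b₁ (d y) * y ^ 2 + b₂ (d y) * y ^ 3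
        + b₃ (d y) y * y ^ 4) x] : Fin 3 → ℝ))
      ![deriv (deriv d) x, deriv (deriv (fun y => a (d y) + y ^ 2 / 2)) x,
        deriv (deriv (fun y => b₀ (d y) + b₁ (d y) * y ^ 2 + b₂ (d y) * y ^ 3
          + b₃ (d y) y * y ^ 4)) x] x := fun x hx =>
    hasDerivAt_fin3 (hasDerivAt_of_contDiffOn hU (contDiffOn_deriv hU hd) hx)
      (hasDerivAt_of_contDiffOn hU (contDiffOn_deriv hU s1) hx)
      (hasDerivAt_of_contDiffOn hU (contDiffOn_deriv hU s2) hx)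
  have eV2 := eqOn_deriv hV2
  have hV3 : HasDerivAt (fun x => (![deriv (deriv d) x,
      deriv (deriv (fun y => a (d y) + y ^ 2 / 2)) x,
      deriv (deriv (fun y => b₀ (d y) + b₁ (d y) * y ^ 2 + b₂ (d y) * y ^ 3
        + b₃ (d y) y * y ^ 4)) x] : Fin 3 → ℝ))
      ![deriv (deriv (deriv d)) 0, deriv (deriv (deriv (fun y => a (d y) + y ^ 2 / 2))) 0,
        deriv (deriv (deriv (fun y => b₀ (d y) + b₁ (d y) * y ^ 2 + b₂ (d y) * y ^ 3
          + b₃ (d y) y * y ^ 4))) 0] 0 :=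
    hasDerivAt_fin3
      (hasDerivAt_of_contDiffOn hU (contDiffOn_deriv hU (contDiffOn_deriv hU hd)) h0)
      (hasDerivAt_of_contDiffOn hU (contDiffOn_deriv hU (contDiffOn_deriv hU s1)) h0)
      (hasDerivAt_of_contDiffOn hU (contDiffOn_deriv hU (contDiffOn_deriv hU s2)) h0)
  rw [hdtv]
  have H2 : iteratedDeriv 2 (fun y => (![d y, a (d y) + y ^ 2 / 2,
      b₀ (d y) + b₁ (d y) * y ^ 2 + b₂ (d y) * y ^ 3 + b₃ (d y) y * y ^ 4] : Fin 3 → ℝ)) 0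
      = ![-2 * b₁ 0 / deriv b₀ 0, 1, 0] := by
    rw [iteratedDeriv_succ, iteratedDeriv_one,
      eqOn_deriv_of_eqOn hU eV1 h0, eV2 h0]
    ext i
    fin_cases i <;> simp [hk2, v1_2, v2_2]
  have H3 : iteratedDeriv 3 (fun y => (![d y, a (d y) + y ^ 2 / 2,
      b₀ (d y) + b₁ (d y) * y ^ 2 + b₂ (d y) * y ^ 3 + b₃ (d y) y * y ^ 4] : Fin 3 → ℝ)) 0
      = ![0, 0, 6 * b₂ 0] := by
    rw [iteratedDeriv_succ, iteratedDeriv_succ, iteratedDeriv_one,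
      eqOn_deriv_of_eqOn hU (eqOn_deriv_of_eqOn hU eV1) h0,
      eqOn_deriv_of_eqOn hU eV2 h0, hV3.deriv]
    ext i
    fin_cases i <;> simp [hk3, v1_3, v2_3]
  refine ⟨?_, H2, H3, ?_⟩
  · rw [eV1 h0]
    ext i
    fin_cases i <;> simp [hk1, v1_1, v2_1]
  · intro hb2 hcon
    rw [H2, H3] at hcon
    have := congrFun hcon 0
    simp [cross3] at this
    exact hb2 this
end
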